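/- arXiv:2007.14309 — 8 statements merged into one kernel-verified Lean document; each statement's English description precedes it below -/
import Mathlib

section
/- Let X be a complex Hilbert space, C a Hilbert cone in X, and let A and B be bounded self-adjoint operators on X. Assume that exp(−tA) is positivity preserving with respect to C for every t ≥ 0 and that B is positivity preserving with respect to C. Then for every t ≥ 0 the operator exp(−t(A − B)) − exp(−tA) is positivity preserving with respect to C, i.e., exp(−t(A − B)) ⊵ exp(−tA) with respect to C. -/
open scoped ComplexOrder
open scoped Nat
open NormedSpace Filter Topology

set_option linter.unusedSectionVars false
set_option linter.unusedVariables false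
set_option linter.unreachableTactic false
set_option linter.unusedTactic false

section BanachAlg

variable {𝔸 : Type*} [NormedRing 𝔸] [NormedAlgebra ℂ 𝔸] [NormOneClass 𝔸] [CompleteSpace 𝔸]

lemma myNormExpTerm (x : 𝔸) (n : ℕ) : ‖((n ! : ℂ))⁻¹ • x ^ n‖ ≤ ‖x‖ ^ n / n ! := by
  rw [norm_smul]
  have h1 : ‖((n ! : ℂ))⁻¹‖ = ((n ! : ℝ))⁻¹ := by
    rw [norm_inv]
    norm_num
  rw [h1, div_eq_inv_mul]
  exact mul_le_mul_of_nonneg_left (norm_pow_le x n) (by positivity)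

omit [NormedAlgebra ℂ 𝔸] [CompleteSpace 𝔸] in
lemma myNormPowLeOfLe {T : 𝔸} {M : ℝ} (hT : ‖T‖ ≤ M) (n : ℕ) : ‖T ^ n‖ ≤ M ^ n := by
  calc ‖T ^ n‖ ≤ ‖T‖ ^ n := norm_pow_le T n
  _ ≤ M ^ n := pow_le_pow_left₀ (norm_nonneg _) hT n

lemma myNormExpLe (x : 𝔸) : ‖exp x‖ ≤ Real.exp ‖x‖ := by
  rw [exp_eq_tsum ℂ]
  refine (norm_tsum_le_tsum_norm (norm_expSeries_summable' x)).trans ?_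
  rw [Real.exp_eq_exp_ℝ, exp_eq_tsum_div]
  exact Summable.tsum_le_tsum (fun n => myNormExpTerm x n) (norm_expSeries_summable' x)
    (Real.summable_pow_div_factorial _)

lemma myExpRemainder (x : 𝔸) :
    ‖exp x - 1 - x‖ ≤ ‖x‖ ^ 2 * Real.exp ‖x‖ := by
  have hsum : Summable fun n : ℕ => ((n ! : ℂ))⁻¹ • x ^ n := expSeries_summable' x
  have hsplit := Summable.sum_add_tsum_nat_add (f := fun n : ℕ => ((n ! : ℂ))⁻¹ • x ^ n) 2 hsum
  have h01 : ∑ i ∈ Finset.range 2, (((i ! : ℂ))⁻¹ • x ^ i) = 1 + x := by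
    simp [Finset.sum_range_succ, Nat.factorial]
  have hrw : exp x - 1 - x = ∑' i : ℕ, ((((i + 2)! : ℂ))⁻¹ • x ^ (i + 2)) := by
    rw [exp_eq_tsum ℂ]
    dsimp only
    rw [← hsplit, h01]
    abel
  rw [hrw]
  have hnormsum : Summable fun i : ℕ => ‖((((i + 2)! : ℂ))⁻¹ • x ^ (i + 2))‖ :=
    (summable_nat_add_iff 2).2 (norm_expSeries_summable' x)
  have hbsum : Summable fun i : ℕ => ‖x‖ ^ 2 * (‖x‖ ^ i / i !) :=
    (Real.summable_pow_div_factorial ‖x‖).mul_left _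
  refine (norm_tsum_le_tsum_norm hnormsum).trans ?_
  have hle : ∀ i : ℕ, ‖((((i + 2)! : ℂ))⁻¹ • x ^ (i + 2))‖ ≤ ‖x‖ ^ 2 * (‖x‖ ^ i / i !) := by
    intro i
    refine (myNormExpTerm x (i + 2)).trans ?_
    have hfac : (i ! : ℝ) ≤ ((i + 2)! : ℝ) := by exact_mod_cast Nat.factorial_le (by omega)
    calc ‖x‖ ^ (i + 2) / ((i + 2)! : ℝ) ≤ ‖x‖ ^ (i + 2) / (i ! : ℝ) := by
          gcongr
    _ = ‖x‖ ^ 2 * (‖x‖ ^ i / i !) := by rw [pow_add]; ring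
  refine (Summable.tsum_le_tsum hle hnormsum hbsum).trans ?_
  rw [tsum_mul_left, Real.exp_eq_exp_ℝ, exp_eq_tsum_div]

omit [NormedAlgebra ℂ 𝔸] [CompleteSpace 𝔸] in
lemma myNormPowSubPow (S T : 𝔸) (M : ℝ) (hM : 1 ≤ M) (hS : ‖S‖ ≤ M) (hT : ‖T‖ ≤ M) :
    ∀ n : ℕ, ‖S ^ n - T ^ n‖ ≤ n * M ^ n * ‖S - T‖ := by
  intro n
  induction n with
  | zero => simp
  | succ n ih =>
    have key : S ^ (n + 1) - T ^ (n + 1) = S * (S ^ n - T ^ n) + (S - T) * T ^ n := by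
      rw [pow_succ' S, pow_succ' T]
      noncomm_ring
    have hM0 : (0 : ℝ) ≤ M := le_trans zero_le_one hM
    calc ‖S ^ (n + 1) - T ^ (n + 1)‖
        ≤ ‖S * (S ^ n - T ^ n)‖ + ‖(S - T) * T ^ n‖ := by rw [key]; exact norm_add_le _ _
      _ ≤ ‖S‖ * ‖S ^ n - T ^ n‖ + ‖S - T‖ * ‖T ^ n‖ :=
          add_le_add (norm_mul_le _ _) (norm_mul_le _ _)
      _ ≤ M * (n * M ^ n * ‖S - T‖) + ‖S - T‖ * M ^ n :=
          add_le_add (mul_le_mul hS ih (norm_nonneg _) hM0)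
            (mul_le_mul_of_nonneg_left (myNormPowLeOfLe hT n) (norm_nonneg _))
      _ = n * M ^ (n + 1) * ‖S - T‖ + M ^ n * ‖S - T‖ := by ring
      _ ≤ n * M ^ (n + 1) * ‖S - T‖ + M ^ (n + 1) * ‖S - T‖ := by
          refine add_le_add_right (mul_le_mul_of_nonneg_right ?_ (norm_nonneg _)) _
          exact pow_le_pow_right₀ hM (Nat.le_succ n)
      _ = (↑(n + 1)) * M ^ (n + 1) * ‖S - T‖ := by push_cast; ring

lemma myTrotter (x y : 𝔸) :
    Tendsto (fun n : ℕ => (exp ((n : ℂ)⁻¹ • x) * exp ((n : ℂ)⁻¹ • y)) ^ n) atTop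
      (𝓝 (exp (x + y))) := by
  set c : ℝ := ‖x‖ + ‖y‖ with hc
  set K : ℝ := ‖x‖ ^ 2 * Real.exp ‖x‖ * Real.exp ‖y‖ + (1 + ‖x‖) * (‖y‖ ^ 2 * Real.exp ‖y‖)
      + ‖x‖ * ‖y‖ + c ^ 2 * Real.exp c with hK
  rw [tendsto_iff_norm_sub_tendsto_zero]
  have h0 : Tendsto (fun n : ℕ => Real.exp c * K / n) atTop (𝓝 0) :=
    tendsto_const_div_atTop_nhds_zero_nat _
  refine squeeze_zero' (Eventually.of_forall fun n => norm_nonneg _) ?_ h0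
  filter_upwards [eventually_ge_atTop 1] with n hn
  have hn0 : (n : ℝ) ≠ 0 := by positivity
  have hn0' : (n : ℂ) ≠ 0 := Nat.cast_ne_zero.2 (by omega)
  have hn1 : (1 : ℝ) ≤ (n : ℝ) := by exact_mod_cast hn
  set a : 𝔸 := (n : ℂ)⁻¹ • x with ha
  set b : 𝔸 := (n : ℂ)⁻¹ • y with hb
  have hna : ‖a‖ = ‖x‖ / n := by
    rw [ha, norm_smul, norm_inv]
    simp [div_eq_inv_mul]
  have hnb : ‖b‖ = ‖y‖ / n := by
    rw [hb, norm_smul, norm_inv]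
    simp [div_eq_inv_mul]
  have hexy : exp (x + y) = exp (a + b) ^ n := by
    letI : NormedAlgebra ℚ 𝔸 := NormedAlgebra.restrictScalars ℚ ℂ 𝔸
    rw [← exp_nsmul, ha, hb, ← smul_add, ← Nat.cast_smul_eq_nsmul ℂ, smul_smul,
      mul_inv_cancel₀ hn0', one_smul]
  rw [hexy]
  set S : 𝔸 := exp a * exp b with hS
  set T : 𝔸 := exp (a + b) with hT
  set M : ℝ := Real.exp (c / n) with hM
  have hab : ‖a‖ + ‖b‖ = c / n := by rw [hna, hnb, hc]; ring
  have hM1 : (1 : ℝ) ≤ M := Real.one_le_exp (by positivity)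
  have hSM : ‖S‖ ≤ M := by
    calc ‖S‖ ≤ ‖exp a‖ * ‖exp b‖ := norm_mul_le _ _
    _ ≤ Real.exp ‖a‖ * Real.exp ‖b‖ :=
        mul_le_mul (myNormExpLe a) (myNormExpLe b) (norm_nonneg _) (Real.exp_nonneg _)
    _ = M := by rw [← Real.exp_add, hab, hM]
  have hTM : ‖T‖ ≤ M := by
    refine (myNormExpLe _).trans ?_
    rw [hM]
    apply Real.exp_le_exp.2
    exact (norm_add_le _ _).trans hab.le
  have hMn : M ^ n = Real.exp c := by
    have h1 : (n : ℝ) * (c / n) = c := by field_simp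
    rw [hM, ← Real.exp_nat_mul, h1]
  have hdecomp : S - T = (exp a - 1 - a) * exp b + (1 + a) * (exp b - 1 - b)
      + a * b - (exp (a + b) - 1 - (a + b)) := by
    rw [hS, hT]; noncomm_ring
  have hxn : ‖x‖ / (n : ℝ) ≤ ‖x‖ := div_le_self (norm_nonneg x) hn1
  have hyn : ‖y‖ / (n : ℝ) ≤ ‖y‖ := div_le_self (norm_nonneg y) hn1
  have haxn : ‖a‖ ≤ ‖x‖ := by rw [hna]; exact hxn
  have hbyn : ‖b‖ ≤ ‖y‖ := by rw [hnb]; exact hyn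
  have habc : ‖a + b‖ ≤ c / n := (norm_add_le _ _).trans hab.le
  have habc' : ‖a + b‖ ≤ c := habc.trans (div_le_self (by positivity) hn1)
  have hST : ‖S - T‖ ≤ K / (n : ℝ) ^ 2 := by
    have h1 : ‖(exp a - 1 - a) * exp b‖
        ≤ ‖x‖ ^ 2 * Real.exp ‖x‖ * Real.exp ‖y‖ / (n : ℝ) ^ 2 := by
      calc ‖(exp a - 1 - a) * exp b‖ ≤ ‖exp a - 1 - a‖ * ‖exp b‖ := norm_mul_le _ _
      _ ≤ (‖a‖ ^ 2 * Real.exp ‖a‖) * Real.exp ‖b‖ :=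
          mul_le_mul (myExpRemainder a) (myNormExpLe b) (norm_nonneg _) (by positivity)
      _ ≤ ((‖x‖ / n) ^ 2 * Real.exp ‖x‖) * Real.exp ‖y‖ := by
          rw [hna]
          gcongr
      _ = ‖x‖ ^ 2 * Real.exp ‖x‖ * Real.exp ‖y‖ / (n : ℝ) ^ 2 := by ring
    have h2 : ‖(1 + a) * (exp b - 1 - b)‖
        ≤ (1 + ‖x‖) * (‖y‖ ^ 2 * Real.exp ‖y‖) / (n : ℝ) ^ 2 := by
      have h1a : ‖(1 : 𝔸) + a‖ ≤ 1 + ‖x‖ := by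
        calc ‖(1 : 𝔸) + a‖ ≤ ‖(1 : 𝔸)‖ + ‖a‖ := norm_add_le _ _
        _ ≤ 1 + ‖x‖ := by rw [norm_one]; exact add_le_add_right haxn 1
      calc ‖(1 + a) * (exp b - 1 - b)‖ ≤ ‖(1 : 𝔸) + a‖ * ‖exp b - 1 - b‖ := norm_mul_le _ _
      _ ≤ (1 + ‖x‖) * (‖b‖ ^ 2 * Real.exp ‖b‖) :=
          mul_le_mul h1a (myExpRemainder b) (norm_nonneg _) (by positivity)
      _ ≤ (1 + ‖x‖) * ((‖y‖ / n) ^ 2 * Real.exp ‖y‖) := by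
          rw [hnb]
          gcongr
      _ = (1 + ‖x‖) * (‖y‖ ^ 2 * Real.exp ‖y‖) / (n : ℝ) ^ 2 := by ring
    have h3 : ‖a * b‖ ≤ ‖x‖ * ‖y‖ / (n : ℝ) ^ 2 := by
      calc ‖a * b‖ ≤ ‖a‖ * ‖b‖ := norm_mul_le _ _
      _ = ‖x‖ * ‖y‖ / (n : ℝ) ^ 2 := by rw [hna, hnb]; ring
    have h4 : ‖exp (a + b) - 1 - (a + b)‖ ≤ c ^ 2 * Real.exp c / (n : ℝ) ^ 2 := by
      refine (myExpRemainder (a + b)).trans ?_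
      calc ‖a + b‖ ^ 2 * Real.exp ‖a + b‖ ≤ (c / n) ^ 2 * Real.exp c := by
            gcongr
      _ = c ^ 2 * Real.exp c / (n : ℝ) ^ 2 := by ring
    calc ‖S - T‖ ≤ ‖(exp a - 1 - a) * exp b + (1 + a) * (exp b - 1 - b) + a * b‖
          + ‖exp (a + b) - 1 - (a + b)‖ := by rw [hdecomp]; exact norm_sub_le _ _
    _ ≤ ‖(exp a - 1 - a) * exp b‖ + ‖(1 + a) * (exp b - 1 - b)‖ + ‖a * b‖
          + ‖exp (a + b) - 1 - (a + b)‖ := by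
        refine add_le_add_left ?_ _
        exact (norm_add_le _ _).trans (add_le_add_left (norm_add_le _ _) _)
    _ ≤ ‖x‖ ^ 2 * Real.exp ‖x‖ * Real.exp ‖y‖ / (n : ℝ) ^ 2
          + (1 + ‖x‖) * (‖y‖ ^ 2 * Real.exp ‖y‖) / (n : ℝ) ^ 2 + ‖x‖ * ‖y‖ / (n : ℝ) ^ 2
          + c ^ 2 * Real.exp c / (n : ℝ) ^ 2 :=
        add_le_add (add_le_add (add_le_add h1 h2) h3) h4
    _ = K / (n : ℝ) ^ 2 := by rw [hK]; ring
  calc ‖S ^ n - T ^ n‖ ≤ n * M ^ n * ‖S - T‖ := myNormPowSubPow S T M hM1 hSM hTM n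
  _ ≤ n * M ^ n * (K / (n : ℝ) ^ 2) := by
      refine mul_le_mul_of_nonneg_left hST ?_
      positivity
  _ = Real.exp c * K / n := by
      rw [hMn]
      field_simp

end BanachAlg

/-- A *Hilbert cone* in a complex Hilbert space `X`: a closed convex cone `C` such that
the inner product of any two elements of `C` is a nonnegative real number, and every
vector of `X` decomposes as `u - v + i (u' - v')` with the two pairs orthogonal. -/
def IsHilbertCone {X : Type*} [NormedAddCommGroup X] [InnerProductSpace ℂ X]
    (C : Set X) : Prop :=
  IsClosed C ∧ Convex ℝ C ∧
    (∀ (c : ℝ), 0 ≤ c → ∀ u ∈ C, c • u ∈ C) ∧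
    (∀ u ∈ C, ∀ v ∈ C, (0 : ℂ) ≤ (inner ℂ u v : ℂ)) ∧
    (∀ w : X, ∃ u ∈ C, ∃ v ∈ C, ∃ u' ∈ C, ∃ v' ∈ C,
      w = u - v + Complex.I • (u' - v') ∧
        (inner ℂ u v : ℂ) = 0 ∧ (inner ℂ u' v' : ℂ) = 0)

section Cone

variable {X : Type*} [NormedAddCommGroup X] [InnerProductSpace ℂ X] [CompleteSpace X]
variable {C : Set X}

lemma myCone_zero_mem (hC : IsHilbertCone C) : (0 : X) ∈ C := by
  obtain ⟨u, hu, -⟩ := hC.2.2.2.2 0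
  simpa using hC.2.2.1 0 le_rfl u hu

lemma myCone_add_mem (hC : IsHilbertCone C) {u v : X} (hu : u ∈ C) (hv : v ∈ C) : u + v ∈ C := by
  have h := hC.2.1 hu hv (by norm_num : (0:ℝ) ≤ (1/2:ℝ)) (by norm_num : (0:ℝ) ≤ (1/2:ℝ))
    (by norm_num)
  have h2 := hC.2.2.1 2 (by norm_num) _ h
  have heq : (2 : ℝ) • ((1/2 : ℝ) • u + (1/2 : ℝ) • v) = u + v := by
    rw [smul_add, smul_smul, smul_smul]
    norm_num
  rwa [heq] at h2

lemma myCone_sum_mem (hC : IsHilbertCone C) {ι : Type*} (s : Finset ι) (f : ι → X)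
    (hf : ∀ i ∈ s, f i ∈ C) : ∑ i ∈ s, f i ∈ C :=
  Finset.sum_induction f (· ∈ C) (fun _ _ ha hb => myCone_add_mem hC ha hb)
    (myCone_zero_mem hC) hf

lemma myCone_pow_mem (hC : IsHilbertCone C) {T : X →L[ℂ] X} (hT : ∀ u ∈ C, T u ∈ C) (k : ℕ) :
    ∀ u ∈ C, (T ^ k) u ∈ C := by
  induction k with
  | zero => intro u hu; simpa using hu
  | succ k ih =>
    intro u hu
    rw [pow_succ, ContinuousLinearMap.mul_apply]
    exact ih _ (hT u hu)

lemma myCone_hasSum_mem (hC : IsHilbertCone C) {f : ℕ → X} {l : X} (h : HasSum f l)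
    (hf : ∀ k, f k ∈ C) : l ∈ C := by
  refine hC.1.mem_of_tendsto h.tendsto_sum_nat ?_
  exact Filter.Eventually.of_forall fun n => myCone_sum_mem hC _ _ fun i _ => hf i

set_option maxHeartbeats 1000000 in
open scoped Nat in
lemma myCone_exp_sub_one_mem (hC : IsHilbertCone C) {B : X →L[ℂ] X}
    (hB : ∀ u ∈ C, B u ∈ C) {s : ℝ} (hs : 0 ≤ s) {u : X} (hu : u ∈ C) :
    (NormedSpace.exp ((s : ℂ) • B) - 1) u ∈ C := by
  have hsum : Summable fun k : ℕ => ((k ! : ℂ))⁻¹ • ((s : ℂ) • B) ^ k :=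
    NormedSpace.expSeries_summable' _
  have hshift : Summable fun k : ℕ => (((k + 1)! : ℂ))⁻¹ • ((s : ℂ) • B) ^ (k + 1) :=
    (summable_nat_add_iff 1).2 hsum
  have hzero := Summable.tsum_eq_zero_add hsum
  have hexp : NormedSpace.exp ((s : ℂ) • B) - 1
      = ∑' k : ℕ, (((k + 1)! : ℂ))⁻¹ • ((s : ℂ) • B) ^ (k + 1) := by
    rw [NormedSpace.exp_eq_tsum ℂ]
    dsimp only
    rw [hzero]
    simp
  have hHS : HasSum (fun k : ℕ => ((((k + 1)! : ℂ))⁻¹ • ((s : ℂ) • B) ^ (k + 1)) u)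
      ((NormedSpace.exp ((s : ℂ) • B) - 1) u) := by
    rw [hexp]
    exact hshift.hasSum.mapL (ContinuousLinearMap.apply ℂ X u)
  refine myCone_hasSum_mem hC hHS fun k => ?_
  have hc : (((((k + 1)! : ℂ))⁻¹ • ((s : ℂ) • B) ^ (k + 1))) u
      = (((((k + 1)! : ℝ)))⁻¹ * s ^ (k + 1)) • ((B ^ (k + 1)) u) := by
    rw [smul_pow, smul_smul, ContinuousLinearMap.smul_apply]
    have hcc : (((k + 1)! : ℂ))⁻¹ * (s : ℂ) ^ (k + 1)
        = (((((k + 1)! : ℝ))⁻¹ * s ^ (k + 1) : ℝ) : ℂ) := by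
      push_cast
      ring
    rw [hcc, Complex.coe_smul]
  rw [hc]
  exact hC.2.2.1 _ (by positivity) _ (myCone_pow_mem hC hB (k + 1) u hu)

lemma myCone_exp_mem (hC : IsHilbertCone C) {B : X →L[ℂ] X}
    (hB : ∀ u ∈ C, B u ∈ C) {s : ℝ} (hs : 0 ≤ s) {u : X} (hu : u ∈ C) :
    NormedSpace.exp ((s : ℂ) • B) u ∈ C := by
  have h := myCone_exp_sub_one_mem hC hB hs hu
  have heq : NormedSpace.exp ((s : ℂ) • B) u
      = (NormedSpace.exp ((s : ℂ) • B) - 1) u + u := by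
    simp
  rw [heq]
  exact myCone_add_mem hC h hu

lemma myCone_pow_sub_pow_mem (hC : IsHilbertCone C) {P Q : X →L[ℂ] X}
    (hP : ∀ u ∈ C, P u ∈ C) (hQ : ∀ u ∈ C, Q u ∈ C) (hPQ : ∀ u ∈ C, (P - Q) u ∈ C) (n : ℕ) :
    ∀ u ∈ C, (P ^ n - Q ^ n) u ∈ C := by
  induction n with
  | zero => intro u hu; simpa using myCone_zero_mem hC
  | succ n ih =>
    intro u hu
    have key : P ^ (n + 1) - Q ^ (n + 1) = P * (P ^ n - Q ^ n) + (P - Q) * Q ^ n := by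
      rw [pow_succ' P, pow_succ' Q]
      noncomm_ring
    rw [key, ContinuousLinearMap.add_apply, ContinuousLinearMap.mul_apply,
      ContinuousLinearMap.mul_apply]
    exact myCone_add_mem hC (hP _ (ih u hu)) (hPQ _ (myCone_pow_mem hC hQ n u hu))

end Cone

theorem exp_neg_sub_posPreserving
    {X : Type*} [NormedAddCommGroup X] [InnerProductSpace ℂ X] [CompleteSpace X]
    (C : Set X) (hC : IsHilbertCone C) (A B : X →L[ℂ] X)
    (hAsa : IsSelfAdjoint A) (hBsa : IsSelfAdjoint B)
    (hexpA : ∀ t : ℝ, 0 ≤ t → ∀ u ∈ C, NormedSpace.exp (-((t : ℂ) • A)) u ∈ C)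
    (hB : ∀ u ∈ C, B u ∈ C) :
    ∀ t : ℝ, 0 ≤ t → ∀ u ∈ C,
      (NormedSpace.exp (-((t : ℂ) • (A - B))) - NormedSpace.exp (-((t : ℂ) • A))) u ∈ C := by
  intro t ht u hu
  rcases subsingleton_or_nontrivial X with hX | hX
  · obtain ⟨u0, hu0, -⟩ := hC.2.2.2.2 0
    have heq : ((NormedSpace.exp (-((t : ℂ) • (A - B))) - NormedSpace.exp (-((t : ℂ) • A))) u)
        = u0 := Subsingleton.elim _ _
    rw [heq]
    exact hu0
  set x : X →L[ℂ] X := -((t : ℂ) • A) with hx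
  set y : X →L[ℂ] X := (t : ℂ) • B with hy
  have hxy : -((t : ℂ) • (A - B)) = x + y := by
    rw [hx, hy, smul_sub]; abel
  rw [hxy]
  have htr := myTrotter x y
  have heval : Tendsto
      (fun n : ℕ => ((exp ((n : ℂ)⁻¹ • x) * exp ((n : ℂ)⁻¹ • y)) ^ n) u)
      atTop (𝓝 (exp (x + y) u)) := by
    have h := ((ContinuousLinearMap.apply ℂ X u).continuous.tendsto _).comp htr
    exact h
  have htr' : Tendsto
      (fun n : ℕ => ((exp ((n : ℂ)⁻¹ • x) * exp ((n : ℂ)⁻¹ • y)) ^ n) u - exp x u)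
      atTop (𝓝 ((exp (x + y) - exp x) u)) := by
    simpa [ContinuousLinearMap.sub_apply] using heval.sub_const (exp x u)
  refine hC.1.mem_of_tendsto htr' ?_
  filter_upwards [eventually_ge_atTop 1] with n hn
  have hn0' : (n : ℂ) ≠ 0 := Nat.cast_ne_zero.2 (by omega)
  set s : ℝ := t / n with hs'
  have hs : 0 ≤ s := div_nonneg ht (by positivity)
  have hcast : (n : ℂ)⁻¹ * (t : ℂ) = ((s : ℝ) : ℂ) := by
    rw [hs']; push_cast; ring
  have ha : (n : ℂ)⁻¹ • x = -(((s : ℝ) : ℂ) • A) := by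
    rw [hx, smul_neg, smul_smul, hcast]
  have hb : (n : ℂ)⁻¹ • y = ((s : ℝ) : ℂ) • B := by
    rw [hy, smul_smul, hcast]
  have hQmem : ∀ v ∈ C, (exp ((n : ℂ)⁻¹ • x)) v ∈ C := by
    intro v hv
    rw [ha]
    exact hexpA s hs v hv
  have hPmem : ∀ v ∈ C, (exp ((n : ℂ)⁻¹ • x) * exp ((n : ℂ)⁻¹ • y)) v ∈ C := by
    intro v hv
    rw [ContinuousLinearMap.mul_apply, hb]
    exact hQmem _ (myCone_exp_mem hC hB hs hv)
  have hPQ : ∀ v ∈ C,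
      (exp ((n : ℂ)⁻¹ • x) * exp ((n : ℂ)⁻¹ • y) - exp ((n : ℂ)⁻¹ • x)) v ∈ C := by
    intro v hv
    have hfact : exp ((n : ℂ)⁻¹ • x) * exp ((n : ℂ)⁻¹ • y) - exp ((n : ℂ)⁻¹ • x)
        = exp ((n : ℂ)⁻¹ • x) * (exp ((n : ℂ)⁻¹ • y) - 1) := by
      rw [mul_sub, mul_one]
    rw [hfact, ContinuousLinearMap.mul_apply]
    refine hQmem _ ?_
    rw [hb]
    exact myCone_exp_sub_one_mem hC hB hs hv
  have hQn : (exp ((n : ℂ)⁻¹ • x)) ^ n = exp x := by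
    letI : NormedAlgebra ℚ (X →L[ℂ] X) := NormedAlgebra.restrictScalars ℚ ℂ (X →L[ℂ] X)
    rw [← exp_nsmul, ← Nat.cast_smul_eq_nsmul ℂ, smul_smul, mul_inv_cancel₀ hn0', one_smul]
  have hmem := myCone_pow_sub_pow_mem hC hPmem hQmem hPQ n u hu
  rw [ContinuousLinearMap.sub_apply, hQn] at hmem
  exact hmem
end

section
/- (Perron–Frobenius–Faris) Let X be a nonzero complex Hilbert space, C a Hilbert cone in X, and A a bounded self-adjoint operator on X. Let E be the infimum of the spectrum of A, and assume that E is an eigenvalue of A. If the family {exp(−tA)}_{t≥0} is ergodic with respect to C, then the eigenspace ker(A − E·I) is one-dimensional and is spanned by a vector that is strictly positive with respect to C. -/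
open scoped ComplexOrder

/-- A vector `v` is *strictly positive* w.r.t. a cone `C` if `⟪v, u⟫ > 0` for every
nonzero `u ∈ C`. -/
def StrictlyPos {X : Type*} [NormedAddCommGroup X] [InnerProductSpace ℂ X]
    (C : Set X) (v : X) : Prop :=
  ∀ u ∈ C, u ≠ 0 → (0 : ℂ) < (inner ℂ v u : ℂ)

section PFFAux

open NormedSpace

variable {X : Type*} [NormedAddCommGroup X] [InnerProductSpace ℂ X] [CompleteSpace X]

private theorem pff_comp_ofReal {E : Type*} [NormedAddCommGroup E] [NormedSpace ℂ E]
    {e : ℂ → E} {e' : E} {z : ℝ} (hf : HasDerivAt e e' ↑z) :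
    HasDerivAt (fun y : ℝ => e ↑y) e' z := by
  have h := (hf.hasFDerivAt.restrictScalars ℝ).comp z (Complex.ofRealCLM.hasFDerivAt (x := z))
  simpa [Function.comp_def] using h.hasDerivAt

private theorem pff_hasDerivAt (S : X →L[ℂ] X) (x : X) (t : ℝ) :
    HasDerivAt (fun s : ℝ => exp ((s:ℂ) • S) x) (S (exp ((t:ℂ) • S) x)) t := by
  have h : HasDerivAt (fun z : ℂ => exp (z • S)) (S * exp ((t:ℂ) • S)) (t:ℂ) :=
    hasDerivAt_exp_smul_const' S (t:ℂ)
  have h3 := ((ContinuousLinearMap.apply ℂ X x).restrictScalars ℝ).hasFDerivAt.comp_hasDerivAt t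
    (pff_comp_ofReal h)
  simpa [Function.comp_def] using h3

private theorem pff_contraction (B : X →L[ℂ] X) (hB : B.IsPositive) {t : ℝ} (ht : 0 ≤ t) (x : X) :
    ‖exp ((t:ℂ) • (-B)) x‖ ≤ ‖x‖ := by
  set F : ℝ → X := fun s => exp ((s:ℂ) • (-B)) x with hFdef
  have hF : ∀ s, HasDerivAt F ((-B) (F s)) s := fun s => pff_hasDerivAt (-B) x s
  set g : ℝ → ℝ := fun s => ((inner ℂ (F s) (F s) : ℂ)).re with hgdef
  have hg : ∀ s, HasDerivAt g
      (((inner ℂ (F s) ((-B) (F s)) : ℂ)) + ((inner ℂ ((-B) (F s)) (F s) : ℂ))).re s := by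
    intro s
    have h1 := (hF s).inner (𝕜 := ℂ) (hF s)
    exact Complex.reCLM.hasFDerivAt.comp_hasDerivAt s h1
  have hnonpos : ∀ s,
      (((inner ℂ (F s) ((-B) (F s)) : ℂ)) + ((inner ℂ ((-B) (F s)) (F s) : ℂ))).re ≤ 0 := by
    intro s
    have h1 := hB.re_inner_nonneg_left (F s)
    have h2 := hB.re_inner_nonneg_right (F s)
    simp only [ContinuousLinearMap.neg_apply, inner_neg_left, inner_neg_right,
      Complex.add_re, Complex.neg_re] at *
    simp only [RCLike.re_to_complex] at h1 h2
    linarith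
  have hanti : Antitone g := antitone_of_hasDerivAt_nonpos hg hnonpos
  have h0 : g 0 = ‖x‖ ^ 2 := by
    have hF0 : F 0 = x := by simp [hFdef, NormedSpace.exp_zero]
    show ((inner ℂ (F 0) (F 0) : ℂ)).re = ‖x‖ ^ 2
    rw [hF0, ← RCLike.re_to_complex]
    exact inner_self_eq_norm_sq x
  have ht' : g t ≤ ‖x‖ ^ 2 := h0 ▸ hanti ht
  have hgt : g t = ‖F t‖ ^ 2 := by
    show ((inner ℂ (F t) (F t) : ℂ)).re = ‖F t‖ ^ 2
    rw [← RCLike.re_to_complex]; exact inner_self_eq_norm_sq (F t)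
  rw [hgt] at ht'
  nlinarith [norm_nonneg (F t), norm_nonneg x]

private theorem pff_exp_ker (S : X →L[ℂ] X) (x : X) (hx : S x = 0) : exp S x = x := by
  have hsum : Summable fun n : ℕ => ((n.factorial : ℂ)⁻¹) • S ^ n := expSeries_summable' S
  have h : exp S x = ∑' n : ℕ, (((n.factorial : ℂ)⁻¹) • S ^ n) x := by
    rw [exp_eq_tsum ℂ]
    exact (ContinuousLinearMap.apply ℂ X x).map_tsum hsum
  rw [h, tsum_eq_single 0]
  · simp
  · intro n hn
    obtain ⟨m, rfl⟩ := Nat.exists_eq_succ_of_ne_zero hn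
    simp [pow_succ, hx]

end PFFAux

set_option maxHeartbeats 2000000 in
theorem perron_frobenius_faris
    {X : Type*} [NormedAddCommGroup X] [InnerProductSpace ℂ X] [CompleteSpace X] [Nontrivial X]
    (C : Set X) (hC : IsHilbertCone C) (A : X →L[ℂ] X) (hAsa : IsSelfAdjoint A)
    (E : ℝ) (hE : IsGLB {r : ℝ | (r : ℂ) ∈ spectrum ℂ A} E)
    (hEig : ∃ φ : X, φ ≠ 0 ∧ A φ = (E : ℂ) • φ)
    (hergodic₁ : ∀ t : ℝ, 0 ≤ t → ∀ u ∈ C, NormedSpace.exp (-((t : ℂ) • A)) u ∈ C)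
    (hergodic₂ : ∀ u ∈ C, u ≠ 0 → ∀ v ∈ C, v ≠ 0 →
      ∃ t : ℝ, 0 ≤ t ∧ (0 : ℂ) < (inner ℂ u (NormedSpace.exp (-((t : ℂ) • A)) v) : ℂ)) :
    ∃ ψ : X, ψ ≠ 0 ∧ StrictlyPos C ψ ∧
      LinearMap.ker ((A - (E : ℂ) • (1 : X →L[ℂ] X) : X →L[ℂ] X) : X →ₗ[ℂ] X) = Submodule.span ℂ {ψ} := by
  classical
  obtain ⟨hCc, hCconv, hCsmul, hCinner, hCdec⟩ := hC
  set B : X →L[ℂ] X := A - (E:ℂ) • 1 with hBdef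
  have hBsa : IsSelfAdjoint B := by
    refine hAsa.sub ?_
    rw [IsSelfAdjoint, star_smul, star_one, Complex.star_def, Complex.conj_ofReal]
  have hspec : ∀ r ∈ spectrum ℝ B, 0 ≤ r := by
    intro r hr
    have h1 : (r:ℂ) ∈ spectrum ℂ B := spectrum.algebraMap_mem ℂ hr
    have h2 : ((r + E : ℝ) : ℂ) ∈ spectrum ℂ A := by
      have hBalg : B = A - algebraMap ℂ (X →L[ℂ] X) (E:ℂ) := by
        rw [hBdef, Algebra.algebraMap_eq_smul_one]
      rw [hBalg, ← spectrum.sub_singleton_eq] at h1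
      obtain ⟨w, hw, y, hy, hz⟩ := h1
      simp only [Set.mem_singleton_iff] at hy
      subst hy
      have hw' : w = (r:ℂ) + E := by rw [← hz]; ring
      rw [hw'] at hw
      push_cast
      exact hw
    have h3 : E ≤ r + E := hE.1 h2
    linarith
  have hBpos : B.IsPositive := by
    rw [← ContinuousLinearMap.nonneg_iff_isPositive]
    exact (StarOrderedRing.nonneg_iff_spectrum_nonneg B hBsa).mpr hspec
  set M : ℝ → X →L[ℂ] X := fun t => NormedSpace.exp ((t:ℂ) • (-B)) with hMdef
  have hMA : ∀ t : ℝ, NormedSpace.exp (-((t:ℂ) • A)) = (Real.exp (-(t*E)) : ℂ) • M t := by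
    intro t
    have hsplit : -((t:ℂ) • A) = (t:ℂ) • (-B) + algebraMap ℂ (X →L[ℂ] X) (-(t:ℂ)*E) := by
      rw [Algebra.algebraMap_eq_smul_one, hBdef]
      module
    have hcomm : Commute ((t:ℂ) • (-B)) (algebraMap ℂ (X →L[ℂ] X) (-(t:ℂ)*E)) :=
      (Algebra.commutes (-(t:ℂ)*E) ((t:ℂ) • (-B))).symm
    letI : NormedAlgebra ℚ (X →L[ℂ] X) := .restrictScalars ℚ ℂ (X →L[ℂ] X)
    rw [hsplit, NormedSpace.exp_add_of_commute hcomm, ← NormedSpace.algebraMap_exp_comm]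
    rw [Algebra.algebraMap_eq_smul_one, mul_smul_comm, mul_one, hMdef]
    congr 1
    rw [show (-(t:ℂ)*E) = ((-(t*E) : ℝ) : ℂ) by push_cast; ring, ← Complex.exp_eq_exp_ℂ,
      Complex.ofReal_exp]
  have hMsa : ∀ t : ℝ, IsSelfAdjoint (M t) := by
    intro t
    have h : IsSelfAdjoint ((t:ℂ) • (-B)) := by
      rw [IsSelfAdjoint, star_smul, star_neg, hBsa.star_eq, Complex.star_def, Complex.conj_ofReal]
    exact h.exp
  have hMsym : ∀ t : ℝ, ∀ x y : X, (inner ℂ ((M t) x) y : ℂ) = (inner ℂ x ((M t) y) : ℂ) :=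
    fun t => ContinuousLinearMap.isSelfAdjoint_iff_isSymmetric.mp (hMsa t)
  have hMcontr : ∀ t : ℝ, 0 ≤ t → ∀ x : X, ‖M t x‖ ≤ ‖x‖ :=
    fun t ht x => pff_contraction B hBpos ht x
  have hexpfact : ∀ (t : ℝ) (u : X),
      NormedSpace.exp (-((t:ℂ) • A)) u = Real.exp (-(t*E)) • (M t u) := by
    intro t u
    rw [hMA t]
    simp only [ContinuousLinearMap.smul_apply]
    rw [Complex.coe_smul]
  have hMC : ∀ t : ℝ, 0 ≤ t → ∀ u ∈ C, M t u ∈ C := by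
    intro t ht u hu
    have h1 := hergodic₁ t ht u hu
    rw [hexpfact t u] at h1
    have h2 := hCsmul (Real.exp (t*E)) (Real.exp_nonneg _) _ h1
    rw [smul_smul, ← Real.exp_add] at h2
    simpa using h2
  have h0C : (0:X) ∈ C := by
    obtain ⟨u, hu, -⟩ := hCdec 0
    simpa using hCsmul 0 le_rfl u hu
  have haddC : ∀ u ∈ C, ∀ v ∈ C, u + v ∈ C := by
    intro u hu v hv
    have h := hCconv hu hv (by norm_num : (0:ℝ) ≤ 1/2) (by norm_num : (0:ℝ) ≤ 1/2)
      (by norm_num : (1:ℝ)/2 + 1/2 = 1)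
    have h2 := hCsmul 2 (by norm_num) _ h
    have h3 : (2:ℝ) • ((1/2 : ℝ) • u + (1/2 : ℝ) • v) = u + v := by
      rw [smul_add, smul_smul, smul_smul]; norm_num
    rwa [h3] at h2
  have hIm : ∀ u ∈ C, ∀ v ∈ C, ((inner ℂ u v : ℂ)).im = 0 := by
    intro u hu v hv
    have h := hCinner u hu v hv
    rw [Complex.le_def] at h
    exact h.2.symm
  -- separation of real and imaginary parts
  have hsep : ∀ a ∈ C, ∀ b ∈ C, ∀ c ∈ C, ∀ d ∈ C, a - b = Complex.I • (c - d) →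
      a - b = 0 ∧ c - d = 0 := by
    intro a ha b hb c hc d hd h
    have hexp : (inner ℂ (a-b) (c-d) : ℂ) =
        (inner ℂ a c : ℂ) - (inner ℂ a d : ℂ) - (inner ℂ b c : ℂ) + (inner ℂ b d : ℂ) := by
      rw [inner_sub_left, inner_sub_right, inner_sub_right]; ring
    have him : ((inner ℂ (a-b) (c-d) : ℂ)).im = 0 := by
      rw [hexp]
      simp only [Complex.sub_im, Complex.add_im, hIm a ha c hc, hIm a ha d hd, hIm b hb c hc,
        hIm b hb d hd]
      ring
    have h3 : (inner ℂ (a-b) (a-b) : ℂ) = Complex.I * (inner ℂ (a-b) (c-d) : ℂ) := by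
      calc (inner ℂ (a-b) (a-b) : ℂ) = (inner ℂ (a-b) (Complex.I • (c-d)) : ℂ) := by rw [← h]
        _ = Complex.I * (inner ℂ (a-b) (c-d) : ℂ) := inner_smul_right _ _ _
    have hre : ‖a - b‖^2 = 0 := by
      have h4 : ((inner ℂ (a-b) (a-b) : ℂ)).re = ‖a-b‖^2 := by
        rw [← RCLike.re_to_complex]; exact inner_self_eq_norm_sq _
      rw [← h4, h3, Complex.mul_re, Complex.I_re, Complex.I_im, him]
      ring
    have hab : a - b = 0 := by
      have : ‖a - b‖ = 0 := by nlinarith [norm_nonneg (a-b)]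
      exact norm_eq_zero.mp this
    refine ⟨hab, ?_⟩
    have h5 : Complex.I • (c - d) = 0 := by rw [← h]; exact hab
    rcases smul_eq_zero.mp h5 with h6 | h6
    · exact absurd h6 Complex.I_ne_zero
    · exact h6
  have hfix_of_ker : ∀ x : X, B x = 0 → ∀ t : ℝ, M t x = x := by
    intro x hx t
    exact pff_exp_ker ((t:ℂ) • (-B)) x (by simp [hx])
  have hker_of_fix : ∀ x : X, (∀ t : ℝ, 0 ≤ t → M t x = x) → B x = 0 := by
    intro x hfx
    have hd : HasDerivWithinAt (fun s : ℝ => M s x) ((-B) x) (Set.Ici 0) 0 := by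
      have h := pff_hasDerivAt (-B) x 0
      simp only [Complex.ofReal_zero, zero_smul, NormedSpace.exp_zero,
        ContinuousLinearMap.one_apply] at h
      exact h.hasDerivWithinAt
    have hc : HasDerivWithinAt (fun s : ℝ => M s x) 0 (Set.Ici 0) 0 := by
      have hconst : HasDerivWithinAt (fun _ : ℝ => x) 0 (Set.Ici 0) (0:ℝ) :=
        (hasDerivAt_const (0:ℝ) x).hasDerivWithinAt
      apply hconst.congr
      · intro y hy; exact hfx y hy
      · exact hfx 0 le_rfl
    have h1 := hd.derivWithin ((uniqueDiffOn_Ici 0) 0 Set.self_mem_Ici)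
    have h2 := hc.derivWithin ((uniqueDiffOn_Ici 0) 0 Set.self_mem_Ici)
    have h3 : (-B) x = 0 := by rw [← h1, h2]
    simpa [neg_eq_zero] using h3
  -- key equality lemma
  have hkey : ∀ t : ℝ, 0 ≤ t → ∀ u ∈ C, ∀ v ∈ C, (inner ℂ u v : ℂ) = 0 →
      M t (u - v) = u - v → M t u = u ∧ M t v = v := by
    intro t ht u hu v hv huv hfix
    have hTC := hMC t ht
    have hcontr := hMcontr t ht
    have ha1 : ((inner ℂ u (M t u) : ℂ)).re ≤ ‖u‖^2 := by
      have h1 := re_inner_le_norm (𝕜 := ℂ) u (M t u)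
      simp only [RCLike.re_to_complex] at h1
      nlinarith [hcontr u, norm_nonneg u]
    have hb1 : ((inner ℂ v (M t v) : ℂ)).re ≤ ‖v‖^2 := by
      have h1 := re_inner_le_norm (𝕜 := ℂ) v (M t v)
      simp only [RCLike.re_to_complex] at h1
      nlinarith [hcontr v, norm_nonneg v]
    have hc1 : 0 ≤ ((inner ℂ u (M t v) : ℂ)).re := by
      have h := hCinner u hu _ (hTC v hv)
      rw [Complex.le_def] at h
      simpa using h.1
    have hd1 : 0 ≤ ((inner ℂ v (M t u) : ℂ)).re := by
      have h := hCinner v hv _ (hTC u hu)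
      rw [Complex.le_def] at h
      simpa using h.1
    have hfix' : M t u - M t v = u - v := by rw [← map_sub]; exact hfix
    have heq : ((inner ℂ u (M t u) : ℂ)).re - ((inner ℂ u (M t v) : ℂ)).re
        - ((inner ℂ v (M t u) : ℂ)).re + ((inner ℂ v (M t v) : ℂ)).re = ‖u‖^2 + ‖v‖^2 := by
      have e1 : (inner ℂ (u-v) (M t u - M t v) : ℂ) = (inner ℂ u (M t u) : ℂ)
          - (inner ℂ u (M t v) : ℂ) - (inner ℂ v (M t u) : ℂ) + (inner ℂ v (M t v) : ℂ) := by
        rw [inner_sub_left, inner_sub_right, inner_sub_right]; ring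
      rw [hfix'] at e1
      have e2 : ((inner ℂ (u-v) (u-v) : ℂ)).re = ‖u - v‖^2 := by
        rw [← RCLike.re_to_complex]; exact inner_self_eq_norm_sq _
      have e3 : ‖u - v‖^2 = ‖u‖^2 - 2 * ((inner ℂ u v : ℂ)).re + ‖v‖^2 := by
        have h := norm_sub_sq (𝕜 := ℂ) u v
        simpa [RCLike.re_to_complex] using h
      have e4 := congrArg Complex.re e1
      simp only [Complex.sub_re, Complex.add_re] at e4
      rw [e2, e3, huv] at e4
      simp only [Complex.zero_re] at e4
      linarith
    have hau : ((inner ℂ u (M t u) : ℂ)).re = ‖u‖^2 := by linarith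
    have hbv : ((inner ℂ v (M t v) : ℂ)).re = ‖v‖^2 := by linarith
    have hfixgen : ∀ w : X, ((inner ℂ w (M t w) : ℂ)).re = ‖w‖^2 → M t w = w := by
      intro w hw
      have hns : ‖M t w - w‖^2 = ‖M t w‖^2 - 2 * ((inner ℂ (M t w) w : ℂ)).re + ‖w‖^2 := by
        have h := norm_sub_sq (𝕜 := ℂ) (M t w) w
        simpa [RCLike.re_to_complex] using h
      have hsym2 : ((inner ℂ (M t w) w : ℂ)).re = ((inner ℂ w (M t w) : ℂ)).re := by
        have h := inner_re_symm (𝕜 := ℂ) (M t w) w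
        simpa [RCLike.re_to_complex] using h
      have hle : ‖M t w‖ ≤ ‖w‖ := hcontr w
      have h0 : ‖M t w - w‖^2 ≤ 0 := by
        rw [hns, hsym2, hw]; nlinarith [norm_nonneg (M t w)]
      have h1 : ‖M t w - w‖ = 0 := by nlinarith [norm_nonneg (M t w - w)]
      exact sub_eq_zero.mp (norm_eq_zero.mp h1)
    exact ⟨hfixgen u hau, hfixgen v hbv⟩
  -- ergodic orthogonality
  have horth : ∀ a ∈ C, ∀ b ∈ C, (inner ℂ a b : ℂ) = 0 → (∀ t : ℝ, 0 ≤ t → M t b = b) →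
      a = 0 ∨ b = 0 := by
    intro a ha b hb hab hfixb
    by_contra hcon
    push_neg at hcon
    obtain ⟨t, ht, hlt⟩ := hergodic₂ a ha hcon.1 b hb hcon.2
    rw [hexpfact t b, hfixb t ht, ← Complex.coe_smul, inner_smul_right, hab, mul_zero] at hlt
    exact lt_irrefl _ hlt
  -- decomposition into fixed parts
  have hparts : ∀ χ : X, (∀ t : ℝ, 0 ≤ t → M t χ = χ) →
      ∃ u, u ∈ C ∧ ∃ v, v ∈ C ∧ ∃ u', u' ∈ C ∧ ∃ v', v' ∈ C ∧
        χ = (u - v) + Complex.I • (u' - v') ∧ (inner ℂ u v : ℂ) = 0 ∧ (inner ℂ u' v' : ℂ) = 0 ∧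
        (∀ t : ℝ, 0 ≤ t → M t (u-v) = u-v) ∧ (∀ t : ℝ, 0 ≤ t → M t (u'-v') = u'-v') := by
    intro χ hfix
    obtain ⟨u, hu, v, hv, u', hu', v', hv', hdecomp, huv, hu'v'⟩ := hCdec χ
    have hboth : ∀ t : ℝ, 0 ≤ t → M t (u-v) = u-v ∧ M t (u'-v') = u'-v' := by
      intro t ht
      have h1 : M t (u-v) + Complex.I • (M t (u'-v')) = (u-v) + Complex.I • (u'-v') := by
        have h := hfix t ht
        rw [hdecomp] at h
        rw [← h, map_add, map_smul]
      have h2 : (M t u + v) - (M t v + u) = Complex.I • ((u' + M t v') - (v' + M t u')) := by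
        have hL : (M t u + v) - (M t v + u) = M t (u-v) - (u-v) := by rw [map_sub]; abel
        have hR : (u' + M t v') - (v' + M t u') = (u'-v') - M t (u'-v') := by
          rw [map_sub]; abel
        rw [hL, hR, smul_sub]
        rw [sub_eq_sub_iff_add_eq_add]
        rw [h1]; abel
      have h3 := hsep _ (haddC _ (hMC t ht u hu) v hv) _ (haddC _ (hMC t ht v hv) u hu)
        _ (haddC u' hu' _ (hMC t ht v' hv')) _ (haddC v' hv' _ (hMC t ht u' hu')) h2
      constructor
      · have h4 : M t (u-v) - (u-v) = 0 := by
          rw [show M t (u-v) - (u-v) = (M t u + v) - (M t v + u) by rw [map_sub]; abel]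
          exact h3.1
        exact sub_eq_zero.mp h4
      · have h4 : (u'-v') - M t (u'-v') = 0 := by
          rw [show (u'-v') - M t (u'-v') = (u' + M t v') - (v' + M t u') by rw [map_sub]; abel]
          exact h3.2
        exact (sub_eq_zero.mp h4).symm
    exact ⟨u, hu, v, hv, u', hu', v', hv', hdecomp, huv, hu'v',
      fun t ht => (hboth t ht).1, fun t ht => (hboth t ht).2⟩
  -- a fixed real vector is (up to sign) a fixed cone vector
  have hrealfix : ∀ u ∈ C, ∀ v ∈ C, (inner ℂ u v : ℂ) = 0 →
      (∀ t : ℝ, 0 ≤ t → M t (u-v) = u-v) →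
      ∃ w, w ∈ C ∧ (∀ t : ℝ, 0 ≤ t → M t w = w) ∧ (u - v = w ∨ u - v = -w) := by
    intro u hu v hv huv hfix
    have hfixu : ∀ t : ℝ, 0 ≤ t → M t u = u :=
      fun t ht => (hkey t ht u hu v hv huv (hfix t ht)).1
    have hfixv : ∀ t : ℝ, 0 ≤ t → M t v = v :=
      fun t ht => (hkey t ht u hu v hv huv (hfix t ht)).2
    rcases horth u hu v hv huv hfixv with h | h
    · exact ⟨v, hv, hfixv, Or.inr (by rw [h]; abel)⟩
    · exact ⟨u, hu, hfixu, Or.inl (by rw [h]; abel)⟩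
  -- construct the positive eigenvector ψ
  obtain ⟨φ, hφ0, hφeig⟩ := hEig
  have hφker : B φ = 0 := by
    rw [hBdef]
    simp [ContinuousLinearMap.sub_apply, hφeig]
  have hφfix : ∀ t : ℝ, 0 ≤ t → M t φ = φ := fun t ht => hfix_of_ker φ hφker t
  obtain ⟨u, hu, v, hv, u', hu', v', hv', hdec, huv, hu'v', hfr, hfi⟩ := hparts φ hφfix
  obtain ⟨w₁, hw₁C, hw₁fix, hw₁⟩ := hrealfix u hu v hv huv hfr
  obtain ⟨w₂, hw₂C, hw₂fix, hw₂⟩ := hrealfix u' hu' v' hv' hu'v' hfi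
  have hwne : w₁ ≠ 0 ∨ w₂ ≠ 0 := by
    by_contra hcon
    push_neg at hcon
    apply hφ0
    have h1 : u - v = 0 := by rcases hw₁ with h | h <;> simp [h, hcon.1]
    have h2 : u' - v' = 0 := by rcases hw₂ with h | h <;> simp [h, hcon.2]
    rw [hdec, h1, h2]; simp
  obtain ⟨ψ, hψC, hψ0, hψfix⟩ : ∃ ψ, ψ ∈ C ∧ ψ ≠ 0 ∧ ∀ t : ℝ, 0 ≤ t → M t ψ = ψ := by
    rcases hwne with h | h
    exacts [⟨w₁, hw₁C, h, hw₁fix⟩, ⟨w₂, hw₂C, h, hw₂fix⟩]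
  have hψker : B ψ = 0 := hker_of_fix ψ hψfix
  have hψpos : StrictlyPos C ψ := by
    intro x hx hx0
    obtain ⟨t, ht, hlt⟩ := hergodic₂ ψ hψC hψ0 x hx hx0
    rw [hexpfact t x, ← Complex.coe_smul, inner_smul_right, ← hMsym t ψ x, hψfix t ht] at hlt
    have hr : (0:ℝ) < Real.exp (-(t*E)) := Real.exp_pos _
    rw [Complex.lt_def] at hlt ⊢
    constructor
    · have h1 := hlt.1
      simp only [Complex.mul_re, Complex.ofReal_re, Complex.ofReal_im, Complex.zero_re,
        zero_mul, sub_zero] at h1 ⊢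
      nlinarith
    · have h2 := hlt.2
      simp only [Complex.mul_im, Complex.ofReal_re, Complex.ofReal_im, Complex.zero_im,
        zero_mul, add_zero] at h2 ⊢
      have := mul_eq_zero.mp h2.symm
      rcases this with h | h
      · exact absurd h (ne_of_gt hr)
      · exact h.symm
  -- every fixed cone vector is a real multiple of ψ
  have hψnorm : (0:ℝ) < ‖ψ‖^2 := by
    have := norm_pos_iff.mpr hψ0
    positivity
  have hconefix : ∀ w ∈ C, (∀ t : ℝ, 0 ≤ t → M t w = w) → ∃ c : ℝ, w = (c:ℂ) • ψ := by
    intro w hwC hwfix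
    by_cases hw0 : w = 0
    · exact ⟨0, by simp [hw0]⟩
    have hinner : (0:ℂ) < (inner ℂ ψ w : ℂ) := hψpos w hwC hw0
    have hinner_re : 0 < ((inner ℂ ψ w : ℂ)).re := by
      have := (Complex.lt_def.mp hinner).1; simpa using this
    have hinner_im : ((inner ℂ ψ w : ℂ)).im = 0 := by
      have := (Complex.lt_def.mp hinner).2; simpa using this.symm
    set c : ℝ := ((inner ℂ ψ w : ℂ)).re / (‖ψ‖^2) with hcdef
    have hc : 0 < c := div_pos hinner_re hψnorm
    set d : X := w - c • ψ with hddef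
    have hdfix : ∀ t : ℝ, 0 ≤ t → M t d = d := by
      intro t ht
      rw [hddef, map_sub, hwfix t ht, (M t).map_smul_of_tower c ψ, hψfix t ht]
    obtain ⟨a, ha, b, hb, a', ha', b', hb', hdd, hab, ha'b'⟩ := hCdec d
    have h2 : (w + b) - (c • ψ + a) = Complex.I • (a' - b') := by
      have h1 : d - (a-b) = Complex.I • (a'-b') := by rw [hdd]; abel
      rw [← h1, hddef]; abel
    have hcψ : c • ψ ∈ C := hCsmul c hc.le ψ hψC
    obtain ⟨h3, h4⟩ := hsep _ (haddC w hwC b hb) _ (haddC _ hcψ a ha) a' ha' b' hb' h2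
    have hdab : d = a - b := by rw [hdd, h4]; simp
    have hdfix' : ∀ t : ℝ, 0 ≤ t → M t (a - b) = a - b := by
      intro t ht; rw [← hdab]; exact hdfix t ht
    obtain ⟨w', hw'C, hw'fix, hw'⟩ := hrealfix a ha b hb hab hdfix'
    have hψd : (inner ℂ ψ d : ℂ) = 0 := by
      rw [hddef, inner_sub_right, ← Complex.coe_smul, inner_smul_right,
        inner_self_eq_norm_sq_to_K]
      have : (inner ℂ ψ w : ℂ) = (((inner ℂ ψ w : ℂ)).re : ℂ) := by
        apply Complex.ext
        · simp
        · simp [hinner_im]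
      rw [this, hcdef]
      have hne : ((‖ψ‖^2 : ℝ) : ℂ) ≠ 0 := by
        exact_mod_cast hψnorm.ne'
      push_cast at hne ⊢
      field_simp; simp
    have hd0 : d = 0 := by
      by_contra hd0
      rcases hw' with h | h
      · have hw'0 : w' ≠ 0 := by rw [← h, ← hdab]; exact hd0
        have hpos := hψpos w' hw'C hw'0
        rw [← h, ← hdab, hψd] at hpos
        exact lt_irrefl _ hpos
      · have hw'0 : w' ≠ 0 := by
          intro hz; apply hd0; rw [hdab, h, hz]; simp
        have hpos := hψpos w' hw'C hw'0
        have : (inner ℂ ψ w' : ℂ) = 0 := by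
          have h5 : (inner ℂ ψ (a-b) : ℂ) = 0 := by rw [← hdab]; exact hψd
          rw [h] at h5
          rw [inner_neg_right] at h5
          simpa using h5
        rw [this] at hpos
        exact lt_irrefl _ hpos
    refine ⟨c, ?_⟩
    have : w - c • ψ = 0 := by rw [← hddef]; exact hd0
    rw [Complex.coe_smul]
    exact sub_eq_zero.mp this
  -- conclude
  refine ⟨ψ, hψ0, hψpos, ?_⟩
  apply le_antisymm
  · intro χ hχ
    have hχ0 : B χ = 0 := LinearMap.mem_ker.mp hχ
    have hχfix : ∀ t : ℝ, 0 ≤ t → M t χ = χ := fun t ht => hfix_of_ker χ hχ0 t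
    obtain ⟨p, hp, q, hq, p', hp', q', hq', hdec2, hpq, hp'q', hfr2, hfi2⟩ := hparts χ hχfix
    have h1 : ∃ z₁ : ℂ, p - q = z₁ • ψ := by
      obtain ⟨w₃, hw₃C, hw₃fix, hw₃⟩ := hrealfix p hp q hq hpq hfr2
      obtain ⟨c₁, hc₁⟩ := hconefix w₃ hw₃C hw₃fix
      rcases hw₃ with h | h
      · exact ⟨c₁, by rw [h, hc₁]⟩
      · exact ⟨-c₁, by rw [h, hc₁, neg_smul]⟩
    have h2 : ∃ z₂ : ℂ, p' - q' = z₂ • ψ := by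
      obtain ⟨w₄, hw₄C, hw₄fix, hw₄⟩ := hrealfix p' hp' q' hq' hp'q' hfi2
      obtain ⟨c₂, hc₂⟩ := hconefix w₄ hw₄C hw₄fix
      rcases hw₄ with h | h
      · exact ⟨c₂, by rw [h, hc₂]⟩
      · exact ⟨-c₂, by rw [h, hc₂, neg_smul]⟩
    obtain ⟨z₁, hz₁⟩ := h1
    obtain ⟨z₂, hz₂⟩ := h2
    refine Submodule.mem_span_singleton.mpr ⟨z₁ + Complex.I * z₂, ?_⟩
    rw [hdec2, hz₁, hz₂, smul_smul, add_smul]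
  · rw [Submodule.span_singleton_le_iff_mem]
    exact LinearMap.mem_ker.mpr hψker
end

section
/- Under the standing assumptions, 𝒜 = 𝒬; that is, the set of F ∈ L²(M, μ; X) with F(x) ∈ C for μ-a.e. x coincides with the closure of the conical hull of the set of functions x ↦ f(x)·φ with φ ∈ C and f ∈ L²(M, μ; ℂ) satisfying f(x) ≥ 0 for μ-a.e. x. -/
open scoped ComplexOrder
open MeasureTheory

/-- The conical hull of a set: all finite sums with nonnegative real coefficients. -/
def conicalCombinations {V : Type*} [AddCommMonoid V] [Module ℝ V] (s : Set V) : Set V :=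
  {v | ∃ (k : ℕ) (a : Fin k → ℝ) (x : Fin k → V),
    (∀ i, 0 ≤ a i) ∧ (∀ i, x i ∈ s) ∧ v = ∑ i, a i • x i}

private lemma Lp.coeFn_finset_sum' {α E : Type*} [MeasurableSpace α] {μ : Measure α}
    [NormedAddCommGroup E] {p : ENNReal} {ι : Type*} (t : Finset ι) (f : ι → Lp E p μ) :
    ⇑(∑ i ∈ t, f i) =ᵐ[μ] fun x => ∑ i ∈ t, f i x := by
  classical
  induction t using Finset.induction_on with
  | empty => simp only [Finset.sum_empty]; exact Lp.coeFn_zero (E := E) (p := p) (μ := μ)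
  | @insert a s h ih =>
    have h1 := Lp.coeFn_add (f a) (∑ i ∈ s, f i)
    filter_upwards [h1, ih] with x hx1 hx2
    simp only [Finset.sum_insert h, hx1, Pi.add_apply, hx2]

private lemma finset_sum_mem_conicalCombinations {V : Type*} [AddCommMonoid V] [Module ℝ V]
    {s : Set V} {ι : Type*} (t : Finset ι) (f : ι → V) (hf : ∀ i ∈ t, f i ∈ s) :
    ∑ i ∈ t, f i ∈ conicalCombinations s := by
  classical
  refine ⟨Fintype.card ↥t, fun _ => 1, fun i => f ((Fintype.equivFin ↥t).symm i : ι),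
    fun _ => zero_le_one, fun i => hf _ ((Fintype.equivFin ↥t).symm i).2, ?_⟩
  simp only [one_smul]
  rw [Equiv.sum_comp (Fintype.equivFin ↥t).symm (fun j : ↥t => f (j : ι)),
    Finset.sum_coe_sort t f]

theorem ae_cone_eq_closure_coni
    {M : Type*} [MeasurableSpace M] (μ : Measure M) [SigmaFinite μ]
    [TopologicalSpace.SeparableSpace (Lp ℂ 2 μ)]
    {X : Type*} [NormedAddCommGroup X] [InnerProductSpace ℂ X] [CompleteSpace X]
    [TopologicalSpace.SeparableSpace X]
    (C : Set X) (hC : IsHilbertCone C) :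
    {F : Lp X 2 μ | ∀ᵐ x ∂μ, F x ∈ C} =
      closure (conicalCombinations
        {G : Lp X 2 μ | ∃ φ ∈ C, ∃ f : Lp ℂ 2 μ,
          (∀ᵐ x ∂μ, (0 : ℂ) ≤ f x) ∧ (∀ᵐ x ∂μ, G x = f x • φ)}) := by
  classical
  obtain ⟨hclosed, hconv, hsmul, hinner, hdecomp⟩ := hC
  set S : Set (Lp X 2 μ) :=
    {G : Lp X 2 μ | ∃ φ ∈ C, ∃ f : Lp ℂ 2 μ,
      (∀ᵐ x ∂μ, (0 : ℂ) ≤ f x) ∧ (∀ᵐ x ∂μ, G x = f x • φ)} with hS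
  set K : Set (Lp X 2 μ) := conicalCombinations S with hK
  set A : Set (Lp X 2 μ) := {F : Lp X 2 μ | ∀ᵐ x ∂μ, F x ∈ C} with hA
  -- basic facts about C
  obtain ⟨u0, hu0, -⟩ := hdecomp 0
  have h0C : (0 : X) ∈ C := by simpa using hsmul 0 le_rfl u0 hu0
  have haddC : ∀ u ∈ C, ∀ v ∈ C, u + v ∈ C := by
    intro u hu v hv
    have h2 : ((1 : ℝ)/2) • u + ((1 : ℝ)/2) • v ∈ C :=
      hconv hu hv (by norm_num) (by norm_num) (by norm_num)
    have h3 := hsmul 2 (by norm_num) _ h2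
    rw [smul_add, smul_smul, smul_smul] at h3
    norm_num at h3
    exact h3
  -- S ⊆ A
  have hSA : S ⊆ A := by
    rintro G ⟨φ, hφ, f, hf_nonneg, hG⟩
    filter_upwards [hf_nonneg, hG] with x hx hGx
    rw [hGx]
    have him : (f x).im = 0 := (Complex.le_def.mp hx).2.symm
    have hre : (0 : ℝ) ≤ (f x).re := by simpa using (Complex.le_def.mp hx).1
    have hfx : f x = (((f x).re : ℝ) : ℂ) := by
      apply Complex.ext <;> simp [him]
    rw [hfx, Complex.coe_smul]
    exact hsmul _ hre _ hφ
  -- sums of C-elements with nonnegative coefficients stay in C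
  have hsumC : ∀ (k : ℕ) (a : Fin k → ℝ) (v : Fin k → X),
      (∀ i, 0 ≤ a i) → (∀ i, v i ∈ C) → ∑ i, a i • v i ∈ C := by
    intro k
    induction k with
    | zero => intro a v _ _; simpa using h0C
    | succ n ih =>
      intro a v ha hv
      rw [Fin.sum_univ_succ]
      exact haddC _ (hsmul _ (ha 0) _ (hv 0)) _
        (ih _ _ (fun i => ha _) (fun i => hv _))
  -- K ⊆ A
  have hKA : K ⊆ A := by
    rintro G ⟨k, a, x, ha, hx, rfl⟩
    have hcoe := Lp.coeFn_finset_sum' (Finset.univ : Finset (Fin k)) (fun i => a i • x i)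
    have hae : ∀ᵐ t ∂μ, ∀ i : Fin k, (x i) t ∈ C :=
      (MeasureTheory.ae_all_iff).2 fun i => hSA (hx i)
    have hsm : ∀ᵐ t ∂μ, ∀ i : Fin k, (a i • x i) t = a i • (x i) t :=
      (MeasureTheory.ae_all_iff).2 fun i => Lp.coeFn_smul (a i) (x i)
    filter_upwards [hcoe, hae, hsm] with t ht hmem hsm'
    rw [ht]
    have : ∑ i : Fin k, (a i • x i) t = ∑ i : Fin k, a i • (x i) t :=
      Finset.sum_congr rfl fun i _ => hsm' i
    rw [this]
    exact hsumC k a _ ha fun i => hmem i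
  -- A is closed
  have hAclosed : IsClosed A := by
    apply IsSeqClosed.isClosed
    intro f F hf hF
    have h1 : TendstoInMeasure μ (fun n => ⇑(f n)) Filter.atTop ⇑F :=
      tendstoInMeasure_of_tendsto_Lp hF
    obtain ⟨ns, -, hns⟩ := h1.exists_seq_tendsto_ae
    have hae : ∀ᵐ x ∂μ, ∀ n, (f n) x ∈ C := (MeasureTheory.ae_all_iff).2 hf
    filter_upwards [hns, hae] with x hx hfx
    exact hclosed.mem_of_tendsto hx (Filter.Eventually.of_forall fun i => hfx (ns i))
  apply Set.Subset.antisymm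
  · -- A ⊆ closure K
    intro F hF
    letI : MeasurableSpace X := borel X
    haveI : BorelSpace X := ⟨rfl⟩
    haveI : TopologicalSpace.SeparableSpace ↥C :=
      (TopologicalSpace.IsSeparable.of_separableSpace C).separableSpace
    have hmeas : Measurable ⇑F := (Lp.stronglyMeasurable F).measurable
    have hmemF : MemLp ⇑F 2 μ := Lp.memLp F
    have htend := MeasureTheory.SimpleFunc.tendsto_approxOn_Lp_eLpNorm (p := 2)
      hmeas h0C (by norm_num) (by rw [hclosed.closure_eq]; exact hF)
      (by simpa using hmemF.2)
    set g : ℕ → SimpleFunc M X := fun n => SimpleFunc.approxOn ⇑F hmeas C 0 h0C n with hg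
    have hgmem : ∀ n, MemLp (g n) 2 μ := fun n =>
      SimpleFunc.memLp_approxOn hmeas hmemF h0C MemLp.zero n
    -- every C-valued L² simple function lies in K
    have hsimple : ∀ (s : SimpleFunc M X) (hs : MemLp s 2 μ),
        (∀ x, s x ∈ C) → hs.toLp s ∈ K := by
      intro s hs hsC
      set t : Finset X := s.range \ {0} with hT
      have hyne : ∀ y ∈ t, y ≠ 0 := by
        intro y hy
        simpa using (Finset.mem_sdiff.mp hy).2
      have hGdef : ∀ y ∈ t, ∃ G ∈ S, ⇑G =ᵐ[μ] (s ⁻¹' {y}).indicator fun _ => y := by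
        intro y hy
        obtain ⟨hyr, -⟩ := Finset.mem_sdiff.mp hy
        have hy0 : y ≠ 0 := hyne y hy
        have hAm : MeasurableSet (s ⁻¹' {y}) := s.measurableSet_fiber y
        have hμA : μ (s ⁻¹' {y}) ≠ ⊤ :=
          (SimpleFunc.measure_preimage_lt_top_of_memLp (by norm_num) (by norm_num)
            s hs y hy0).ne
        refine ⟨indicatorConstLp 2 hAm hμA y, ?_, indicatorConstLp_coeFn⟩
        obtain ⟨x, hx⟩ := SimpleFunc.mem_range.mp hyr
        refine ⟨y, hx ▸ hsC x, indicatorConstLp 2 hAm hμA (1 : ℂ), ?_, ?_⟩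
        · filter_upwards [indicatorConstLp_coeFn (c := (1 : ℂ))] with z hz
          rw [hz]
          by_cases hzA : z ∈ s ⁻¹' {y} <;>
            simp [Set.indicator_of_mem, Set.indicator_of_notMem, hzA, zero_le_one]
        · filter_upwards [indicatorConstLp_coeFn (c := (1 : ℂ)),
            indicatorConstLp_coeFn (c := y)] with z h1 h2
          rw [h2, h1]
          by_cases hzA : z ∈ s ⁻¹' {y} <;>
            simp [Set.indicator_of_mem, Set.indicator_of_notMem, hzA]
      choose G hGS hGcoe using hGdef
      have key : hs.toLp s = ∑ y ∈ t.attach, G y.1 y.2 := by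
        apply Lp.ext
        have h1 := MemLp.coeFn_toLp hs
        have h2 := Lp.coeFn_finset_sum' t.attach (fun y => G y.1 y.2)
        have h3 : ∀ᵐ x ∂μ, ∀ y ∈ t.attach,
            (G y.1 y.2) x = (s ⁻¹' {y.1}).indicator (fun _ => y.1) x :=
          (MeasureTheory.ae_ball_iff t.attach.countable_toSet).mpr
            fun y _ => hGcoe y.1 y.2
        filter_upwards [h1, h2, h3] with x hx1 hx2 hx3
        rw [hx1, hx2, Finset.sum_congr rfl hx3,
          Finset.sum_attach t (fun y => (s ⁻¹' {y}).indicator (fun _ => y) x)]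
        have hterm : ∀ y ∈ t, (s ⁻¹' {y}).indicator (fun _ => y) x
            = if s x = y then y else 0 := by
          intro y _
          by_cases h : s x = y <;>
            simp [Set.indicator, Set.mem_preimage, h]
        rw [Finset.sum_congr rfl hterm, Finset.sum_ite_eq t (s x) (fun y => y)]
        by_cases h0 : s x = 0
        · have : s x ∉ t := by simp [hT, h0]
          simp [this, h0]
        · have : s x ∈ t := by
            simp [hT, SimpleFunc.mem_range_self, h0]
          simp [this]
      rw [key]
      exact finset_sum_mem_conicalCombinations t.attach _ fun y _ => hGS y.1 y.2
    have hgC : ∀ n (x : M), (g n) x ∈ C := fun n x =>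
      SimpleFunc.approxOn_mem hmeas h0C n x
    -- convergence of the simple approximations to F in Lp
    have htendLp : Filter.Tendsto (fun n => (hgmem n).toLp (g n))
        Filter.atTop (nhds F) := by
      have hten2 : Filter.Tendsto
          (fun n => eLpNorm (⇑((hgmem n).toLp (g n)) - ⇑F) 2 μ) Filter.atTop (nhds 0) := by
        refine htend.congr fun n => ?_
        exact (eLpNorm_congr_ae (((hgmem n).coeFn_toLp).sub
          (Filter.EventuallyEq.refl _ _))).symm
      have h := Lp.tendsto_Lp_of_tendsto_eLpNorm
        (f := fun n => (hgmem n).toLp (g n)) ⇑F hmemF hten2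
      rwa [Lp.toLp_coeFn F hmemF] at h
    exact mem_closure_of_tendsto htendLp
      (Filter.Eventually.of_forall fun n => hsimple (g n) (hgmem n) (hgC n))
  · exact closure_minimal hKA hAclosed
end

section
/- Under the standing assumptions, 𝒬 (equivalently, 𝒜) is a Hilbert cone in the complex Hilbert space L²(M, μ; X). -/
open scoped ComplexOrder
open MeasureTheory

section ConicalAux
variable {V : Type*} [AddCommMonoid V] [Module ℝ V] {s : Set V}

lemma conical_zero : (0 : V) ∈ conicalCombinations s :=
  ⟨0, fun i => 0, fun i => i.elim0, fun i => le_rfl, fun i => i.elim0, by simp⟩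

lemma conical_subset : s ⊆ conicalCombinations s := fun v hv =>
  ⟨1, fun _ => 1, fun _ => v, fun _ => zero_le_one, fun _ => hv, by simp⟩

lemma conical_add {u v : V} (hu : u ∈ conicalCombinations s) (hv : v ∈ conicalCombinations s) :
    u + v ∈ conicalCombinations s := by
  obtain ⟨k, a, x, ha, hx, rfl⟩ := hu
  obtain ⟨l, b, y, hb, hy, rfl⟩ := hv
  refine ⟨k + l, Fin.append a b, Fin.append x y, ?_, ?_, ?_⟩
  · intro i
    refine Fin.addCases (fun j => ?_) (fun j => ?_) i
    · simpa using ha j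
    · simpa using hb j
  · intro i
    refine Fin.addCases (fun j => ?_) (fun j => ?_) i
    · simpa using hx j
    · simpa using hy j
  · rw [Fin.sum_univ_add]
    simp

lemma conical_smul {c : ℝ} (hc : 0 ≤ c) {v : V} (hv : v ∈ conicalCombinations s) :
    c • v ∈ conicalCombinations s := by
  obtain ⟨k, a, x, ha, hx, rfl⟩ := hv
  exact ⟨k, fun i => c * a i, x, fun i => mul_nonneg hc (ha i),
    hx, by rw [Finset.smul_sum]; simp [smul_smul]⟩

lemma conical_convex : Convex ℝ (conicalCombinations s) := fun _ hu _ hv a b ha hb _ =>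
  conical_add (conical_smul ha hu) (conical_smul hb hv)

lemma conical_sum {ι : Type*} (t : Finset ι) (f : ι → V)
    (hf : ∀ i ∈ t, f i ∈ conicalCombinations s) :
    (∑ i ∈ t, f i) ∈ conicalCombinations s :=
  Finset.sum_induction f (· ∈ conicalCombinations s) (fun _ _ => conical_add) conical_zero hf

end ConicalAux

lemma integral_nonneg_cplx {M : Type*} [MeasurableSpace M] {μ : Measure M} {f : M → ℂ}
    (h : ∀ᵐ x ∂μ, 0 ≤ f x) : 0 ≤ ∫ x, f x ∂μ := by
  by_cases hf : Integrable f μ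
  · rw [Complex.nonneg_iff]
    constructor
    · calc (0:ℝ) ≤ ∫ x, (f x).re ∂μ :=
            integral_nonneg_of_ae (h.mono fun x hx => (Complex.nonneg_iff.mp hx).1)
        _ = (∫ x, f x ∂μ).re := by simpa using integral_re hf
    · have h2 : ∫ x, (f x).im ∂μ = 0 :=
        integral_eq_zero_of_ae (h.mono fun x hx => (Complex.nonneg_iff.mp hx).2.symm)
      calc (0:ℝ) = ∫ x, (f x).im ∂μ := h2.symm
        _ = (∫ x, f x ∂μ).im := by simpa using integral_im hf
  · rw [integral_undef hf]

section HilbertConeAux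
variable {X : Type*} [NormedAddCommGroup X] [InnerProductSpace ℂ X]

local notation "⟪" x ", " y "⟫" => @inner ℂ _ _ x y

lemma apart_bound {C : Set X}
    (hadd : ∀ u ∈ C, ∀ v ∈ C, u + v ∈ C)
    (hpos : ∀ u ∈ C, ∀ v ∈ C, (0:ℂ) ≤ ⟪u, v⟫)
    {w w' a b c d a' b' c' d' : X}
    (ha : a ∈ C) (hb : b ∈ C) (hc : c ∈ C) (hd : d ∈ C)
    (ha' : a' ∈ C) (hb' : b' ∈ C) (hc' : c' ∈ C) (hd' : d' ∈ C)
    (hw : w = a - b + Complex.I • (c - d)) (hw' : w' = a' - b' + Complex.I • (c' - d'))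
    (hab : ⟪a, b⟫ = 0) (hab' : ⟪a', b'⟫ = 0) :
    ‖a - a'‖ ≤ ‖w - w'‖ ∧ ‖b - b'‖ ≤ 2 * ‖w - w'‖ := by
  have him : ∀ u ∈ C, ∀ v ∈ C, (⟪u, v⟫ : ℂ).im = 0 := fun u hu v hv =>
    (Complex.nonneg_iff.mp (hpos u hu v hv)).2.symm
  have hre : ∀ u ∈ C, ∀ v ∈ C, 0 ≤ (⟪u, v⟫ : ℂ).re := fun u hu v hv =>
    (Complex.nonneg_iff.mp (hpos u hu v hv)).1
  set p : X := a - b - (a' - b') with hp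
  set q : X := c - d - (c' - d') with hq
  have step1 : ‖p‖ ≤ ‖w - w'‖ := by
    have hpq : w - w' = p + Complex.I • q := by
      rw [hw, hw', hp, hq]
      module
    have hqim : (⟪p, q⟫ : ℂ).im = 0 := by
      have hprw : p = (a + b') - (b + a') := by rw [hp]; abel
      have hqrw : q = (c + d') - (d + c') := by rw [hq]; abel
      rw [hprw, hqrw, inner_sub_left, inner_sub_right, inner_sub_right]
      simp only [Complex.sub_im]
      rw [him _ (hadd a ha b' hb') _ (hadd c hc d' hd'),
        him _ (hadd a ha b' hb') _ (hadd d hd c' hc'),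
        him _ (hadd b hb a' ha') _ (hadd c hc d' hd'),
        him _ (hadd b hb a' ha') _ (hadd d hd c' hc')]
      ring
    have hcross : RCLike.re (⟪p, Complex.I • q⟫ : ℂ) = 0 := by
      rw [inner_smul_right]
      simp [Complex.mul_re, hqim]
    have hnorm : ‖w - w'‖ ^ 2 = ‖p‖ ^ 2 + ‖Complex.I • q‖ ^ 2 := by
      rw [hpq, @norm_add_sq ℂ, hcross]
      ring
    nlinarith [norm_nonneg p, norm_nonneg (w - w'), norm_nonneg (Complex.I • q),
      sq_nonneg ‖Complex.I • q‖]
  have key : ∀ {u v : X}, u ∈ C → v ∈ C → ⟪u, v⟫ = 0 → ∀ e ∈ C,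
      ((⟪(u - v) - u, e - u⟫ : ℂ)).re ≤ 0 := by
    intro u v hu hv huv e he
    have h1 : (u - v) - u = -v := by abel
    have hvu : ⟪v, u⟫ = (0 : ℂ) := by
      rw [← inner_conj_symm, huv, map_zero]
    rw [h1, inner_neg_left, inner_sub_right, hvu, sub_zero]
    simp only [Complex.neg_re]
    linarith [hre v hv e he]
  have h1 := key ha hb hab a' ha'
  have h2 := key ha' hb' hab' a ha
  have step2 : ‖a - a'‖ ≤ ‖p‖ := by
    have hsum : (⟪a - a', a - a'⟫ : ℂ) =
        ⟪(a - b) - a, a' - a⟫ + ⟪(a' - b') - a', a - a'⟫ + ⟪p, a - a'⟫ := by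
      have h3 : (⟪(a - b) - a, a' - a⟫ : ℂ) = ⟪-((a - b) - a), a - a'⟫ := by
        rw [inner_neg_left, show (a' - a : X) = -(a - a') from by abel, inner_neg_right]
      rw [h3, ← inner_add_left, ← inner_add_left]
      congr 1
      rw [hp]; abel
    have hre_eq := congrArg Complex.re hsum
    simp only [Complex.add_re] at hre_eq
    have hns : (⟪a - a', a - a'⟫ : ℂ).re = ‖a - a'‖ ^ 2 :=
      by simpa using inner_self_eq_norm_sq (𝕜 := ℂ) (a - a')
    have hcs : (⟪p, a - a'⟫ : ℂ).re ≤ ‖p‖ * ‖a - a'‖ := by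
      exact re_inner_le_norm (𝕜 := ℂ) p (a - a')
    have hsq : ‖a - a'‖ ^ 2 ≤ ‖p‖ * ‖a - a'‖ := by
      rw [← hns, hre_eq]
      linarith [h1, h2, hcs]
    rcases eq_or_lt_of_le (norm_nonneg (a - a')) with h0 | h0
    · rw [← h0]; exact norm_nonneg p
    · nlinarith
  refine ⟨step2.trans step1, ?_⟩
  have hbb : b - b' = (a - a') - p := by rw [hp]; abel
  calc ‖b - b'‖ = ‖(a - a') - p‖ := by rw [hbb]
    _ ≤ ‖a - a'‖ + ‖p‖ := norm_sub_le _ _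
    _ ≤ ‖w - w'‖ + ‖w - w'‖ := add_le_add (step2.trans step1) step1
    _ = 2 * ‖w - w'‖ := by ring

end HilbertConeAux

section ApproxAux
variable {M : Type*} [MeasurableSpace M] {μ : Measure M}
  {X : Type*} [NormedAddCommGroup X] [InnerProductSpace ℂ X]

lemma coeFn_finset_sum_ae {ι : Type*} (s : Finset ι) (f : ι → Lp X 2 μ) :
    ⇑(∑ i ∈ s, f i) =ᵐ[μ] fun x => ∑ i ∈ s, f i x := by
  classical
  induction s using Finset.cons_induction with
  | empty => simp only [Finset.sum_empty]; exact Lp.coeFn_zero (E := X) 2 μ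
  | cons i s hi ih =>
    simp only [Finset.sum_cons]
    filter_upwards [Lp.coeFn_add (f i) (∑ j ∈ s, f j), ih] with x h1 h2
    rw [h1, Pi.add_apply, h2]

lemma simple_mem_conical (C : Set X) (g : SimpleFunc M X) (hg : MemLp g 2 μ)
    (hgC : ∀ x, g x ∈ C) :
    hg.toLp g ∈ conicalCombinations {G : Lp X 2 μ | ∃ φ ∈ C, ∃ f : Lp ℂ 2 μ,
      (∀ᵐ x ∂μ, (0 : ℂ) ≤ f x) ∧ (∀ᵐ x ∂μ, G x = f x • φ)} := by
  classical
  set T : Finset X := g.range \ {0} with hT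
  have hTne : ∀ φ ∈ T, φ ≠ 0 := by
    intro φ hφ
    have := (Finset.mem_sdiff.mp hφ).2
    simpa using this
  have hfin : ∀ φ ∈ T, μ (g ⁻¹' {φ}) ≠ ⊤ := fun φ hφ =>
    (SimpleFunc.measure_preimage_lt_top_of_memLp (by norm_num) (by norm_num) g hg φ
      (hTne φ hφ)).ne
  set F : {φ // φ ∈ T} → Lp X 2 μ :=
    fun φ => indicatorConstLp 2 (g.measurableSet_fiber φ.1) (hfin φ.1 φ.2) φ.1 with hF
  have hFS : ∀ φ : {φ // φ ∈ T}, F φ ∈ {G : Lp X 2 μ | ∃ φ ∈ C, ∃ f : Lp ℂ 2 μ,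
      (∀ᵐ x ∂μ, (0 : ℂ) ≤ f x) ∧ (∀ᵐ x ∂μ, G x = f x • φ)} := by
    rintro ⟨φ, hφ⟩
    have hφC : φ ∈ C := by
      have : φ ∈ Set.range g := SimpleFunc.mem_range.mp (Finset.mem_sdiff.mp hφ).1
      obtain ⟨x, hx⟩ := this
      exact hx ▸ hgC x
    refine ⟨φ, hφC, indicatorConstLp 2 (g.measurableSet_fiber φ) (hfin φ hφ) (1:ℂ), ?_, ?_⟩
    · filter_upwards [indicatorConstLp_coeFn (p := 2) (μ := μ)
        (hs := g.measurableSet_fiber φ) (hμs := hfin φ hφ) (c := (1:ℂ))] with x hx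
      rw [hx, Set.indicator_apply]
      split <;> norm_num
    · filter_upwards [indicatorConstLp_coeFn (p := 2) (μ := μ)
        (hs := g.measurableSet_fiber φ) (hμs := hfin φ hφ) (c := (1:ℂ)),
        indicatorConstLp_coeFn (p := 2) (μ := μ)
        (hs := g.measurableSet_fiber φ) (hμs := hfin φ hφ) (c := φ)] with x hx hx'
      rw [hx, hx', Set.indicator_apply, Set.indicator_apply]
      split <;> simp
  have heq : hg.toLp g = ∑ φ ∈ T.attach, F φ := by
    apply Lp.ext
    have h1 : ∀ᵐ x ∂μ, ∀ φ : {φ // φ ∈ T}, F φ x = (g ⁻¹' {φ.1}).indicator (fun _ => φ.1) x := by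
      rw [MeasureTheory.ae_all_iff]
      intro φ
      exact indicatorConstLp_coeFn
    filter_upwards [hg.coeFn_toLp, coeFn_finset_sum_ae T.attach F, h1] with x hx hsum hind
    rw [hx, hsum, Finset.sum_congr rfl (fun φ _ => hind φ)]
    by_cases hx0 : g x = 0
    · rw [Finset.sum_eq_zero, hx0]
      rintro ⟨φ, hφ⟩ -
      apply Set.indicator_of_notMem
      simp only [Set.mem_preimage, Set.mem_singleton_iff, hx0]
      exact fun h => hTne φ hφ h.symm
    · have hmem : g x ∈ T := Finset.mem_sdiff.mpr
        ⟨SimpleFunc.mem_range.mpr ⟨x, rfl⟩, by simpa using hx0⟩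
      symm
      rw [Finset.sum_eq_single (⟨g x, hmem⟩ : {φ // φ ∈ T})]
      · exact Set.indicator_of_mem (by simp) _
      · rintro ⟨φ, hφ⟩ - hne
        apply Set.indicator_of_notMem
        simp only [Set.mem_preimage, Set.mem_singleton_iff]
        intro h
        exact hne (by simp [h])
      · intro h
        exact absurd (Finset.mem_attach T _) h
  rw [heq]
  exact conical_sum _ _ fun φ _ => conical_subset (hFS φ)

lemma memℒp_toLp_mem_closure [TopologicalSpace.SeparableSpace X]
    (C : Set X) (hclosed : IsClosed C) (h0 : (0:X) ∈ C)
    {F : M → X} (hF : MemLp F 2 μ) (hFC : ∀ᵐ x ∂μ, F x ∈ C) :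
    hF.toLp F ∈ closure (conicalCombinations {G : Lp X 2 μ | ∃ φ ∈ C, ∃ f : Lp ℂ 2 μ,
      (∀ᵐ x ∂μ, (0 : ℂ) ≤ f x) ∧ (∀ᵐ x ∂μ, G x = f x • φ)}) := by
  classical
  borelize X
  haveI : SecondCountableTopology X := UniformSpace.secondCountable_of_separable X
  set F₀ := hF.1.mk F with hF₀
  have hF₀m : StronglyMeasurable F₀ := hF.1.stronglyMeasurable_mk
  have hFF₀ : F =ᵐ[μ] F₀ := hF.1.ae_eq_mk
  set s : Set M := F₀ ⁻¹' C with hs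
  have hsm : MeasurableSet s := hF₀m.measurable hclosed.measurableSet
  set G : M → X := s.piecewise F₀ (fun _ => 0) with hG
  have hGmeas : Measurable G := hF₀m.measurable.piecewise hsm measurable_const
  have hGC : ∀ x, G x ∈ C := by
    intro x
    by_cases hx : x ∈ s
    · have hGx : G x = F₀ x := by simp [hG, Set.piecewise, hx]
      rw [hGx]
      exact hx
    · simp [hG, Set.piecewise, hx, h0]
  have hFG : F =ᵐ[μ] G := by
    filter_upwards [hFF₀, hFC] with x hx1 hx2
    have hxs : x ∈ s := by rw [hs, Set.mem_preimage, ← hx1]; exact hx2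
    simp [hG, Set.piecewise, hxs, hx1]
  have hGmem : MemLp G 2 μ := hF.ae_eq hFG
  set g : ℕ → SimpleFunc M X := fun n => SimpleFunc.approxOn G hGmeas C 0 h0 n with hg
  have hgC : ∀ n x, g n x ∈ C := fun n x => SimpleFunc.approxOn_mem hGmeas h0 n x
  have hgmem : ∀ n, MemLp (g n) 2 μ :=
    fun n => SimpleFunc.memLp_approxOn hGmeas hGmem h0 MemLp.zero' n
  have hconv : Filter.Tendsto (fun n => eLpNorm (⇑(g n) - G) 2 μ) Filter.atTop (nhds 0) := by
    apply SimpleFunc.tendsto_approxOn_Lp_eLpNorm hGmeas h0 (by norm_num)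
    · filter_upwards with x
      rw [hclosed.closure_eq]
      exact hGC x
    · simpa using hGmem.2
  have hclose : Filter.Tendsto (fun n => (hgmem n).toLp (g n)) Filter.atTop
      (nhds (hF.toLp F)) := by
    rw [tendsto_iff_norm_sub_tendsto_zero]
    have heq : ∀ n, ‖(hgmem n).toLp (g n) - hF.toLp F‖ = (eLpNorm (⇑(g n) - G) 2 μ).toReal := by
      intro n
      rw [show hF.toLp F = hGmem.toLp G from MemLp.toLp_congr hF hGmem hFG,
        ← MemLp.toLp_sub, Lp.norm_toLp]
    have h2 := (ENNReal.tendsto_toReal (by simp)).comp hconv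
    simp only [Function.comp_def] at h2
    simpa [heq] using h2
  exact mem_closure_of_tendsto hclose (Filter.Eventually.of_forall fun n =>
    simple_mem_conical C (g n) (hgmem n) (hgC n))

end ApproxAux

theorem coni_isHilbertCone
    {M : Type*} [MeasurableSpace M] (μ : Measure M) [SigmaFinite μ]
    [TopologicalSpace.SeparableSpace (Lp ℂ 2 μ)]
    {X : Type*} [NormedAddCommGroup X] [InnerProductSpace ℂ X] [CompleteSpace X]
    [TopologicalSpace.SeparableSpace X]
    (C : Set X) (hC : IsHilbertCone C) :
    IsHilbertCone (closure (conicalCombinations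
      {G : Lp X 2 μ | ∃ φ ∈ C, ∃ f : Lp ℂ 2 μ,
        (∀ᵐ x ∂μ, (0 : ℂ) ≤ f x) ∧ (∀ᵐ x ∂μ, G x = f x • φ)})) := by
  classical
  obtain ⟨hclosed, hconv, hsmulC, hpos, hdec⟩ := hC
  set S := {G : Lp X 2 μ | ∃ φ ∈ C, ∃ f : Lp ℂ 2 μ,
      (∀ᵐ x ∂μ, (0 : ℂ) ≤ f x) ∧ (∀ᵐ x ∂μ, G x = f x • φ)} with hSdef
  set K := conicalCombinations S with hKdef
  -- basic facts about C
  have h0C : (0:X) ∈ C := by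
    obtain ⟨u, hu, -⟩ := hdec 0
    simpa using hsmulC 0 le_rfl u hu
  have haddC : ∀ u ∈ C, ∀ v ∈ C, u + v ∈ C := by
    intro u hu v hv
    have h2 := hsmulC 2 (by norm_num) _
      (hconv hu hv (by norm_num : (0:ℝ) ≤ 1/2) (by norm_num : (0:ℝ) ≤ 1/2) (by norm_num))
    have : (2:ℝ) • ((1/2:ℝ) • u + (1/2:ℝ) • v) = u + v := by
      module
    rwa [this] at h2
  -- inner product nonnegativity on generators
  have hgen : ∀ G ∈ S, ∀ H ∈ S, (0:ℂ) ≤ (inner ℂ G H : ℂ) := by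
    rintro G ⟨φ, hφ, f, hf0, hfG⟩ H ⟨ψ, hψ, g, hg0, hgH⟩
    rw [MeasureTheory.L2.inner_def]
    apply integral_nonneg_cplx
    filter_upwards [hfG, hgH, hf0, hg0] with x h1 h2 h3 h4
    rw [h1, h2, inner_smul_left, inner_smul_right]
    have hconj : (starRingEnd ℂ) (f x) = f x := by
      rw [Complex.conj_eq_iff_im]
      exact (Complex.nonneg_iff.mp h3).2.symm
    rw [hconj]
    exact mul_nonneg h3 (mul_nonneg h4 (hpos φ hφ ψ hψ))
  have hsmcast : ∀ (r : ℝ) (v : Lp X 2 μ), r • v = (r : ℂ) • v := by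
    intro r v
    rw [← algebraMap_smul ℂ r v, Complex.coe_algebraMap]
  have hSK : ∀ G ∈ S, ∀ q ∈ K, (0:ℂ) ≤ (inner ℂ G q : ℂ) := by
    rintro G hG q ⟨k, b, y, hb, hy, rfl⟩
    rw [inner_sum (𝕜 := ℂ)]
    apply Finset.sum_nonneg
    intro j _
    rw [hsmcast, inner_smul_right]
    exact mul_nonneg (Complex.zero_le_real.mpr (hb j)) (hgen G hG _ (hy j))
  have hKK : ∀ p ∈ K, ∀ q ∈ K, (0:ℂ) ≤ (inner ℂ p q : ℂ) := by
    rintro p ⟨k, a, x, ha, hx, rfl⟩ q hq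
    rw [sum_inner (𝕜 := ℂ)]
    apply Finset.sum_nonneg
    intro i _
    rw [hsmcast, inner_smul_left]
    rw [Complex.conj_ofReal]
    exact mul_nonneg (Complex.zero_le_real.mpr (ha i)) (hSK _ (hx i) q hq)
  have hclosedNonneg : IsClosed {z : ℂ | 0 ≤ z} := by
    have hset : {z : ℂ | 0 ≤ z} = Complex.re ⁻¹' (Set.Ici 0) ∩ Complex.im ⁻¹' {0} := by
      ext z
      simp only [Set.mem_setOf_eq, Set.mem_inter_iff, Set.mem_preimage, Set.mem_Ici,
        Set.mem_singleton_iff, Complex.nonneg_iff]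
      exact ⟨fun ⟨h1, h2⟩ => ⟨h1, h2.symm⟩, fun ⟨h1, h2⟩ => ⟨h1, h2.symm⟩⟩
    rw [hset]
    exact (isClosed_Ici.preimage Complex.continuous_re).inter
      (isClosed_singleton.preimage Complex.continuous_im)
  refine ⟨isClosed_closure, conical_convex.closure, ?_, ?_, ?_⟩
  -- scalar multiplication
  · intro c hc u hu
    have h1 : (fun v : Lp X 2 μ => c • v) '' closure K ⊆
        closure ((fun v : Lp X 2 μ => c • v) '' K) :=
      image_closure_subset_closure_image (continuous_const_smul c)
    have h2 : (fun v : Lp X 2 μ => c • v) '' K ⊆ K := by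
      rintro _ ⟨v, hv, rfl⟩
      exact conical_smul hc hv
    exact closure_mono h2 (h1 ⟨u, hu, rfl⟩)
  -- inner product nonnegativity on the closure
  · intro u hu v hv
    have step1 : ∀ q ∈ K, ∀ p ∈ closure K, (0:ℂ) ≤ (inner ℂ p q : ℂ) := by
      intro q hq p hp
      have hsub : closure K ⊆ {p : Lp X 2 μ | (0:ℂ) ≤ (inner ℂ p q : ℂ)} :=
        closure_minimal (fun p hp => hKK p hp q hq)
          (hclosedNonneg.preimage (Continuous.inner continuous_id continuous_const))
      exact hsub hp
    have hsub : closure K ⊆ {q : Lp X 2 μ | (0:ℂ) ≤ (inner ℂ u q : ℂ)} :=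
      closure_minimal (fun q hq => step1 q hq u hu)
        (hclosedNonneg.preimage (Continuous.inner continuous_const continuous_id))
    exact hsub hv
  -- decomposition
  · intro W
    choose dU hdU dV hdV dU' hdU' dV' hdV' hdeq hdo1 hdo2 using hdec
    have hzeroeq : (0:X) = 0 - 0 + Complex.I • (0 - 0) := by simp
    have hzeroinner : (inner ℂ (0:X) (0:X) : ℂ) = 0 := inner_zero_left 0
    -- rotated decompositions
    have hrot : ∀ w : X, -Complex.I • w = dU' w - dV' w + Complex.I • (dV w - dU w) := by
      intro w
      nth_rewrite 1 [hdeq w]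
      have hII : (-Complex.I : ℂ) * Complex.I = 1 := by
        simp [Complex.I_mul_I]
      rw [smul_add, smul_smul, hII, one_smul]
      rw [show (-Complex.I : ℂ) • (dU w - dV w) = Complex.I • (dV w - dU w) by
        rw [neg_smul, ← smul_neg, neg_sub]]
      abel
    have hrotzero : -Complex.I • (0:X) = 0 - 0 + Complex.I • (0 - 0) := by simp
    have hbound : ∀ w w' : X, ‖dU w - dU w'‖ ≤ ‖w - w'‖ ∧ ‖dV w - dV w'‖ ≤ 2 * ‖w - w'‖ :=
      fun w w' => apart_bound haddC hpos (hdU w) (hdV w) (hdU' w) (hdV' w)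
        (hdU w') (hdV w') (hdU' w') (hdV' w') (hdeq w) (hdeq w') (hdo1 w) (hdo1 w')
    have hIiso : ∀ w w' : X, ‖-Complex.I • w - -Complex.I • w'‖ = ‖w - w'‖ := by
      intro w w'
      rw [← smul_sub, norm_smul]
      simp
    have hbound' : ∀ w w' : X, ‖dU' w - dU' w'‖ ≤ ‖w - w'‖ ∧ ‖dV' w - dV' w'‖ ≤ 2 * ‖w - w'‖ := by
      intro w w'
      have := apart_bound haddC hpos (hdU' w) (hdV' w) (hdV w) (hdU w)
        (hdU' w') (hdV' w') (hdV w') (hdU w') (hrot w) (hrot w') (hdo2 w) (hdo2 w')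
      rwa [hIiso w w'] at this
    have hzero : ∀ w : X, ‖dU w‖ ≤ ‖w‖ ∧ ‖dV w‖ ≤ 2 * ‖w‖ := by
      intro w
      have := apart_bound haddC hpos (hdU w) (hdV w) (hdU' w) (hdV' w)
        h0C h0C h0C h0C (hdeq w) hzeroeq (hdo1 w) hzeroinner
      simpa using this
    have hzero' : ∀ w : X, ‖dU' w‖ ≤ ‖w‖ ∧ ‖dV' w‖ ≤ 2 * ‖w‖ := by
      intro w
      have := apart_bound haddC hpos (hdU' w) (hdV' w) (hdV w) (hdU w)
        h0C h0C h0C h0C (hrot w) hzeroeq (hdo2 w) hzeroinner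
      have hn : ‖-Complex.I • w - 0‖ = ‖w‖ := by
        rw [sub_zero, norm_smul]; simp
      rw [hn] at this
      simpa using this
    -- continuity of the decomposition maps
    have hlipU : LipschitzWith 1 dU := LipschitzWith.of_dist_le_mul fun x y => by
      simpa [dist_eq_norm] using (hbound x y).1
    have hlipV : LipschitzWith 2 dV := LipschitzWith.of_dist_le_mul fun x y => by
      simpa [dist_eq_norm] using (hbound x y).2
    have hlipU' : LipschitzWith 1 dU' := LipschitzWith.of_dist_le_mul fun x y => by
      simpa [dist_eq_norm] using (hbound' x y).1
    have hlipV' : LipschitzWith 2 dV' := LipschitzWith.of_dist_le_mul fun x y => by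
      simpa [dist_eq_norm] using (hbound' x y).2
    have hWaesm := Lp.aestronglyMeasurable W
    have hWmem := Lp.memLp W
    -- the four component functions are in L²
    have hmemU : MemLp (fun x => dU (W x)) 2 μ :=
      MemLp.of_le_mul hWmem (hlipU.continuous.comp_aestronglyMeasurable hWaesm)
        (Filter.Eventually.of_forall fun x => by
          simpa using (hzero (W x)).1.trans (by nlinarith [norm_nonneg (W x)] : ‖W x‖ ≤ 2 * ‖W x‖))
    have hmemV : MemLp (fun x => dV (W x)) 2 μ :=
      MemLp.of_le_mul hWmem (hlipV.continuous.comp_aestronglyMeasurable hWaesm)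
        (Filter.Eventually.of_forall fun x => (hzero (W x)).2)
    have hmemU' : MemLp (fun x => dU' (W x)) 2 μ :=
      MemLp.of_le_mul hWmem (hlipU'.continuous.comp_aestronglyMeasurable hWaesm)
        (Filter.Eventually.of_forall fun x => by
          simpa using (hzero' (W x)).1.trans (by nlinarith [norm_nonneg (W x)] : ‖W x‖ ≤ 2 * ‖W x‖))
    have hmemV' : MemLp (fun x => dV' (W x)) 2 μ :=
      MemLp.of_le_mul hWmem (hlipV'.continuous.comp_aestronglyMeasurable hWaesm)
        (Filter.Eventually.of_forall fun x => (hzero' (W x)).2)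
    refine ⟨hmemU.toLp _, ?_, hmemV.toLp _, ?_, hmemU'.toLp _, ?_, hmemV'.toLp _, ?_, ?_, ?_, ?_⟩
    · exact memℒp_toLp_mem_closure C hclosed h0C hmemU
        (Filter.Eventually.of_forall fun x => hdU (W x))
    · exact memℒp_toLp_mem_closure C hclosed h0C hmemV
        (Filter.Eventually.of_forall fun x => hdV (W x))
    · exact memℒp_toLp_mem_closure C hclosed h0C hmemU'
        (Filter.Eventually.of_forall fun x => hdU' (W x))
    · exact memℒp_toLp_mem_closure C hclosed h0C hmemV'
        (Filter.Eventually.of_forall fun x => hdV' (W x))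
    · apply Lp.ext
      filter_upwards [hmemU.coeFn_toLp, hmemV.coeFn_toLp, hmemU'.coeFn_toLp, hmemV'.coeFn_toLp,
        Lp.coeFn_add (hmemU.toLp _ - hmemV.toLp _)
          (Complex.I • (hmemU'.toLp _ - hmemV'.toLp _)),
        Lp.coeFn_sub (hmemU.toLp _) (hmemV.toLp _),
        Lp.coeFn_sub (hmemU'.toLp _) (hmemV'.toLp _),
        Lp.coeFn_smul Complex.I (hmemU'.toLp _ - hmemV'.toLp _)] with x h1 h2 h3 h4 h5 h6 h7 h8
      rw [h5, Pi.add_apply, h6, Pi.sub_apply, h8, Pi.smul_apply, h7, Pi.sub_apply,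
        h1, h2, h3, h4]
      exact hdeq (W x)
    · rw [MeasureTheory.L2.inner_def]
      have hae : (fun x => (inner ℂ ((hmemU.toLp _) x) ((hmemV.toLp _) x) : ℂ))
          =ᵐ[μ] fun _ => (0:ℂ) := by
        filter_upwards [hmemU.coeFn_toLp, hmemV.coeFn_toLp] with x h1 h2
        rw [h1, h2]
        exact hdo1 (W x)
      rw [integral_congr_ae hae, integral_zero]
    · rw [MeasureTheory.L2.inner_def]
      have hae : (fun x => (inner ℂ ((hmemU'.toLp _) x) ((hmemV'.toLp _) x) : ℂ))
          =ᵐ[μ] fun _ => (0:ℂ) := by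
        filter_upwards [hmemU'.coeFn_toLp, hmemV'.coeFn_toLp] with x h1 h2
        rw [h1, h2]
        exact hdo2 (W x)
      rw [integral_congr_ae hae, integral_zero]
end

section
/- Under the standing assumptions, let A be a bounded linear operator on L²(M, μ; X). If for all φ, ψ ∈ C and all f, g ∈ L²(M, μ; ℂ) with f(x) ≥ 0 and g(x) ≥ 0 for μ-a.e. x, the inner product ⟨f·φ, A(g·ψ)⟩ (where f·φ denotes the function x ↦ f(x)·φ) is a nonnegative real number, then A maps 𝒬 into 𝒬, i.e., A is positivity preserving with respect to the Hilbert cone 𝒬. -/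
open scoped ComplexOrder ENNReal NNReal
open MeasureTheory

namespace HilbertConeAux

/-! ### Basic lemmas on `conicalCombinations` -/
section CC
variable {V : Type*} [AddCommMonoid V] [Module ℝ V] {s T : Set V}

lemma zero_mem_cc : (0 : V) ∈ conicalCombinations s :=
  ⟨0, Fin.elim0, Fin.elim0, fun i => i.elim0, fun i => i.elim0, by simp⟩

lemma mem_cc_of_mem {v : V} (hv : v ∈ s) : v ∈ conicalCombinations s :=
  ⟨1, fun _ => 1, fun _ => v, fun _ => zero_le_one, fun _ => hv, by simp⟩

lemma add_mem_cc {v w : V} (hv : v ∈ conicalCombinations s) (hw : w ∈ conicalCombinations s) :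
    v + w ∈ conicalCombinations s := by
  obtain ⟨k, a, x, ha, hx, rfl⟩ := hv
  obtain ⟨l, b, y, hb, hy, rfl⟩ := hw
  refine ⟨k + l, Fin.append a b, Fin.append x y, ?_, ?_, ?_⟩
  · intro i
    refine Fin.addCases (fun j => ?_) (fun j => ?_) i
    · simpa [Fin.append_left] using ha j
    · simpa [Fin.append_right] using hb j
  · intro i
    refine Fin.addCases (fun j => ?_) (fun j => ?_) i
    · simpa [Fin.append_left] using hx j
    · simpa [Fin.append_right] using hy j
  · rw [Fin.sum_univ_add]
    simp [Fin.append_left, Fin.append_right]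

lemma cc_subset (h0 : (0 : V) ∈ T) (hadd : ∀ a ∈ T, ∀ b ∈ T, a + b ∈ T)
    (hsmul : ∀ c : ℝ, 0 ≤ c → ∀ v ∈ T, c • v ∈ T) (hs : s ⊆ T) :
    conicalCombinations s ⊆ T := by
  rintro v ⟨k, a, x, ha, hx, rfl⟩
  exact Finset.sum_induction _ (· ∈ T) (fun p q hp hq => hadd p hp q hq) h0
    (fun i _ => hsmul _ (ha i) _ (hs (hx i)))

end CC

/-! ### Metric projection onto a closed convex set in a real Hilbert space -/
section Proj
variable {F : Type*} [NormedAddCommGroup F] [InnerProductSpace ℝ F] [CompleteSpace F]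

noncomputable def cproj (K : Set F) (w : F) : F :=
  Classical.epsilon fun v => v ∈ K ∧ ∀ c ∈ K, (inner ℝ (w - v) (c - v) : ℝ) ≤ 0

variable {K : Set F}

lemma cproj_spec (hne : K.Nonempty) (hcl : IsClosed K) (hco : Convex ℝ K) (w : F) :
    cproj K w ∈ K ∧ ∀ c ∈ K, (inner ℝ (w - cproj K w) (c - cproj K w) : ℝ) ≤ 0 := by
  apply Classical.epsilon_spec
    (p := fun v => v ∈ K ∧ ∀ c ∈ K, (inner ℝ (w - v) (c - v) : ℝ) ≤ 0)
  obtain ⟨v, hv, hmin⟩ := exists_norm_eq_iInf_of_complete_convex hne hcl.isComplete hco w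
  exact ⟨v, hv, (norm_eq_iInf_iff_real_inner_le_zero hco hv).mp hmin⟩

lemma cproj_eq (hne : K.Nonempty) (hcl : IsClosed K) (hco : Convex ℝ K) {w v : F}
    (hv : v ∈ K) (hvc : ∀ c ∈ K, (inner ℝ (w - v) (c - v) : ℝ) ≤ 0) : cproj K w = v := by
  obtain ⟨hpK, hp⟩ := cproj_spec hne hcl hco w
  set p := cproj K w with hpdef
  have h1 : (inner ℝ (w - p) (v - p) : ℝ) ≤ 0 := hp v hv
  have h2 : (inner ℝ (w - v) (p - v) : ℝ) ≤ 0 := hvc p hpK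
  have key : (inner ℝ (p - v) (p - v) : ℝ) ≤ 0 := by
    have e1 : (inner ℝ (w - v) (p - v) : ℝ) - (inner ℝ (w - p) (p - v) : ℝ)
        = (inner ℝ (p - v) (p - v) : ℝ) := by
      rw [← inner_sub_left]
      congr 1
      abel
    have e2 : (inner ℝ (w - p) (p - v) : ℝ) = -(inner ℝ (w - p) (v - p) : ℝ) := by
      rw [← inner_neg_right, neg_sub]
    linarith
  have : ‖p - v‖ ^ 2 ≤ 0 := by rwa [real_inner_self_eq_norm_sq] at key
  have : ‖p - v‖ = 0 := by nlinarith [norm_nonneg (p - v)]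
  have := norm_eq_zero.mp this
  rw [sub_eq_zero] at this
  exact this

lemma cproj_lipschitz (hne : K.Nonempty) (hcl : IsClosed K) (hco : Convex ℝ K) (w w' : F) :
    ‖cproj K w - cproj K w'‖ ≤ ‖w - w'‖ := by
  obtain ⟨hpK, hp⟩ := cproj_spec hne hcl hco w
  obtain ⟨hqK, hq⟩ := cproj_spec hne hcl hco w'
  set p := cproj K w
  set q := cproj K w'
  have h1 : (inner ℝ (w - p) (q - p) : ℝ) ≤ 0 := hp q hqK
  have h2 : (inner ℝ (w' - q) (p - q) : ℝ) ≤ 0 := hq p hpK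
  have key : (inner ℝ (p - q) (p - q) : ℝ) ≤ (inner ℝ (w - w') (p - q) : ℝ) := by
    have e1 : (inner ℝ (w - w') (p - q) : ℝ) - (inner ℝ (p - q) (p - q) : ℝ)
        = (inner ℝ (w - p) (p - q) : ℝ) - (inner ℝ (w' - q) (p - q) : ℝ) := by
      rw [← inner_sub_left, ← inner_sub_left]
      congr 1
      abel
    have e2 : (inner ℝ (w - p) (p - q) : ℝ) = -(inner ℝ (w - p) (q - p) : ℝ) := by
      rw [← inner_neg_right, neg_sub]
    linarith
  have hcs : (inner ℝ (w - w') (p - q) : ℝ) ≤ ‖w - w'‖ * ‖p - q‖ := real_inner_le_norm _ _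
  have hsq : ‖p - q‖ ^ 2 ≤ ‖w - w'‖ * ‖p - q‖ := by
    rw [← real_inner_self_eq_norm_sq]; linarith
  rcases eq_or_lt_of_le (norm_nonneg (p - q)) with h | h
  · rw [← h]; exact norm_nonneg _
  · have := hsq
    nlinarith

lemma cproj_continuous (hne : K.Nonempty) (hcl : IsClosed K) (hco : Convex ℝ K) :
    Continuous (cproj K) := by
  apply (LipschitzWith.of_dist_le_mul (K := 1) (f := cproj K) ?_).continuous
  intro x y
  rw [dist_eq_norm, dist_eq_norm, NNReal.coe_one, one_mul]
  exact cproj_lipschitz hne hcl hco x y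

lemma cproj_zero (hne : K.Nonempty) (hcl : IsClosed K) (hco : Convex ℝ K) (h0 : (0 : F) ∈ K) :
    cproj K 0 = 0 :=
  cproj_eq hne hcl hco h0 (fun c _ => by simp)

lemma cproj_norm_le (hne : K.Nonempty) (hcl : IsClosed K) (hco : Convex ℝ K) (h0 : (0 : F) ∈ K)
    (w : F) : ‖cproj K w‖ ≤ ‖w‖ := by
  have := cproj_lipschitz hne hcl hco w 0
  rwa [cproj_zero hne hcl hco h0, sub_zero, sub_zero] at this

end Proj


/-! ### Pointwise geometry of a Hilbert cone -/
section Cone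

attribute [local instance] InnerProductSpace.complexToReal

variable {X : Type*} [NormedAddCommGroup X] [InnerProductSpace ℂ X] [CompleteSpace X]
variable {C : Set X}

lemma re_inner_eq (x y : X) : (inner ℝ x y : ℝ) = (inner ℂ x y : ℂ).re := rfl

lemma cone_inner_re_nonneg (hC : IsHilbertCone C) {u v : X} (hu : u ∈ C) (hv : v ∈ C) :
    0 ≤ (inner ℂ u v : ℂ).re :=
  (Complex.le_def.mp (hC.2.2.2.1 u hu v hv)).1

lemma cone_inner_im_zero (hC : IsHilbertCone C) {u v : X} (hu : u ∈ C) (hv : v ∈ C) :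
    (inner ℂ u v : ℂ).im = 0 :=
  ((Complex.le_def.mp (hC.2.2.2.1 u hu v hv)).2).symm

lemma cone_zero_mem (hC : IsHilbertCone C) : (0 : X) ∈ C := by
  obtain ⟨u, hu, -⟩ := hC.2.2.2.2 0
  simpa using hC.2.2.1 0 le_rfl u hu

lemma cone_add_mem (hC : IsHilbertCone C) {u v : X} (hu : u ∈ C) (hv : v ∈ C) :
    u + v ∈ C := by
  have hhalf : (1/2 : ℝ) • u + (1/2 : ℝ) • v ∈ C :=
    hC.2.1 hu hv (by norm_num) (by norm_num) (by norm_num)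
  have := hC.2.2.1 2 (by norm_num) _ hhalf
  rw [smul_add, smul_smul, smul_smul] at this
  norm_num at this
  exact this

/-- The real subspace `C - C`. -/
def coneD (C : Set X) : Set X := {w | ∃ u ∈ C, ∃ v ∈ C, w = u - v}

/-- The closed real subspace generated by `C`. -/
def coneE (C : Set X) : Set X := closure (coneD C)

lemma cone_subset_D (hC : IsHilbertCone C) : C ⊆ coneD C := fun u hu =>
  ⟨u, hu, 0, cone_zero_mem hC, by simp⟩

lemma coneD_zero (hC : IsHilbertCone C) : (0 : X) ∈ coneD C :=
  cone_subset_D hC (cone_zero_mem hC)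

lemma coneD_add (hC : IsHilbertCone C) {a b : X} (ha : a ∈ coneD C) (hb : b ∈ coneD C) :
    a + b ∈ coneD C := by
  obtain ⟨u, hu, v, hv, rfl⟩ := ha
  obtain ⟨u', hu', v', hv', rfl⟩ := hb
  exact ⟨u + u', cone_add_mem hC hu hu', v + v', cone_add_mem hC hv hv', by abel⟩

lemma coneD_sub (hC : IsHilbertCone C) {a b : X} (ha : a ∈ coneD C) (hb : b ∈ coneD C) :
    a - b ∈ coneD C := by
  obtain ⟨u, hu, v, hv, rfl⟩ := ha
  obtain ⟨u', hu', v', hv', rfl⟩ := hb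
  exact ⟨u + v', cone_add_mem hC hu hv', v + u', cone_add_mem hC hv hu', by abel⟩

lemma coneD_smul (hC : IsHilbertCone C) (c : ℝ) {a : X} (ha : a ∈ coneD C) :
    c • a ∈ coneD C := by
  obtain ⟨u, hu, v, hv, rfl⟩ := ha
  rcases le_or_gt 0 c with h | h
  · exact ⟨c • u, hC.2.2.1 c h u hu, c • v, hC.2.2.1 c h v hv, by rw [smul_sub]⟩
  · refine ⟨(-c) • v, hC.2.2.1 (-c) (by linarith) v hv,
      (-c) • u, hC.2.2.1 (-c) (by linarith) u hu, ?_⟩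
    rw [smul_sub]
    module

lemma coneE_closed : IsClosed (coneE C) := isClosed_closure

lemma coneE_zero (hC : IsHilbertCone C) : (0 : X) ∈ coneE C :=
  subset_closure (coneD_zero hC)

lemma cone_subset_E (hC : IsHilbertCone C) : C ⊆ coneE C :=
  fun u hu => subset_closure (cone_subset_D hC hu)

lemma coneE_add (hC : IsHilbertCone C) {a b : X} (ha : a ∈ coneE C) (hb : b ∈ coneE C) :
    a + b ∈ coneE C :=
  map_mem_closure₂ continuous_add ha hb (fun p hp q hq => coneD_add hC hp hq)

lemma coneE_sub (hC : IsHilbertCone C) {a b : X} (ha : a ∈ coneE C) (hb : b ∈ coneE C) :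
    a - b ∈ coneE C :=
  map_mem_closure₂ continuous_sub ha hb (fun p hp q hq => coneD_sub hC hp hq)

lemma coneE_smul (hC : IsHilbertCone C) (c : ℝ) {a : X} (ha : a ∈ coneE C) :
    c • a ∈ coneE C :=
  map_mem_closure (continuous_const_smul c) ha (fun p hp => coneD_smul hC c hp)

lemma coneE_convex (hC : IsHilbertCone C) : Convex ℝ (coneE C) := by
  intro x hx y hy a b _ _ _
  exact coneE_add hC (coneE_smul hC a hx) (coneE_smul hC b hy)

lemma coneE_nonempty (hC : IsHilbertCone C) : (coneE C).Nonempty := ⟨0, coneE_zero hC⟩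

lemma coneD_inner_im (hC : IsHilbertCone C) {a b : X} (ha : a ∈ coneD C) (hb : b ∈ coneD C) :
    (inner ℂ a b : ℂ).im = 0 := by
  obtain ⟨u, hu, v, hv, rfl⟩ := ha
  obtain ⟨u', hu', v', hv', rfl⟩ := hb
  rw [inner_sub_left, inner_sub_right, inner_sub_right]
  simp [cone_inner_im_zero hC hu hu', cone_inner_im_zero hC hu hv',
    cone_inner_im_zero hC hv hu', cone_inner_im_zero hC hv hv']

lemma coneE_inner_im (hC : IsHilbertCone C) {a b : X} (ha : a ∈ coneE C) (hb : b ∈ coneE C) :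
    (inner ℂ a b : ℂ).im = 0 := by
  have step1 : ∀ p ∈ coneD C, (inner ℂ a p : ℂ).im = 0 := by
    intro p hp
    have hcl : IsClosed {y : X | (inner ℂ y p : ℂ).im = 0} :=
      isClosed_eq (Complex.continuous_im.comp
        (Continuous.inner continuous_id continuous_const)) continuous_const
    exact hcl.closure_subset_iff.mpr (fun q hq => coneD_inner_im hC hq hp) ha
  have hcl : IsClosed {y : X | (inner ℂ a y : ℂ).im = 0} :=
    isClosed_eq (Complex.continuous_im.comp
      (Continuous.inner continuous_const continuous_id)) continuous_const
  exact hcl.closure_subset_iff.mpr step1 hb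

lemma coneE_inner_I_smul (hC : IsHilbertCone C) {a b : X} (ha : a ∈ coneE C)
    (hb : b ∈ coneE C) : (inner ℝ a (Complex.I • b) : ℝ) = 0 := by
  show (inner ℂ a (Complex.I • b) : ℂ).re = 0
  rw [inner_smul_right]
  simp [coneE_inner_im hC ha hb]

/-- Self-duality of `C` inside `coneE C`. -/
lemma cone_selfdual (hC : IsHilbertCone C) {w : X} (hw : w ∈ coneE C)
    (hdual : ∀ c ∈ C, 0 ≤ (inner ℝ c w : ℝ)) : w ∈ C := by
  obtain ⟨u, hu, v, hv, u', hu', v', hv', hdec, huv, hu'v'⟩ := hC.2.2.2.2 w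
  have hdE : u - v ∈ coneE C := subset_closure ⟨u, hu, v, hv, rfl⟩
  have hd'E : u' - v' ∈ coneE C := subset_closure ⟨u', hu', v', hv', rfl⟩
  set z := Complex.I • (u' - v') with hzdef
  have hzE : z ∈ coneE C := by
    have hzeq : z = w - (u - v) := by rw [hdec]; abel
    rw [hzeq]
    exact coneE_sub hC hw hdE
  have hz0 : (inner ℝ z z : ℝ) = 0 := coneE_inner_I_smul hC hzE hd'E
  have hz : z = 0 := by
    have : ‖z‖ ^ 2 = 0 := by rw [← real_inner_self_eq_norm_sq, hz0]
    simpa using this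
  have hweq : w = u - v := by rw [hdec, hz, add_zero]
  have hvu : (inner ℂ v u : ℂ) = 0 := by rw [← inner_conj_symm, huv, map_zero]
  have h2 : 0 ≤ (inner ℝ v w : ℝ) := hdual v hv
  have h3 : (inner ℝ v w : ℝ) = -(inner ℝ v v : ℝ) := by
    rw [hweq, inner_sub_right]
    have : (inner ℝ v u : ℝ) = 0 := by rw [re_inner_eq, hvu]; rfl
    rw [this]; ring
  have hv0 : v = 0 := by
    have : ‖v‖ ^ 2 ≤ 0 := by
      rw [← real_inner_self_eq_norm_sq]; linarith
    have : ‖v‖ = 0 := by nlinarith [norm_nonneg v]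
    simpa using this
  rw [hweq, hv0, sub_zero]
  exact hu

/-- Projection of an element of `coneE C` onto the cone produces the orthogonal
cone decomposition. -/
lemma cone_part (hC : IsHilbertCone C) {e : X} (he : e ∈ coneE C) :
    cproj C e ∈ C ∧ cproj C e - e ∈ C ∧ (inner ℂ (cproj C e) (cproj C e - e) : ℂ) = 0 := by
  have hne : C.Nonempty := ⟨0, cone_zero_mem hC⟩
  have hcl := hC.1
  have hco := hC.2.1
  obtain ⟨huC, hvar⟩ := cproj_spec hne hcl hco e
  set u := cproj C e with hudef
  have h1 : (inner ℝ (e - u) u : ℝ) ≤ 0 := by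
    have := hvar (u + u) (cone_add_mem hC huC huC)
    simpa using this
  have h2 : (inner ℝ (e - u) u : ℝ) ≥ 0 := by
    have := hvar 0 (cone_zero_mem hC)
    rw [zero_sub, inner_neg_right] at this
    linarith
  have h0 : (inner ℝ (e - u) u : ℝ) = 0 := le_antisymm h1 h2
  have hcneg : ∀ c ∈ C, (inner ℝ (e - u) c : ℝ) ≤ 0 := by
    intro c hc
    have := hvar (c + u) (cone_add_mem hC hc huC)
    simpa using this
  have hvE : u - e ∈ coneE C := coneE_sub hC (cone_subset_E hC huC) he
  have hvC : u - e ∈ C := by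
    refine cone_selfdual hC hvE (fun c hc => ?_)
    have h := hcneg c hc
    have : (inner ℝ c (u - e) : ℝ) = -(inner ℝ (e - u) c : ℝ) := by
      rw [real_inner_comm, ← inner_neg_left, neg_sub]
    linarith [this ▸ neg_nonneg.mpr h]
  refine ⟨huC, hvC, ?_⟩
  have hre : (inner ℝ u (u - e) : ℝ) = 0 := by
    rw [real_inner_comm, ← neg_sub e u, inner_neg_left, h0, neg_zero]
  have him := cone_inner_im_zero hC huC hvC
  apply Complex.ext
  · rw [← re_inner_eq]; simpa using hre
  · simpa using him

/-- The projection onto `coneE C` gives the real part decomposition: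
`w - cproj (coneE C) w` lies in `i • coneE C`. -/
lemma coneE_proj (hC : IsHilbertCone C) (w : X) :
    cproj (coneE C) w ∈ coneE C ∧
      (-Complex.I) • (w - cproj (coneE C) w) ∈ coneE C := by
  obtain ⟨u, hu, v, hv, u', hu', v', hv', hdec, -, -⟩ := hC.2.2.2.2 w
  have hdE : u - v ∈ coneE C := subset_closure ⟨u, hu, v, hv, rfl⟩
  have hd'E : u' - v' ∈ coneE C := subset_closure ⟨u', hu', v', hv', rfl⟩
  have hrest : w - (u - v) = Complex.I • (u' - v') := by rw [hdec]; abel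
  have hproj : cproj (coneE C) w = u - v := by
    refine cproj_eq (coneE_nonempty hC) coneE_closed (coneE_convex hC) hdE (fun c hc => ?_)
    rw [hrest, real_inner_comm]
    have := coneE_inner_I_smul hC (coneE_sub hC hc hdE) hd'E
    rw [this]
  constructor
  · rw [hproj]; exact hdE
  · rw [hproj, hrest, smul_smul]
    norm_num [Complex.I_mul_I]
    exact hd'E

/-! ### The four continuous decomposition maps -/

noncomputable def dc1 (C : Set X) (w : X) : X := cproj C (cproj (coneE C) w)

noncomputable def dc2 (C : Set X) (w : X) : X := dc1 C w - cproj (coneE C) w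

noncomputable def dc3 (C : Set X) (w : X) : X :=
  cproj C ((-Complex.I) • (w - cproj (coneE C) w))

noncomputable def dc4 (C : Set X) (w : X) : X :=
  dc3 C w - (-Complex.I) • (w - cproj (coneE C) w)

lemma dc_mem (hC : IsHilbertCone C) (w : X) :
    dc1 C w ∈ C ∧ dc2 C w ∈ C ∧ dc3 C w ∈ C ∧ dc4 C w ∈ C := by
  obtain ⟨h1, h2⟩ := coneE_proj hC w
  obtain ⟨a1, a2, -⟩ := cone_part hC h1
  obtain ⟨b1, b2, -⟩ := cone_part hC h2
  exact ⟨a1, a2, b1, b2⟩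

lemma dc_inner1 (hC : IsHilbertCone C) (w : X) : (inner ℂ (dc1 C w) (dc2 C w) : ℂ) = 0 :=
  (cone_part hC (coneE_proj hC w).1).2.2

lemma dc_inner2 (hC : IsHilbertCone C) (w : X) : (inner ℂ (dc3 C w) (dc4 C w) : ℂ) = 0 :=
  (cone_part hC (coneE_proj hC w).2).2.2

lemma dc_eq (hC : IsHilbertCone C) (w : X) :
    w = dc1 C w - dc2 C w + Complex.I • (dc3 C w - dc4 C w) := by
  have e1 : dc1 C w - dc2 C w = cproj (coneE C) w := by rw [dc2]; abel
  have e2 : dc3 C w - dc4 C w = (-Complex.I) • (w - cproj (coneE C) w) := by rw [dc4]; abel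
  rw [e1, e2, smul_smul]
  norm_num [Complex.I_mul_I]

lemma dc_continuous (hC : IsHilbertCone C) :
    Continuous (dc1 C) ∧ Continuous (dc2 C) ∧ Continuous (dc3 C) ∧ Continuous (dc4 C) := by
  have hne : C.Nonempty := ⟨0, cone_zero_mem hC⟩
  have hcC := cproj_continuous hne hC.1 hC.2.1
  have hcE := cproj_continuous (coneE_nonempty hC) coneE_closed (coneE_convex hC)
  have h1 : Continuous (dc1 C) := hcC.comp hcE
  have h2 : Continuous (dc2 C) := h1.sub hcE
  have haux : Continuous fun w : X => (-Complex.I) • (w - cproj (coneE C) w) :=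
    (continuous_id.sub hcE).const_smul _
  have h3 : Continuous (dc3 C) := hcC.comp haux
  exact ⟨h1, h2, h3, h3.sub haux⟩

lemma dc_norm (hC : IsHilbertCone C) (w : X) :
    ‖dc1 C w‖ ≤ 4 * ‖w‖ ∧ ‖dc2 C w‖ ≤ 4 * ‖w‖ ∧ ‖dc3 C w‖ ≤ 4 * ‖w‖ ∧
      ‖dc4 C w‖ ≤ 4 * ‖w‖ := by
  have hne : C.Nonempty := ⟨0, cone_zero_mem hC⟩
  have hnC : ∀ y : X, ‖cproj C y‖ ≤ ‖y‖ :=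
    cproj_norm_le hne hC.1 hC.2.1 (cone_zero_mem hC)
  have hnE : ∀ y : X, ‖cproj (coneE C) y‖ ≤ ‖y‖ :=
    cproj_norm_le (coneE_nonempty hC) coneE_closed (coneE_convex hC) (coneE_zero hC)
  have hw0 : (0:ℝ) ≤ ‖w‖ := norm_nonneg w
  have h1 : ‖dc1 C w‖ ≤ ‖w‖ := le_trans (hnC _) (hnE _)
  have haux : ‖(-Complex.I) • (w - cproj (coneE C) w)‖ ≤ 2 * ‖w‖ := by
    rw [norm_smul]
    simp only [norm_neg, Complex.norm_I, one_mul]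
    calc ‖w - cproj (coneE C) w‖ ≤ ‖w‖ + ‖cproj (coneE C) w‖ := norm_sub_le _ _
      _ ≤ 2 * ‖w‖ := by linarith [hnE w]
  have h3 : ‖dc3 C w‖ ≤ 2 * ‖w‖ := le_trans (hnC _) haux
  refine ⟨by linarith, ?_, by linarith, ?_⟩
  · calc ‖dc2 C w‖ ≤ ‖dc1 C w‖ + ‖cproj (coneE C) w‖ := norm_sub_le _ _
      _ ≤ 4 * ‖w‖ := by linarith [hnE w]
  · calc ‖dc4 C w‖ ≤ ‖dc3 C w‖ + ‖(-Complex.I) • (w - cproj (coneE C) w)‖ := norm_sub_le _ _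
      _ ≤ 4 * ‖w‖ := by linarith

end Cone


/-! ### The cone in `L²(M, μ; X)` -/
section LpSec

variable {M : Type*} [MeasurableSpace M] {μ : Measure M}
variable {X : Type*} [NormedAddCommGroup X] [InnerProductSpace ℂ X] [CompleteSpace X]
  [TopologicalSpace.SeparableSpace X]
variable {C : Set X}

/-- The generating set of the `L²` cone. -/
def genSet (μ : Measure M) (C : Set X) : Set (Lp X 2 μ) :=
  {G : Lp X 2 μ | ∃ φ ∈ C, ∃ f : Lp ℂ 2 μ,
    (∀ᵐ x ∂μ, (0 : ℂ) ≤ f x) ∧ (∀ᵐ x ∂μ, G x = f x • φ)}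

/-- The set of a.e. `C`-valued `L²` functions. -/
def coneA (μ : Measure M) (C : Set X) : Set (Lp X 2 μ) :=
  {F : Lp X 2 μ | ∀ᵐ x ∂μ, F x ∈ C}

/-- The `L²` Hilbert cone. -/
def coneK (μ : Measure M) (C : Set X) : Set (Lp X 2 μ) :=
  closure (conicalCombinations (genSet μ C))

lemma complex_nonneg_smul_mem (hC : IsHilbertCone C) {c : ℂ} (hc : 0 ≤ c) {φ : X}
    (hφ : φ ∈ C) : c • φ ∈ C := by
  obtain ⟨h1, h2⟩ := Complex.le_def.mp hc
  have hce : c = ((c.re : ℝ) : ℂ) := Complex.ext rfl (by simpa using h2.symm)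
  have hsm : ((c.re : ℝ) : ℂ) • φ = (c.re : ℝ) • φ := by
    rw [← Complex.coe_algebraMap, algebraMap_smul]
  rw [hce, hsm]
  exact hC.2.2.1 _ (by simpa using h1) φ hφ

lemma genSet_subset_A (hC : IsHilbertCone C) : genSet μ C ⊆ coneA μ C := by
  rintro G ⟨φ, hφ, f, hf0, hGrep⟩
  filter_upwards [hf0, hGrep] with x h1 h2
  rw [h2]
  exact complex_nonneg_smul_mem hC h1 hφ

lemma coneA_zero (hC : IsHilbertCone C) : (0 : Lp X 2 μ) ∈ coneA μ C := by
  filter_upwards [Lp.coeFn_zero X 2 μ] with x hx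
  rw [hx]
  exact cone_zero_mem hC

lemma coneA_add (hC : IsHilbertCone C) {F G : Lp X 2 μ} (hF : F ∈ coneA μ C)
    (hG : G ∈ coneA μ C) : F + G ∈ coneA μ C := by
  filter_upwards [hF, hG, Lp.coeFn_add F G] with x h1 h2 h3
  rw [h3]
  exact cone_add_mem hC h1 h2

lemma coneA_smul (hC : IsHilbertCone C) {c : ℝ} (hc : 0 ≤ c) {F : Lp X 2 μ}
    (hF : F ∈ coneA μ C) : c • F ∈ coneA μ C := by
  have hsm : c • F = (c : ℂ) • F := by rw [← Complex.coe_algebraMap, algebraMap_smul]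
  rw [hsm]
  filter_upwards [hF, Lp.coeFn_smul (c : ℂ) F] with x h1 h2
  rw [h2]
  show (c : ℂ) • (F : M → X) x ∈ C
  exact complex_nonneg_smul_mem hC (Complex.zero_le_real.mpr hc) h1

lemma coneA_closed (hC : IsHilbertCone C) : IsClosed (coneA μ C) := by
  refine IsSeqClosed.isClosed (fun F Flim hmem htend => ?_)
  have hfin : ∀ n, eLpNorm ((F n : M → X) - (Flim : M → X)) 2 μ ≠ ⊤ := fun n => by
    rw [← eLpNorm_congr_ae (Lp.coeFn_sub (F n) Flim)]
    exact (Lp.eLpNorm_lt_top _).ne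
  have hdist : ∀ n, (eLpNorm ((F n : M → X) - (Flim : M → X)) 2 μ).toReal
      = dist (F n) Flim := by
    intro n
    rw [dist_eq_norm, Lp.norm_def,
      eLpNorm_congr_ae (Lp.coeFn_sub (F n) Flim)]
  have h1 : Filter.Tendsto (fun n => eLpNorm ((F n : M → X) - (Flim : M → X)) 2 μ)
      Filter.atTop (nhds 0) := by
    rw [← ENNReal.tendsto_toReal_iff hfin (by simp)]
    simp only [ENNReal.toReal_zero]
    simp only [hdist]
    exact tendsto_iff_dist_tendsto_zero.mp htend
  have h2 := tendstoInMeasure_of_tendsto_eLpNorm (p := 2) (by norm_num)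
    (fun n => Lp.aestronglyMeasurable (F n)) (Lp.aestronglyMeasurable Flim) h1
  obtain ⟨ns, -, hae⟩ := h2.exists_seq_tendsto_ae
  have hall : ∀ᵐ x ∂μ, ∀ n, (F n) x ∈ C := ae_all_iff.mpr hmem
  filter_upwards [hae, hall] with x hx hxall
  exact hC.1.mem_of_tendsto hx (Filter.Eventually.of_forall fun i => hxall (ns i))

lemma coneK_subset_A (hC : IsHilbertCone C) : coneK μ C ⊆ coneA μ C :=
  closure_minimal
    (cc_subset (coneA_zero hC) (fun _ ha _ hb => coneA_add hC ha hb)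
      (fun _ hc _ hv => coneA_smul hC hc hv) (genSet_subset_A hC))
    (coneA_closed hC)

lemma innerA_nonneg (hC : IsHilbertCone C) {F G : Lp X 2 μ} (hF : F ∈ coneA μ C)
    (hG : G ∈ coneA μ C) : 0 ≤ (inner ℂ F G : ℂ) := by
  have hint := L2.integrable_inner (𝕜 := ℂ) F G
  rw [L2.inner_def, Complex.le_def]
  constructor
  · have hre := integral_re (μ := μ) hint
    simp only [RCLike.re_to_complex] at hre
    rw [Complex.zero_re, ← hre]
    apply integral_nonneg_of_ae
    filter_upwards [hF, hG] with x h1 h2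
    exact cone_inner_re_nonneg hC h1 h2
  · have him := integral_im (μ := μ) hint
    simp only [RCLike.im_to_complex] at him
    rw [Complex.zero_im, ← him]
    have hz : (fun x => (inner ℂ ((F : M → X) x) ((G : M → X) x) : ℂ).im) =ᵐ[μ] 0 := by
      filter_upwards [hF, hG] with x h1 h2
      exact cone_inner_im_zero hC h1 h2
    rw [integral_congr_ae hz]
    simp

lemma simple_toLp_mem (hC : IsHilbertCone C) (φ : SimpleFunc M X)
    (hrange : ∀ x, φ x ∈ C) (hm : MemLp ⇑φ 2 μ) :
    hm.toLp ⇑φ ∈ conicalCombinations (genSet μ C) := by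
  classical
  revert hrange hm
  refine SimpleFunc.induction (motive := fun f => (∀ x, f x ∈ C) → ∀ (hm : MemLp ⇑f 2 μ),
    hm.toLp ⇑f ∈ conicalCombinations (genSet μ C)) ?_ ?_ φ
  · intro c s hs hrange hm
    have hcoe : ⇑(SimpleFunc.piecewise s hs (SimpleFunc.const M c) (SimpleFunc.const M 0))
        = s.indicator (fun _ => c) := by
      funext x
      simp [SimpleFunc.coe_piecewise, Set.piecewise, Set.indicator_apply]
    by_cases hc0 : c = 0
    · have hzero : hm.toLp _ = (MemLp.zero : MemLp (0 : M → X) 2 μ).toLp 0 := by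
        rw [MemLp.toLp_eq_toLp_iff]
        rw [hcoe, hc0]
        exact Filter.Eventually.of_forall (fun x => by simp)
      rw [hzero, MemLp.toLp_zero]
      exact zero_mem_cc
    rcases Set.eq_empty_or_nonempty s with hse | ⟨x₀, hx₀⟩
    · have hzero : hm.toLp _ = (MemLp.zero : MemLp (0 : M → X) 2 μ).toLp 0 := by
        rw [MemLp.toLp_eq_toLp_iff]
        rw [hcoe, hse]
        exact Filter.Eventually.of_forall (fun x => by simp)
      rw [hzero, MemLp.toLp_zero]
      exact zero_mem_cc
    have hcC : c ∈ C := by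
      have := hrange x₀
      simpa [hcoe, Set.indicator_of_mem hx₀] using this
    have hμs : μ s ≠ ⊤ := by
      intro hμtop
      have h2 := hm.2
      rw [hcoe, eLpNorm_indicator_const hs (by norm_num) (by norm_num)] at h2
      rw [hμtop] at h2
      have hpos : (0:ℝ) < (1 / (2:ℝ≥0∞).toReal) := by norm_num [ENNReal.toReal_ofNat]
      rw [ENNReal.top_rpow_of_pos hpos, ENNReal.mul_top (by simpa using hc0)] at h2
      exact (lt_irrefl _ h2).elim
    apply mem_cc_of_mem
    refine ⟨c, hcC, indicatorConstLp 2 hs hμs (1 : ℂ), ?_, ?_⟩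
    · filter_upwards [indicatorConstLp_coeFn (p := 2) (hs := hs) (hμs := hμs) (c := (1:ℂ))]
        with x hx
      rw [hx]
      by_cases hxs : x ∈ s
      · simp [Set.indicator_of_mem hxs]
      · simp [Set.indicator_of_notMem hxs]
    · filter_upwards [MemLp.coeFn_toLp hm,
        indicatorConstLp_coeFn (p := 2) (hs := hs) (hμs := hμs) (c := (1:ℂ))] with x h1 h2
      rw [h1, h2, hcoe]
      by_cases hxs : x ∈ s
      · simp [Set.indicator_of_mem hxs]
      · simp [Set.indicator_of_notMem hxs]
  · intro f g hdisj ihf ihg hrange hm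
    have hfg : ⇑(f + g) = ⇑f + ⇑g := SimpleFunc.coe_add f g
    have hm' : MemLp (⇑f + ⇑g) 2 μ := by rwa [hfg] at hm
    have hfr : ∀ x, f x ∈ C := by
      intro x
      by_cases hx : f x = 0
      · rw [hx]; exact cone_zero_mem hC
      · have hgx : g x = 0 := by
          by_contra hgx
          exact (Set.disjoint_left.mp hdisj hx) hgx
        have := hrange x
        rw [hfg] at this
        simpa [Pi.add_apply, hgx] using this
    have hgr : ∀ x, g x ∈ C := by
      intro x
      by_cases hx : g x = 0
      · rw [hx]; exact cone_zero_mem hC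
      · have hfx : f x = 0 := by
          by_contra hfx
          exact (Set.disjoint_left.mp hdisj hfx) hx
        have := hrange x
        rw [hfg] at this
        simpa [Pi.add_apply, hfx] using this
    have hmf : MemLp ⇑f 2 μ := by
      refine MemLp.of_le hm' f.aestronglyMeasurable (Filter.Eventually.of_forall fun x => ?_)
      by_cases hx : f x = 0
      · simp [hx]
      · have hgx : g x = 0 := by
          by_contra hgx
          exact (Set.disjoint_left.mp hdisj hx) hgx
        simp [Pi.add_apply, hgx]
    have hmg : MemLp ⇑g 2 μ := by
      refine MemLp.of_le hm' g.aestronglyMeasurable (Filter.Eventually.of_forall fun x => ?_)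
      by_cases hx : g x = 0
      · simp [hx]
      · have hfx : f x = 0 := by
          by_contra hfx
          exact (Set.disjoint_left.mp hdisj hfx) hx
        simp [Pi.add_apply, hfx]
    have hsplit : hm.toLp ⇑(f + g) = hmf.toLp ⇑f + hmg.toLp ⇑g := by
      have h1 : hm.toLp ⇑(f + g) = (hmf.add hmg).toLp (⇑f + ⇑g) :=
        (MemLp.toLp_eq_toLp_iff _ _).mpr (by rw [hfg])
      rw [h1, MemLp.toLp_add]
    rw [hsplit]
    exact add_mem_cc (ihf hfr hmf) (ihg hgr hmg)

lemma coneA_subset_K (hC : IsHilbertCone C) : coneA μ C ⊆ coneK μ C := by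
  intro F hF
  borelize X
  haveI : SecondCountableTopology X := UniformSpace.secondCountable_of_separable X
  set g := (Lp.aestronglyMeasurable F).mk ⇑F with hgdef
  have hgsm : StronglyMeasurable g := (Lp.aestronglyMeasurable F).stronglyMeasurable_mk
  have hFg : ⇑F =ᵐ[μ] g := (Lp.aestronglyMeasurable F).ae_eq_mk
  have hgmeas : Measurable g := hgsm.measurable
  have hgC : ∀ᵐ x ∂μ, g x ∈ closure C := by
    rw [hC.1.closure_eq]
    filter_upwards [hF, hFg] with x h1 h2
    rw [← h2]
    exact h1
  have hgmem : MemLp g 2 μ := (Lp.memLp F).ae_eq hFg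
  have h0C : (0 : X) ∈ C := cone_zero_mem hC
  set G : ℕ → SimpleFunc M X := fun n => SimpleFunc.approxOn g hgmeas C 0 h0C n with hGdef
  have hGmem : ∀ n, MemLp ⇑(G n) 2 μ := fun n =>
    SimpleFunc.memLp_approxOn hgmeas hgmem h0C (by simpa using (MemLp.zero : MemLp (0 : M → X) 2 μ)) n
  have hGrange : ∀ n x, (G n) x ∈ C := fun n x => SimpleFunc.approxOn_mem hgmeas h0C n x
  have htend := SimpleFunc.tendsto_approxOn_Lp_eLpNorm hgmeas h0C (p := 2) (by norm_num)
    hgC (by simpa using hgmem.2)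
  have htendLp : Filter.Tendsto (fun n => (hGmem n).toLp ⇑(G n)) Filter.atTop (nhds F) := by
    rw [tendsto_iff_dist_tendsto_zero]
    have hfin : ∀ n, eLpNorm (⇑(G n) - g) 2 μ ≠ ⊤ := fun n => ((hGmem n).sub hgmem).2.ne
    have hdist : ∀ n, dist ((hGmem n).toLp ⇑(G n)) F = (eLpNorm (⇑(G n) - g) 2 μ).toReal := by
      intro n
      rw [dist_eq_norm, ← Lp.toLp_coeFn F (Lp.memLp F), ← MemLp.toLp_sub (hGmem n) (Lp.memLp F),
        Lp.norm_toLp]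
      exact congrArg ENNReal.toReal (eLpNorm_congr_ae (by
        filter_upwards [hFg] with x hx
        simp [hx]))
    simp only [hdist]
    rw [← ENNReal.tendsto_toReal_iff hfin (by simp)] at htend
    simpa using htend
  exact mem_closure_of_tendsto htendLp
    (Filter.Eventually.of_forall fun n => simple_toLp_mem hC (G n) (hGrange n) (hGmem n))

lemma decompLp (hC : IsHilbertCone C) (W : Lp X 2 μ) :
    ∃ U V U' V' : Lp X 2 μ, U ∈ coneA μ C ∧ V ∈ coneA μ C ∧ U' ∈ coneA μ C ∧
      V' ∈ coneA μ C ∧ W = U - V + Complex.I • (U' - V') ∧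
      (inner ℂ U V : ℂ) = 0 ∧ (inner ℂ U' V' : ℂ) = 0 := by
  set g := (Lp.aestronglyMeasurable W).mk ⇑W with hgdef
  have hgsm : StronglyMeasurable g := (Lp.aestronglyMeasurable W).stronglyMeasurable_mk
  have hWg : ⇑W =ᵐ[μ] g := (Lp.aestronglyMeasurable W).ae_eq_mk
  have hgmem : MemLp g 2 μ := (Lp.memLp W).ae_eq hWg
  obtain ⟨c1, c2, c3, c4⟩ := dc_continuous hC (X := X)
  have mem1 : MemLp (fun x => dc1 C (g x)) 2 μ :=
    MemLp.of_le_mul hgmem (c1.comp_stronglyMeasurable hgsm).aestronglyMeasurable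
      (Filter.Eventually.of_forall fun x => (dc_norm hC (g x)).1)
  have mem2 : MemLp (fun x => dc2 C (g x)) 2 μ :=
    MemLp.of_le_mul hgmem (c2.comp_stronglyMeasurable hgsm).aestronglyMeasurable
      (Filter.Eventually.of_forall fun x => (dc_norm hC (g x)).2.1)
  have mem3 : MemLp (fun x => dc3 C (g x)) 2 μ :=
    MemLp.of_le_mul hgmem (c3.comp_stronglyMeasurable hgsm).aestronglyMeasurable
      (Filter.Eventually.of_forall fun x => (dc_norm hC (g x)).2.2.1)
  have mem4 : MemLp (fun x => dc4 C (g x)) 2 μ :=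
    MemLp.of_le_mul hgmem (c4.comp_stronglyMeasurable hgsm).aestronglyMeasurable
      (Filter.Eventually.of_forall fun x => (dc_norm hC (g x)).2.2.2)
  refine ⟨mem1.toLp _, mem2.toLp _, mem3.toLp _, mem4.toLp _, ?_, ?_, ?_, ?_, ?_, ?_, ?_⟩
  · filter_upwards [mem1.coeFn_toLp] with x hx
    rw [hx]; exact (dc_mem hC (g x)).1
  · filter_upwards [mem2.coeFn_toLp] with x hx
    rw [hx]; exact (dc_mem hC (g x)).2.1
  · filter_upwards [mem3.coeFn_toLp] with x hx
    rw [hx]; exact (dc_mem hC (g x)).2.2.1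
  · filter_upwards [mem4.coeFn_toLp] with x hx
    rw [hx]; exact (dc_mem hC (g x)).2.2.2
  · apply Lp.ext
    filter_upwards [hWg, mem1.coeFn_toLp, mem2.coeFn_toLp, mem3.coeFn_toLp, mem4.coeFn_toLp,
      Lp.coeFn_sub (mem1.toLp _) (mem2.toLp _), Lp.coeFn_sub (mem3.toLp _) (mem4.toLp _),
      Lp.coeFn_smul Complex.I (mem3.toLp _ - mem4.toLp _),
      Lp.coeFn_add (mem1.toLp _ - mem2.toLp _) (Complex.I • (mem3.toLp _ - mem4.toLp _))]
      with x hW h1 h2 h3 h4 hsub1 hsub2 hsm hadd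
    rw [hW, hadd, Pi.add_apply, hsub1, hsm, Pi.smul_apply, hsub2, Pi.sub_apply, Pi.sub_apply,
      h1, h2, h3, h4]
    exact dc_eq hC (g x)
  · rw [L2.inner_def]
    have hz : (fun x => (inner ℂ ((mem1.toLp _ : Lp X 2 μ) x) ((mem2.toLp _ : Lp X 2 μ) x) : ℂ))
        =ᵐ[μ] 0 := by
      filter_upwards [mem1.coeFn_toLp, mem2.coeFn_toLp] with x h1 h2
      rw [h1, h2]
      simpa using dc_inner1 hC (g x)
    rw [integral_congr_ae hz]
    simp
  · rw [L2.inner_def]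
    have hz : (fun x => (inner ℂ ((mem3.toLp _ : Lp X 2 μ) x) ((mem4.toLp _ : Lp X 2 μ) x) : ℂ))
        =ᵐ[μ] 0 := by
      filter_upwards [mem3.coeFn_toLp, mem4.coeFn_toLp] with x h1 h2
      rw [h1, h2]
      simpa using dc_inner2 hC (g x)
    rw [integral_congr_ae hz]
    simp

lemma nonneg_closed : IsClosed {z : ℂ | 0 ≤ z} := by
  have : {z : ℂ | 0 ≤ z} = {z : ℂ | 0 ≤ z.re} ∩ {z : ℂ | 0 = z.im} := by
    ext z; simp [Complex.le_def]
  rw [this]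
  exact (isClosed_le continuous_const Complex.continuous_re).inter
    (isClosed_eq continuous_const Complex.continuous_im)

lemma dual_nonneg (hC : IsHilbertCone C) (A : Lp X 2 μ →L[ℂ] Lp X 2 μ)
    (h : ∀ φ ∈ C, ∀ ψ ∈ C, ∀ f g : Lp ℂ 2 μ,
      (∀ᵐ x ∂μ, (0 : ℂ) ≤ f x) → (∀ᵐ x ∂μ, (0 : ℂ) ≤ g x) →
      ∀ F G : Lp X 2 μ, (∀ᵐ x ∂μ, F x = f x • φ) → (∀ᵐ x ∂μ, G x = g x • ψ) →
        (0 : ℂ) ≤ (inner ℂ F (A G) : ℂ)) :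
    ∀ G ∈ coneK μ C, ∀ F ∈ coneK μ C, (0 : ℂ) ≤ (inner ℂ F (A G) : ℂ) := by
  have step1 : ∀ G ∈ genSet μ C, ∀ F ∈ coneK μ C, (0 : ℂ) ≤ (inner ℂ F (A G) : ℂ) := by
    rintro G ⟨ψ, hψ, gfun, hg0, hGrep⟩ F hF
    have hTclosed : IsClosed {F' : Lp X 2 μ | 0 ≤ (inner ℂ F' (A G) : ℂ)} :=
      nonneg_closed.preimage (Continuous.inner continuous_id continuous_const)
    refine closure_minimal (cc_subset ?_ ?_ ?_ ?_) hTclosed hF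
    · show (0:ℂ) ≤ (inner ℂ (0 : Lp X 2 μ) (A G) : ℂ)
      rw [inner_zero_left]
    · intro a ha b hb
      show (0:ℂ) ≤ (inner ℂ (a + b) (A G) : ℂ)
      rw [inner_add_left]
      exact add_nonneg ha hb
    · intro c hc v hv
      show (0:ℂ) ≤ (inner ℂ (c • v) (A G) : ℂ)
      have hsm : c • v = (c : ℂ) • v := by rw [← Complex.coe_algebraMap, algebraMap_smul]
      rw [hsm, inner_smul_left, Complex.conj_ofReal]
      exact mul_nonneg (Complex.zero_le_real.mpr hc) hv
    · rintro F' ⟨φ, hφ, f, hf0, hFrep⟩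
      exact h φ hφ ψ hψ f gfun hf0 hg0 F' G hFrep hGrep
  intro G hG F hF
  have hTclosed : IsClosed {G' : Lp X 2 μ | 0 ≤ (inner ℂ F (A G') : ℂ)} :=
    nonneg_closed.preimage (Continuous.inner continuous_const A.continuous)
  refine closure_minimal (cc_subset ?_ ?_ ?_ ?_) hTclosed hG
  · show (0:ℂ) ≤ (inner ℂ F (A 0) : ℂ)
    rw [map_zero, inner_zero_right]
  · intro a ha b hb
    show (0:ℂ) ≤ (inner ℂ F (A (a + b)) : ℂ)
    rw [map_add, inner_add_right]
    exact add_nonneg ha hb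
  · intro c hc v hv
    show (0:ℂ) ≤ (inner ℂ F (A (c • v)) : ℂ)
    have hsm : c • v = (c : ℂ) • v := by rw [← Complex.coe_algebraMap, algebraMap_smul]
    rw [hsm, A.map_smul, inner_smul_right]
    exact mul_nonneg (Complex.zero_le_real.mpr hc) hv
  · intro G' hG'
    exact step1 G' hG' F hF

end LpSec

end HilbertConeAux

open HilbertConeAux in
theorem posPreserving_of_pos_on_products
    {M : Type*} [MeasurableSpace M] (μ : Measure M) [SigmaFinite μ]
    [TopologicalSpace.SeparableSpace (Lp ℂ 2 μ)]
    {X : Type*} [NormedAddCommGroup X] [InnerProductSpace ℂ X] [CompleteSpace X]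
    [TopologicalSpace.SeparableSpace X]
    (C : Set X) (hC : IsHilbertCone C)
    (A : Lp X 2 μ →L[ℂ] Lp X 2 μ)
    (h : ∀ φ ∈ C, ∀ ψ ∈ C, ∀ f g : Lp ℂ 2 μ,
      (∀ᵐ x ∂μ, (0 : ℂ) ≤ f x) → (∀ᵐ x ∂μ, (0 : ℂ) ≤ g x) →
      ∀ F G : Lp X 2 μ, (∀ᵐ x ∂μ, F x = f x • φ) → (∀ᵐ x ∂μ, G x = g x • ψ) →
        (0 : ℂ) ≤ (inner ℂ F (A G) : ℂ)) :
    ∀ F ∈ closure (conicalCombinations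
      {G : Lp X 2 μ | ∃ φ ∈ C, ∃ f : Lp ℂ 2 μ,
        (∀ᵐ x ∂μ, (0 : ℂ) ≤ f x) ∧ (∀ᵐ x ∂μ, G x = f x • φ)}),
      A F ∈ closure (conicalCombinations
        {G : Lp X 2 μ | ∃ φ ∈ C, ∃ f : Lp ℂ 2 μ,
          (∀ᵐ x ∂μ, (0 : ℂ) ≤ f x) ∧ (∀ᵐ x ∂μ, G x = f x • φ)}) := by
  intro F hF
  show A F ∈ coneK μ C
  have hF' : F ∈ coneK μ C := hF
  obtain ⟨U, V, U', V', hUA, hVA, hU'A, hV'A, heq, hUV, hU'V'⟩ := decompLp hC (A F)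
  have hpair : ∀ G ∈ coneK μ C, (0:ℂ) ≤ (inner ℂ G (A F) : ℂ) :=
    fun G hG => dual_nonneg hC A h F hF' G hG
  -- Step 1 : V = 0
  have hVU : (inner ℂ V U : ℂ) = 0 := by rw [← inner_conj_symm, hUV, map_zero]
  have imVU' : (inner ℂ V U' : ℂ).im = 0 :=
    (Complex.le_def.mp (innerA_nonneg hC hVA hU'A)).2.symm
  have imVV' : (inner ℂ V V' : ℂ).im = 0 :=
    (Complex.le_def.mp (innerA_nonneg hC hVA hV'A)).2.symm
  have h1 := hpair V (coneA_subset_K hC hVA)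
  rw [heq, inner_add_right, inner_sub_right, inner_smul_right, inner_sub_right, hVU,
    zero_sub] at h1
  obtain ⟨h1re, h1im⟩ := Complex.le_def.mp h1
  have hVre : RCLike.re (inner ℂ V V : ℂ) ≤ 0 := by
    rw [RCLike.re_to_complex]
    simp only [Complex.add_re, Complex.neg_re, Complex.mul_re, Complex.I_re, Complex.I_im,
      Complex.sub_im, Complex.sub_re, Complex.zero_re, imVU', imVV'] at h1re
    linarith
  have hV0 : V = 0 := re_inner_self_nonpos.mp hVre
  rw [hV0, sub_zero] at heq
  -- Step 2 : U' = 0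
  have imU'U : (inner ℂ U' U : ℂ).im = 0 :=
    (Complex.le_def.mp (innerA_nonneg hC hU'A hUA)).2.symm
  have h2 := hpair U' (coneA_subset_K hC hU'A)
  rw [heq, inner_add_right, inner_smul_right, inner_sub_right, hU'V', sub_zero] at h2
  obtain ⟨h2re, h2im⟩ := Complex.le_def.mp h2
  have hU're : RCLike.re (inner ℂ U' U' : ℂ) ≤ 0 := by
    rw [RCLike.re_to_complex]
    simp only [Complex.add_im, Complex.mul_im, Complex.I_re, Complex.I_im, Complex.zero_im,
      imU'U] at h2im
    linarith
  have hU'0 : U' = 0 := re_inner_self_nonpos.mp hU're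
  rw [hU'0, zero_sub] at heq
  -- Step 3 : V' = 0
  have imV'U : (inner ℂ V' U : ℂ).im = 0 :=
    (Complex.le_def.mp (innerA_nonneg hC hV'A hUA)).2.symm
  have h3 := hpair V' (coneA_subset_K hC hV'A)
  rw [heq, inner_add_right, inner_smul_right, inner_neg_right] at h3
  obtain ⟨h3re, h3im⟩ := Complex.le_def.mp h3
  have hV're : RCLike.re (inner ℂ V' V' : ℂ) ≤ 0 := by
    rw [RCLike.re_to_complex]
    simp only [Complex.add_im, Complex.mul_im, Complex.I_re, Complex.I_im, Complex.zero_im,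
      Complex.neg_re, Complex.neg_im, imV'U] at h3im
    linarith
  have hV'0 : V' = 0 := re_inner_self_nonpos.mp hV're
  rw [hV'0, neg_zero, smul_zero, add_zero] at heq
  rw [heq]
  exact coneA_subset_K hC hUA
end

section
/- Let X be a complex Hilbert space, C a Hilbert cone in X, and P an orthogonal projection on X such that P(C) ⊆ C. Then P(C) = C ∩ ran(P), and P(C) is a Hilbert cone in the complex Hilbert space ran(P) (the closed range of P). -/
open scoped ComplexOrder

section Aux

variable {X : Type*} [NormedAddCommGroup X] [InnerProductSpace ℂ X]

/-- The inner product of two cone elements is real. -/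
lemma hc_inner_im_zero {C : Set X}
    (hpos : ∀ u ∈ C, ∀ v ∈ C, (0 : ℂ) ≤ (inner ℂ u v : ℂ))
    {u v : X} (hu : u ∈ C) (hv : v ∈ C) : (inner ℂ u v : ℂ).im = 0 :=
  ((Complex.le_def.mp (hpos u hu v hv)).2).symm

/-- A difference of two cone elements admits an orthogonal decomposition `a - b`. -/
lemma hc_real_decomp {C : Set X} (hC : IsHilbertCone C) {p q : X}
    (hp : p ∈ C) (hq : q ∈ C) :
    ∃ a ∈ C, ∃ b ∈ C, p - q = a - b ∧ (inner ℂ a b : ℂ) = 0 := by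
  obtain ⟨hcl, hconv, hcone, hpos, hdec⟩ := hC
  obtain ⟨a, ha, b, hb, a', ha', b', hb', heq, hab, hab'⟩ := hdec (p - q)
  have him : ∀ x ∈ C, ∀ y ∈ C, (inner ℂ x y : ℂ).im = 0 := fun x hx y hy =>
    hc_inner_im_zero hpos hx hy
  have h1 : (inner ℂ (p - q) (a' - b') : ℂ).im = 0 := by
    simp [inner_sub_left, inner_sub_right, him p hp a' ha', him p hp b' hb',
      him q hq a' ha', him q hq b' hb']
  have h2 : (inner ℂ (p - q) (a' - b') : ℂ)
      = inner ℂ (a - b) (a' - b')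
        + (starRingEnd ℂ Complex.I) * inner ℂ (a' - b') (a' - b') := by
    rw [heq, inner_add_left, inner_smul_left]
  have h3 : (inner ℂ (a - b) (a' - b') : ℂ).im = 0 := by
    simp [inner_sub_left, inner_sub_right, him a ha a' ha', him a ha b' hb',
      him b hb a' ha', him b hb b' hb']
  have h4 : (inner ℂ (a' - b') (a' - b') : ℂ) = ((‖a' - b'‖ : ℂ)) ^ 2 :=
    inner_self_eq_norm_sq_to_K _
  have h5 : (0 : ℝ) = -(‖a' - b'‖ ^ 2) := by
    have h6 := congrArg Complex.im h2
    rw [h1] at h6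
    simpa [h4, h3, Complex.add_im, Complex.mul_im, ← Complex.ofReal_pow, him a ha a' ha',
      him a ha b' hb', him b hb a' ha', him b hb b' hb'] using h6
  have ht0 : a' - b' = 0 := by
    have : ‖a' - b'‖ = 0 := by nlinarith [norm_nonneg (a' - b')]
    simpa [norm_eq_zero] using this
  exact ⟨a, ha, b, hb, by rw [heq, ht0]; simp, hab⟩

end Aux

theorem proj_cone_isHilbertCone
    {X : Type*} [NormedAddCommGroup X] [InnerProductSpace ℂ X] [CompleteSpace X]
    (C : Set X) (hC : IsHilbertCone C) (P : X →L[ℂ] X)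
    (hidem : P ∘L P = P) (hsa : IsSelfAdjoint P) (hP : ∀ u ∈ C, P u ∈ C) :
    P '' C = C ∩ Set.range P ∧
      IsHilbertCone {v : LinearMap.range (P : X →ₗ[ℂ] X) | (v : X) ∈ C} := by
  obtain ⟨hcl, hconv, hcone, hpos, hdec⟩ := hC
  have hPP : ∀ x, P (P x) = P x := by
    intro x
    have := ContinuousLinearMap.ext_iff.mp hidem x
    simpa using this
  have hsym : ∀ x y : X, (inner ℂ (P x) y : ℂ) = inner ℂ x (P y) := fun x y =>
    hsa.isSymmetric x y
  -- key: an element of the range which is a difference of cone elements has an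
  -- orthogonal decomposition with both parts fixed by `P`.
  have key : ∀ p q : X, p ∈ C → q ∈ C → P p = p → P q = q →
      ∃ a b : X, a ∈ C ∧ b ∈ C ∧ P a = a ∧ P b = b ∧ p - q = a - b ∧
        (inner ℂ a b : ℂ) = 0 := by
    intro p q hp hq hfp hfq
    obtain ⟨a, ha, b, hb, hx, hab⟩ :=
      hc_real_decomp ⟨hcl, hconv, hcone, hpos, hdec⟩ hp hq
    have hPx : P a - P b = a - b := by
      have h : P (p - q) = p - q := by rw [map_sub, hfp, hfq]
      rw [hx, map_sub] at h
      exact h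
    have hd : a - P a = b - P b := by
      have h2 : a - P a - (b - P b) = 0 := by
        have : a - b - (P a - P b) = 0 := by rw [hPx]; abel
        calc a - P a - (b - P b) = a - b - (P a - P b) := by abel
        _ = 0 := this
      exact sub_eq_zero.mp h2
    -- ⟨a, P b⟩ = ⟨P a, b⟩ = ⟨P a, P b⟩
    have e1 : (inner ℂ a (P b) : ℂ) = inner ℂ (P a) (P b) := by
      rw [hsym a (P b), hPP b]
    have e2 : (inner ℂ (P a) b : ℂ) = inner ℂ (P a) (P b) := by
      nth_rewrite 1 [← hPP a]
      exact hsym (P a) b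
    have hdd : (inner ℂ (a - P a) (a - P a) : ℂ) = -(inner ℂ (P a) (P b) : ℂ) := by
      nth_rewrite 2 [hd]
      rw [inner_sub_left, inner_sub_right, inner_sub_right, e1, e2, hab]
      ring
    have hz : (0 : ℂ) ≤ inner ℂ (P a) (P b) := hpos _ (hP a ha) _ (hP b hb)
    have hre1 : 0 ≤ (inner ℂ (a - P a) (a - P a) : ℂ).re :=
      inner_self_nonneg (𝕜 := ℂ) (x := a - P a)
    have him1 : (inner ℂ (a - P a) (a - P a) : ℂ).im = 0 :=
      inner_self_im (𝕜 := ℂ) (a - P a)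
    have hzre : 0 ≤ (inner ℂ (P a) (P b) : ℂ).re := (Complex.le_def.mp hz).1
    have hizm : (inner ℂ (P a) (P b) : ℂ).im = 0 := ((Complex.le_def.mp hz).2).symm
    have hd0 : a - P a = 0 := by
      rw [← inner_self_eq_zero (𝕜 := ℂ)]
      have h1 := congrArg Complex.re hdd
      have h2 := congrArg Complex.im hdd
      simp only [Complex.neg_re, Complex.neg_im] at h1 h2
      apply Complex.ext
      · simp only [Complex.zero_re]; linarith
      · simp only [Complex.zero_im]; linarith
    have hfa : P a = a := (sub_eq_zero.mp hd0).symm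
    have hfb : P b = b := by
      have : b - P b = 0 := by rw [← hd, hd0]
      exact (sub_eq_zero.mp this).symm
    exact ⟨a, b, ha, hb, hfa, hfb, hx, hab⟩
  constructor
  · -- P '' C = C ∩ Set.range P
    ext x
    constructor
    · rintro ⟨y, hy, rfl⟩
      exact ⟨hP y hy, y, rfl⟩
    · rintro ⟨hxC, y, rfl⟩
      exact ⟨P y, hxC, hPP y⟩
  · -- Hilbert cone in the range
    refine ⟨?_, ?_, ?_, ?_, ?_⟩
    · exact hcl.preimage continuous_subtype_val
    · intro x hx y hy s t hs ht hst
      show ((s • x + t • y : LinearMap.range (P : X →ₗ[ℂ] X)) : X) ∈ C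
      have : ((s • x + t • y : LinearMap.range (P : X →ₗ[ℂ] X)) : X) = s • (x : X) + t • (y : X) := by
        push_cast
        ring_nf
      rw [this]
      exact hconv hx hy hs ht hst
    · intro c hc u hu
      show ((c • u : LinearMap.range (P : X →ₗ[ℂ] X)) : X) ∈ C
      have : ((c • u : LinearMap.range (P : X →ₗ[ℂ] X)) : X) = c • (u : X) := by push_cast; rfl
      rw [this]
      exact hcone c hc _ hu
    · intro u hu v hv
      rw [Submodule.coe_inner]
      exact hpos _ hu _ hv
    · intro w
      obtain ⟨y, hy⟩ := w.2
      have hfix : P (w : X) = (w : X) := by rw [← hy]; exact hPP y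
      obtain ⟨u, hu, v, hv, u', hu', v', hv', heq, _, _⟩ := hdec (w : X)
      have hw : (w : X) = (P u - P v) + Complex.I • (P u' - P v') := by
        conv_lhs => rw [← hfix, heq]
        rw [map_add, map_sub, map_smul, map_sub]
      obtain ⟨a, b, haC, hbC, hfa, hfb, hxab, hiab⟩ :=
        key (P u) (P v) (hP u hu) (hP v hv) (hPP u) (hPP v)
      obtain ⟨a', b', haC', hbC', hfa', hfb', hxab', hiab'⟩ :=
        key (P u') (P v') (hP u' hu') (hP v' hv') (hPP u') (hPP v')
      refine ⟨⟨a, LinearMap.mem_range.mpr ⟨a, hfa⟩⟩, haC,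
        ⟨b, LinearMap.mem_range.mpr ⟨b, hfb⟩⟩, hbC,
        ⟨a', LinearMap.mem_range.mpr ⟨a', hfa'⟩⟩, haC',
        ⟨b', LinearMap.mem_range.mpr ⟨b', hfb'⟩⟩, hbC', ?_, ?_, ?_⟩
      · apply Subtype.ext
        push_cast
        rw [hw, ← hxab, ← hxab']
      · rw [Submodule.coe_inner]; exact hiab
      · rw [Submodule.coe_inner]; exact hiab'
end

section
/- Let X be a complex Hilbert space, C a Hilbert cone in X, S a bounded self-adjoint operator on X, and let V₁, V₂ be unitary operators on X with V₁·S = S·V₁. Suppose ψ_A ∈ C \ {0}, ψ_B ∈ X is strictly positive with respect to C, and S(V₁V₂ψ_A) = α·V₁V₂ψ_A and S(V₂ψ_B) = β·V₂ψ_B for scalars α, β ∈ ℂ. Then S(V₂ψ_A) = α·V₂ψ_A, ⟨V₂ψ_A, V₂ψ_B⟩ = ⟨ψ_A, ψ_B⟩ > 0, and α = β. -/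
open scoped ComplexOrder

theorem overlap_with_unitaries
    {X : Type*} [NormedAddCommGroup X] [InnerProductSpace ℂ X] [CompleteSpace X]
    (C : Set X) (hC : IsHilbertCone C) (S : X →L[ℂ] X) (hS : IsSelfAdjoint S)
    (V₁ V₂ : X →L[ℂ] X) (hV₁ : V₁ ∈ unitary (X →L[ℂ] X)) (hV₂ : V₂ ∈ unitary (X →L[ℂ] X))
    (hcomm : V₁ ∘L S = S ∘L V₁)
    (ψA ψB : X) (hψA : ψA ∈ C) (hψAne : ψA ≠ 0) (hψB : StrictlyPos C ψB)
    (α β : ℂ) (hα : S (V₁ (V₂ ψA)) = α • V₁ (V₂ ψA)) (hβ : S (V₂ ψB) = β • V₂ ψB) :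
    S (V₂ ψA) = α • V₂ ψA ∧
      (inner ℂ (V₂ ψA) (V₂ ψB) : ℂ) = (inner ℂ ψA ψB : ℂ) ∧
      (0 : ℂ) < (inner ℂ ψA ψB : ℂ) ∧ α = β := by
  -- basic facts about unitaries
  have hV₁inj : Function.Injective V₁ := by
    intro x y hxy
    have h1 : (star V₁ * V₁) = 1 := hV₁.1
    have := congrArg (fun A : X →L[ℂ] X => A x) h1
    have := congrArg (fun A : X →L[ℂ] X => A y) h1
    simp only [ContinuousLinearMap.mul_apply, ContinuousLinearMap.one_apply] at *
    calc x = star V₁ (V₁ x) := by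
            have := congrArg (fun A : X →L[ℂ] X => A x) h1
            simpa [ContinuousLinearMap.mul_apply] using this.symm
      _ = star V₁ (V₁ y) := by rw [hxy]
      _ = y := by
            have := congrArg (fun A : X →L[ℂ] X => A y) h1
            simpa [ContinuousLinearMap.mul_apply] using this
  have hV₂iso : ∀ x y : X, (inner ℂ (V₂ x) (V₂ y) : ℂ) = inner ℂ x y := by
    intro x y
    have h1 : (star V₂ * V₂) = 1 := hV₂.1
    have hst : ContinuousLinearMap.adjoint V₂ (V₂ y) = y := by
      have := congrArg (fun A : X →L[ℂ] X => A y) h1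
      simpa [ContinuousLinearMap.mul_apply, ContinuousLinearMap.star_eq_adjoint] using this
    calc (inner ℂ (V₂ x) (V₂ y) : ℂ) = inner ℂ x (ContinuousLinearMap.adjoint V₂ (V₂ y)) := by
          rw [ContinuousLinearMap.adjoint_inner_right]
      _ = inner ℂ x y := by rw [hst]
  -- 1. eigenvector equation for V₂ ψA
  have h1 : S (V₂ ψA) = α • V₂ ψA := by
    apply hV₁inj
    have h1 : V₁ (S (V₂ ψA)) = S (V₁ (V₂ ψA)) := by
      have := congrArg (fun A : X →L[ℂ] X => A (V₂ ψA)) hcomm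
      simpa using this
    rw [h1, hα, map_smul]
  -- 2. inner product preserved
  have h2 : (inner ℂ (V₂ ψA) (V₂ ψB) : ℂ) = inner ℂ ψA ψB := hV₂iso ψA ψB
  -- 3. positivity
  have h3' : (0 : ℂ) < inner ℂ ψB ψA := hψB ψA hψA hψAne
  have h3 : (0 : ℂ) < (inner ℂ ψA ψB : ℂ) := by
    have him : (inner ℂ ψB ψA : ℂ).im = 0 := by
      rw [Complex.lt_def] at h3'; exact h3'.2.symm
    have heq : (inner ℂ ψA ψB : ℂ) = inner ℂ ψB ψA := by
      rw [← inner_conj_symm (𝕜 := ℂ) ψA ψB, Complex.conj_eq_iff_im.mpr him]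
    rw [heq]; exact h3'
  have hABne : (inner ℂ ψA ψB : ℂ) ≠ 0 := ne_of_gt h3
  -- α is real
  have hvne : V₁ (V₂ ψA) ≠ 0 := by
    intro h
    have h0 : V₂ ψA = 0 := hV₁inj (by simpa using h)
    have h4 := hV₂iso ψA ψA
    rw [h0] at h4
    simp only [inner_zero_left] at h4
    exact hψAne (inner_self_eq_zero.mp h4.symm)
  have hαreal : (starRingEnd ℂ) α = α := by
    set v := V₁ (V₂ ψA)
    have hs : (inner ℂ (S v) v : ℂ) = inner ℂ v (S v) := by
      rw [← ContinuousLinearMap.adjoint_inner_right, hS.adjoint_eq]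
    rw [hα, inner_smul_left, inner_smul_right] at hs
    have hvv : (inner ℂ v v : ℂ) ≠ 0 := by
      simpa [inner_self_eq_zero] using hvne
    exact mul_right_cancel₀ hvv hs
  -- α = β
  have hkey : (inner ℂ (S (V₂ ψA)) (V₂ ψB) : ℂ) = inner ℂ (V₂ ψA) (S (V₂ ψB)) := by
    rw [← ContinuousLinearMap.adjoint_inner_right, hS.adjoint_eq]
  rw [h1, hβ, inner_smul_left, inner_smul_right, h2, hαreal] at hkey
  have hαβ : α = β := mul_right_cancel₀ hABne hkey
  exact ⟨h1, h2, h3, hαβ⟩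
end

section
/- Under the standing assumptions, let A be a bounded linear operator on L²(M, μ; X) and let K : M × M → B(X) be a kernel for A in the following sense: for all φ, ψ ∈ X the function (q, q′) ↦ ⟨φ, K(q, q′)ψ⟩ is measurable; for every F ∈ L²(M, μ; X) and μ-a.e. q, the Bochner integral ∫ K(q, q′)F(q′) dμ(q′) exists and equals (A F)(q); and for all f, g ∈ L²(M, μ; ℂ) with f ≥ 0 and g ≥ 0 a.e. and all φ, ψ ∈ X, the function (q, q′) ↦ f(q)·g(q′)·⟨φ, K(q, q′)ψ⟩ is (μ ⊗ μ)-integrable. If A maps 𝒬 into 𝒬, then for (μ ⊗ μ)-a.e. (q, q′), the operator K(q, q′) maps C into C. -/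
open scoped ComplexOrder ENNReal
open MeasureTheory

lemma isClosed_nonneg_complex : IsClosed {z : ℂ | 0 ≤ z} := by
  have : {z : ℂ | 0 ≤ z} = Complex.re ⁻¹' Set.Ici 0 ∩ Complex.im ⁻¹' {0} := by
    ext z; simp [Complex.nonneg_iff, eq_comm]
  rw [this]
  exact (isClosed_Ici.preimage Complex.continuous_re).inter
    (isClosed_singleton.preimage Complex.continuous_im)

lemma integral_nonneg_complex {α : Type*} [MeasurableSpace α] {μ : Measure α}
    {ψ : α → ℂ} (hi : Integrable ψ μ) (h : ∀ᵐ x ∂μ, 0 ≤ ψ x) :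
    0 ≤ ∫ x, ψ x ∂μ := by
  rw [Complex.nonneg_iff]
  constructor
  · rw [← RCLike.re_to_complex, ← integral_re hi]
    apply integral_nonneg_of_ae
    filter_upwards [h] with x hx
    simpa [RCLike.re_to_complex] using (Complex.nonneg_iff.mp hx).1
  · rw [← RCLike.im_to_complex, ← integral_im hi]
    rw [integral_congr_ae (g := fun _ => (0:ℝ))]
    · simp
    · filter_upwards [h] with x hx
      simpa [RCLike.im_to_complex] using (Complex.nonneg_iff.mp hx).2.symm

lemma ae_nonneg_of_forall_setIntegral_nonneg_complex {α : Type*} [MeasurableSpace α]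
    {μ : Measure α} [SigmaFinite μ] {ψ : α → ℂ} (hi : Integrable ψ μ)
    (h : ∀ s : Set α, MeasurableSet s → μ s < ∞ → 0 ≤ ∫ x in s, ψ x ∂μ) :
    ∀ᵐ x ∂μ, 0 ≤ ψ x := by
  have hre : 0 ≤ᵐ[μ] fun x => (ψ x).re := by
    refine ae_nonneg_of_forall_setIntegral_nonneg hi.re ?_
    intro s hs hμs
    have h' := (h s hs hμs)
    rw [Complex.nonneg_iff] at h'
    rw [show (fun x => (ψ x).re) = fun x => RCLike.re (ψ x) from rfl,
      integral_re hi.integrableOn]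
    exact h'.1
  have him : (fun x => (ψ x).im) =ᵐ[μ] 0 := by
    refine ae_eq_zero_of_forall_setIntegral_eq_of_sigmaFinite
      (fun s _ _ => hi.im.integrableOn) ?_
    intro s hs hμs
    have h' := (h s hs hμs)
    rw [Complex.nonneg_iff] at h'
    rw [show (fun x => (ψ x).im) = fun x => RCLike.im (ψ x) from rfl,
      integral_im hi.integrableOn]
    exact h'.2.symm
  filter_upwards [hre, him] with x h1 h2
  rw [Complex.nonneg_iff]
  exact ⟨h1, (h2 : (ψ x).im = 0).symm⟩

lemma IsHilbertCone.mem_of_forall_inner_nonneg {X : Type*} [NormedAddCommGroup X]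
    [InnerProductSpace ℂ X] {C : Set X} (hC : IsHilbertCone C) {w : X}
    (h : ∀ v ∈ C, (0:ℂ) ≤ (inner ℂ v w : ℂ)) : w ∈ C := by
  obtain ⟨-, -, -, hpos, hdec⟩ := hC
  obtain ⟨u, hu, v, hv, u', hu', v', hv', hw, huv, huv'⟩ := hdec w
  have him : ∀ c ∈ C, (inner ℂ c u' : ℂ) = (inner ℂ c v' : ℂ) := by
    intro c hc
    have h0 := h c hc
    rw [hw] at h0
    have e : (inner ℂ c (u - v + Complex.I • (u' - v')) : ℂ)
        = ((inner ℂ c u : ℂ) - inner ℂ c v) + Complex.I * ((inner ℂ c u' : ℂ) - inner ℂ c v') := by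
      rw [inner_add_right, inner_sub_right, inner_smul_right, inner_sub_right]
    rw [e] at h0
    have h1 := (Complex.nonneg_iff.mp (hpos c hc u hu)).2
    have h2 := (Complex.nonneg_iff.mp (hpos c hc v hv)).2
    have h3 := (Complex.nonneg_iff.mp (hpos c hc u' hu')).2
    have h4 := (Complex.nonneg_iff.mp (hpos c hc v' hv')).2
    have h5 := (Complex.nonneg_iff.mp h0).2
    simp only [Complex.add_im, Complex.sub_im, Complex.mul_im, Complex.I_re, Complex.I_im,
      Complex.sub_re, zero_mul, one_mul, zero_add] at h5
    apply Complex.ext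
    · linarith
    · simp [← h3, ← h4]
  have hu'0 : u' = 0 := by
    have h1 := him u' hu'
    rw [huv'] at h1
    exact inner_self_eq_zero.mp h1
  have hv'0 : v' = 0 := by
    have h1 := him v' hv'
    rw [hu'0] at h1
    simp only [inner_zero_right] at h1
    exact inner_self_eq_zero.mp h1.symm
  have hv0 : v = 0 := by
    have h0 := h v hv
    rw [hw, hu'0, hv'0] at h0
    simp only [sub_self, smul_zero, add_zero] at h0
    rw [inner_sub_right] at h0
    have huv2 : (inner ℂ v u : ℂ) = 0 := by
      rw [← inner_conj_symm, huv, map_zero]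
    rw [huv2, zero_sub] at h0
    have h6 := (Complex.nonneg_iff.mp h0).1
    have hnn : (inner ℂ v v : ℂ) = ((‖v‖ : ℂ))^2 := by
      rw [inner_self_eq_norm_sq_to_K]; norm_cast
    have he : (-(inner ℂ v v : ℂ)).re = -(‖v‖^2) := by
      rw [hnn]; simp [← Complex.ofReal_pow]
    rw [he] at h6
    have : ‖v‖ = 0 := by nlinarith [norm_nonneg v]
    exact norm_eq_zero.mp this
  rw [hw, hu'0, hv'0, hv0]
  simpa using hu

private lemma aux_key
    {M : Type*} [MeasurableSpace M] (μ : Measure M) [SigmaFinite μ]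
    {X : Type*} [NormedAddCommGroup X] [InnerProductSpace ℂ X] [CompleteSpace X]
    (C : Set X)
    (hpos : ∀ u ∈ C, ∀ v ∈ C, (0 : ℂ) ≤ (inner ℂ u v : ℂ))
    (A : Lp X 2 μ →L[ℂ] Lp X 2 μ) (K : M → M → (X →L[ℂ] X))
    (hker : ∀ F : Lp X 2 μ, ∀ᵐ q ∂μ,
      Integrable (fun q' => K q q' (F q')) μ ∧ A F q = ∫ q', K q q' (F q') ∂μ)
    (hint : ∀ f g : Lp ℂ 2 μ, (∀ᵐ x ∂μ, (0 : ℂ) ≤ f x) → (∀ᵐ x ∂μ, (0 : ℂ) ≤ g x) →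
      ∀ φ ψ : X, Integrable
        (fun p : M × M => f p.1 * g p.2 * (inner ℂ φ (K p.1 p.2 ψ) : ℂ)) (μ.prod μ))
    (hA : ∀ F ∈ closure (conicalCombinations
        {G : Lp X 2 μ | ∃ φ ∈ C, ∃ f : Lp ℂ 2 μ,
          (∀ᵐ x ∂μ, (0 : ℂ) ≤ f x) ∧ (∀ᵐ x ∂μ, G x = f x • φ)}),
      A F ∈ closure (conicalCombinations
        {G : Lp X 2 μ | ∃ φ ∈ C, ∃ f : Lp ℂ 2 μ,
          (∀ᵐ x ∂μ, (0 : ℂ) ≤ f x) ∧ (∀ᵐ x ∂μ, G x = f x • φ)})) :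
    ∀ φ ∈ C, ∀ ψ ∈ C, ∀ f g : Lp ℂ 2 μ, (∀ᵐ x ∂μ, (0:ℂ) ≤ f x) →
      (∀ᵐ x ∂μ, (0:ℂ) ≤ g x) →
      0 ≤ ∫ p, f p.1 * g p.2 * (inner ℂ φ (K p.1 p.2 ψ) : ℂ) ∂(μ.prod μ) := by
  intro φ hφ ψ hψ f g hf hg
  set S : Set (Lp X 2 μ) := {G : Lp X 2 μ | ∃ φ ∈ C, ∃ f : Lp ℂ 2 μ,
      (∀ᵐ x ∂μ, (0 : ℂ) ≤ f x) ∧ (∀ᵐ x ∂μ, G x = f x • φ)} with hSdef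
  set F : Lp X 2 μ := (ContinuousLinearMap.toSpanSingleton ℂ φ).compLp f with hFdef
  set G : Lp X 2 μ := (ContinuousLinearMap.toSpanSingleton ℂ ψ).compLp g with hGdef
  have hFcoe : (F : M → X) =ᵐ[μ] fun x => f x • φ := by
    filter_upwards [(ContinuousLinearMap.toSpanSingleton ℂ φ).coeFn_compLp f] with x hx
    simpa [ContinuousLinearMap.toSpanSingleton_apply] using hx
  have hGcoe : (G : M → X) =ᵐ[μ] fun x => g x • ψ := by
    filter_upwards [(ContinuousLinearMap.toSpanSingleton ℂ ψ).coeFn_compLp g] with x hx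
    simpa [ContinuousLinearMap.toSpanSingleton_apply] using hx
  have hGS : G ∈ S := ⟨ψ, hψ, g, hg, hGcoe⟩
  have hGQ : G ∈ closure (conicalCombinations S) := by
    apply subset_closure
    exact ⟨1, fun _ => (1:ℝ), fun _ => G, fun _ => zero_le_one, fun _ => hGS, by simp⟩
  have hinner : ∀ H ∈ closure (conicalCombinations S), (0:ℂ) ≤ (inner ℂ F H : ℂ) := by
    intro H hH
    have hclosed : IsClosed {H : Lp X 2 μ | (0:ℂ) ≤ (inner ℂ F H : ℂ)} :=
      isClosed_nonneg_complex.preimage (continuous_const.inner continuous_id)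
    refine hclosed.closure_subset_iff.mpr ?_ hH
    rintro H' ⟨k, a, x, ha, hx, rfl⟩
    have hsum : (inner ℂ F (∑ i, a i • x i) : ℂ) = ∑ i, (a i : ℂ) * (inner ℂ F (x i) : ℂ) := by
      rw [inner_sum]
      refine Finset.sum_congr rfl fun i _ => ?_
      rw [show a i • x i = ((a i : ℂ)) • x i by
        rw [← smul_one_smul ℂ (a i) (x i)]; norm_num, inner_smul_right]
    rw [Set.mem_setOf_eq, hsum]
    apply Finset.sum_nonneg
    intro i _
    obtain ⟨ψ', hψ', g', hg', hx'⟩ := hx i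
    have hxi : (0:ℂ) ≤ (inner ℂ F (x i) : ℂ) := by
      rw [L2.inner_def]
      apply integral_nonneg_complex (L2.integrable_inner F (x i))
      filter_upwards [hFcoe, hx', hf, hg'] with t h1 h2 h3 h4
      rw [h1, h2, inner_smul_left, inner_smul_right]
      have hconj : (starRingEnd ℂ) (f t) = f t :=
        Complex.conj_eq_iff_im.mpr (Complex.nonneg_iff.mp h3).2.symm
      rw [hconj]
      exact mul_nonneg h3 (mul_nonneg h4 (hpos φ hφ ψ' hψ'))
    have hai : (0:ℂ) ≤ ((a i : ℝ) : ℂ) := by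
      rw [Complex.zero_le_real]; exact ha i
    exact mul_nonneg hai hxi
  have hAGpos : (0:ℂ) ≤ (inner ℂ F (A G) : ℂ) := hinner _ (hA G hGQ)
  have hint' := hint f g hf hg φ ψ
  have e1 : (inner ℂ F (A G) : ℂ) = ∫ q, (inner ℂ (F q) ((A G) q) : ℂ) ∂μ := L2.inner_def F (A G)
  have e2 : ∫ q, (inner ℂ (F q) ((A G) q) : ℂ) ∂μ
      = ∫ q, f q * ∫ q', g q' * (inner ℂ φ (K q q' ψ) : ℂ) ∂μ ∂μ := by
    apply integral_congr_ae
    filter_upwards [hFcoe, hker G, hf] with q h1 h2 h3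
    rw [h1, h2.2, inner_smul_left]
    have hconj : (starRingEnd ℂ) (f q) = f q :=
      Complex.conj_eq_iff_im.mpr (Complex.nonneg_iff.mp h3).2.symm
    rw [hconj]
    congr 1
    rw [← integral_inner h2.1 φ]
    apply integral_congr_ae
    filter_upwards [hGcoe] with q' h4
    rw [h4]
    simp [inner_smul_right]
  have hintu : Integrable (Function.uncurry fun q q' =>
      f q * (g q' * (inner ℂ φ (K q q' ψ) : ℂ))) (μ.prod μ) :=
    hint'.congr (Filter.Eventually.of_forall fun p => (mul_assoc _ _ _))
  have e3 : ∫ q, f q * ∫ q', g q' * (inner ℂ φ (K q q' ψ) : ℂ) ∂μ ∂μ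
      = ∫ p, f p.1 * g p.2 * (inner ℂ φ (K p.1 p.2 ψ) : ℂ) ∂(μ.prod μ) := by
    rw [show (fun q => (f : M → ℂ) q * ∫ q', (g : M → ℂ) q' * (inner ℂ φ (K q q' ψ) : ℂ) ∂μ)
        = fun q => ∫ q', (f : M → ℂ) q * ((g : M → ℂ) q' * (inner ℂ φ (K q q' ψ) : ℂ)) ∂μ from
      funext fun q => (integral_const_mul _ _).symm]
    rw [integral_integral hintu]
    exact integral_congr_ae (Filter.Eventually.of_forall fun p => (mul_assoc _ _ _).symm)
  rw [← e3, ← e2, ← e1]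
  exact hAGpos

private lemma aux_pointwise
    {M : Type*} [MeasurableSpace M] (μ : Measure M) [SigmaFinite μ]
    [TopologicalSpace.SeparableSpace (Lp ℂ 2 μ)]
    (h : M × M → ℂ) (hmeas : Measurable h)
    (hint : ∀ f g : Lp ℂ 2 μ, (∀ᵐ x ∂μ, (0 : ℂ) ≤ f x) → (∀ᵐ x ∂μ, (0 : ℂ) ≤ g x) →
      Integrable (fun p : M × M => f p.1 * g p.2 * h p) (μ.prod μ))
    (key : ∀ f g : Lp ℂ 2 μ, (∀ᵐ x ∂μ, (0 : ℂ) ≤ f x) → (∀ᵐ x ∂μ, (0 : ℂ) ≤ g x) →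
      0 ≤ ∫ p, f p.1 * g p.2 * h p ∂(μ.prod μ)) :
    ∀ᵐ p ∂(μ.prod μ), 0 ≤ h p := by
  classical
  have hbadmeas : MeasurableSet {p : M × M | ¬ (0:ℂ) ≤ h p} :=
    (hmeas isClosed_nonneg_complex.measurableSet).compl
  -- the main claim, localized to squares of spanning sets
  have claim : ∀ n : ℕ, (μ.prod μ)
      ((spanningSets μ n ×ˢ spanningSets μ n) ∩ {p : M × M | ¬ (0:ℂ) ≤ h p}) = 0 := by
    intro n
    set E : Set M := spanningSets μ n with hEdef
    have hE : MeasurableSet E := measurableSet_spanningSets μ n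
    have hEfin : μ E ≠ ∞ := (measure_spanningSets_lt_top μ n).ne
    set fE : Lp ℂ 2 μ := indicatorConstLp 2 hE hEfin (1:ℂ) with hfEdef
    have hfEcoe : ⇑fE =ᵐ[μ] E.indicator (fun _ => (1:ℂ)) := indicatorConstLp_coeFn
    have hfEpos : ∀ᵐ x ∂μ, (0:ℂ) ≤ fE x := by
      filter_upwards [hfEcoe] with x hx
      rw [hx, Set.indicator_apply]
      split <;> simp
    -- Claim A : testing against arbitrary nonneg g in the second variable
    have claimA : ∀ g : Lp ℂ 2 μ, (∀ᵐ x ∂μ, (0:ℂ) ≤ g x) →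
        ∀ᵐ q ∂μ, q ∈ E → 0 ≤ ∫ q', g q' * h (q, q') ∂μ := by
      intro g hg
      have hF0 : Integrable (fun p : M × M => fE p.1 * g p.2 * h p) (μ.prod μ) :=
        hint fE g hfEpos hg
      set Φ : M → ℂ := fun q => ∫ q', fE q * g q' * h (q, q') ∂μ with hΦdef
      have hΦint : Integrable Φ μ := hF0.integral_prod_left
      have hΦs
          : ∀ s : Set M, MeasurableSet s → μ s < ∞ → 0 ≤ ∫ q in s, Φ q ∂μ := by
        intro s hs hμs
        have hsEfin : μ (s ∩ E) ≠ ∞ :=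
          ((measure_mono Set.inter_subset_left).trans_lt hμs).ne
        set f' : Lp ℂ 2 μ := indicatorConstLp 2 (hs.inter hE) hsEfin (1:ℂ) with hf'def
        have hf'coe : ⇑f' =ᵐ[μ] (s ∩ E).indicator (fun _ => (1:ℂ)) := indicatorConstLp_coeFn
        have hf'pos : ∀ᵐ x ∂μ, (0:ℂ) ≤ f' x := by
          filter_upwards [hf'coe] with x hx
          rw [hx, Set.indicator_apply]
          split <;> simp
        have h1 : 0 ≤ ∫ p, f' p.1 * g p.2 * h p ∂(μ.prod μ) := key f' g hf'pos hg
        -- the pointwise identity 1_{s∩E} = 1_s · 1_E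
        have hind : ∀ x : M, (s ∩ E).indicator (fun _ => (1:ℂ)) x
            = s.indicator (fun _ => (1:ℂ)) x * E.indicator (fun _ => (1:ℂ)) x := by
          intro x
          by_cases hxs : x ∈ s <;> by_cases hxE : x ∈ E <;>
            simp [Set.indicator_apply, hxs, hxE]
        -- rewrite the product integral
        have h2 : ∫ p, f' p.1 * g p.2 * h p ∂(μ.prod μ)
            = ∫ p, s.indicator (fun _ => (1:ℂ)) p.1 * (fE p.1 * g p.2 * h p) ∂(μ.prod μ) := by
          apply integral_congr_ae
          have e1 : (fun p : M × M => f' p.1) =ᵐ[μ.prod μ]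
              fun p => (s ∩ E).indicator (fun _ => (1:ℂ)) p.1 :=
            Measure.quasiMeasurePreserving_fst.ae_eq hf'coe
          have e2 : (fun p : M × M => fE p.1) =ᵐ[μ.prod μ]
              fun p => E.indicator (fun _ => (1:ℂ)) p.1 :=
            Measure.quasiMeasurePreserving_fst.ae_eq hfEcoe
          filter_upwards [e1, e2] with p hp1 hp2
          rw [hp1, hp2, hind]
          ring
        have hintind : Integrable
            (fun p : M × M => s.indicator (fun _ => (1:ℂ)) p.1 * (fE p.1 * g p.2 * h p))
            (μ.prod μ) := by
          have : (fun p : M × M => s.indicator (fun _ => (1:ℂ)) p.1 * (fE p.1 * g p.2 * h p))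
              = (s ×ˢ (Set.univ : Set M)).indicator (fun p => fE p.1 * g p.2 * h p) := by
            funext p
            by_cases hps : p.1 ∈ s <;>
              simp [Set.indicator_apply, hps, Set.mem_prod]
          rw [this]
          exact hF0.indicator (hs.prod MeasurableSet.univ)
        have h3 : ∫ p, s.indicator (fun _ => (1:ℂ)) p.1 * (fE p.1 * g p.2 * h p) ∂(μ.prod μ)
            = ∫ q, s.indicator (fun _ => (1:ℂ)) q * Φ q ∂μ := by
          rw [integral_prod _ hintind]
          apply integral_congr_ae
          apply Filter.Eventually.of_forall
          intro q
          exact integral_const_mul (s.indicator (fun _ => (1:ℂ)) q)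
            (fun q' => (fE : M → ℂ) q * (g : M → ℂ) q' * h (q, q'))
        have h4 : ∫ q, s.indicator (fun _ => (1:ℂ)) q * Φ q ∂μ = ∫ q in s, Φ q ∂μ := by
          rw [← integral_indicator hs]
          apply integral_congr_ae
          apply Filter.Eventually.of_forall
          intro q
          by_cases hqs : q ∈ s <;> simp [Set.indicator_apply, hqs]
        rw [← h4, ← h3, ← h2]
        exact h1
      have hΦae : ∀ᵐ q ∂μ, 0 ≤ Φ q :=
        ae_nonneg_of_forall_setIntegral_nonneg_complex hΦint hΦs
      filter_upwards [hΦae, hfEcoe] with q hq hqE'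
      intro hqE
      have : Φ q = fE q * ∫ q', g q' * h (q, q') ∂μ := by
        rw [hΦdef]
        simp only
        rw [show (fun q' => fE q * g q' * h (q, q')) = fun q' => fE q * (g q' * h (q, q'))
          from funext fun q' => mul_assoc _ _ _]
        exact integral_const_mul _ _
      rw [this, hqE'] at hq
      simpa [Set.indicator_of_mem hqE] using hq
    -- slice integrability
    have hslice : ∀ᵐ q ∂μ, q ∈ E →
        Integrable (fun q' => E.indicator (fun _ => (1:ℂ)) q' * h (q, q')) μ := by
      have hEE : Integrable (fun p : M × M => fE p.1 * fE p.2 * h p) (μ.prod μ) :=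
        hint fE fE hfEpos hfEpos
      filter_upwards [hEE.prod_right_ae, hfEcoe] with q hq hqE'
      intro hqE
      have h1 : Integrable (fun q' => fE q * fE q' * h (q, q')) μ := hq
      rw [hqE', Set.indicator_of_mem hqE] at h1
      simp only [one_mul] at h1
      apply h1.congr
      filter_upwards [hfEcoe] with q' hq'
      rw [hq']
    -- countable dense subset of the test family T
    set T : Set (Lp ℂ 2 μ) :=
      {g | ∀ᵐ x ∂μ, (0:ℂ) ≤ g x ∧ ‖g x‖ ≤ 1 ∧ (x ∉ E → g x = 0)} with hTdef
    have hTsep : TopologicalSpace.IsSeparable T :=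
      (TopologicalSpace.IsSeparable.of_separableSpace (Set.univ : Set (Lp ℂ 2 μ))).mono
        (Set.subset_univ T)
    obtain ⟨D, hDT, hDcount, hDdense⟩ := hTsep.exists_countable_dense_subset
    have hDae : ∀ᵐ q ∂μ, ∀ g ∈ D, q ∈ E → 0 ≤ ∫ q', g q' * h (q, q') ∂μ := by
      rw [ae_ball_iff hDcount]
      intro g hg
      refine claimA g ?_
      filter_upwards [hDT hg] with x hx using hx.1
    -- main pointwise claim
    have main : ∀ᵐ q ∂μ, q ∈ E → ∀ᵐ q' ∂μ, q' ∈ E → 0 ≤ h (q, q') := by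
      filter_upwards [hDae, hslice] with q hq hqint
      intro hqE
      have hsliceq := hqint hqE
      have htest : ∀ s : Set M, MeasurableSet s → μ s < ∞ →
          0 ≤ ∫ q' in s, E.indicator (fun _ => (1:ℂ)) q' * h (q, q') ∂μ := by
        intro s hs _
        have hsEfin : μ (s ∩ E) ≠ ∞ :=
          ((measure_mono Set.inter_subset_right).trans_lt
            (measure_spanningSets_lt_top μ n)).ne
        set g0 : Lp ℂ 2 μ := indicatorConstLp 2 (hs.inter hE) hsEfin (1:ℂ) with hg0def
        have hg0coe : ⇑g0 =ᵐ[μ] (s ∩ E).indicator (fun _ => (1:ℂ)) := indicatorConstLp_coeFn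
        have hg0T : g0 ∈ T := by
          filter_upwards [hg0coe] with x hx
          rw [hx]
          refine ⟨?_, ?_, ?_⟩
          · rw [Set.indicator_apply]; split <;> simp
          · rw [Set.indicator_apply]; split <;> simp
          · intro hxE
            apply Set.indicator_of_notMem
            exact fun hmem => hxE hmem.2
        obtain ⟨u, hu_mem, hu_tendsto⟩ := mem_closure_iff_seq_limit.mp (hDdense hg0T)
        obtain ⟨ns, -, hae'⟩ :=
          (tendstoInMeasure_of_tendsto_Lp hu_tendsto).exists_seq_tendsto_ae
        -- dominated convergence
        set bound : M → ℝ := fun q' => ‖E.indicator (fun _ => (1:ℂ)) q' * h (q, q')‖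
          with hbounddef
        have hboundint : Integrable bound μ := hsliceq.norm
        have hmeasslice : Measurable fun q' => h (q, q') :=
          hmeas.comp measurable_prodMk_left
        have hFmeas : ∀ k : ℕ, AEStronglyMeasurable (fun q' => u (ns k) q' * h (q, q')) μ :=
          fun k => (Lp.aestronglyMeasurable (u (ns k))).mul hmeasslice.aestronglyMeasurable
        have hFbound : ∀ k : ℕ, ∀ᵐ q' ∂μ, ‖u (ns k) q' * h (q, q')‖ ≤ bound q' := by
          intro k
          filter_upwards [hDT (hu_mem (ns k))] with q' hq'
          obtain ⟨-, hnorm, hzero⟩ := hq'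
          rw [hbounddef]
          simp only [norm_mul]
          by_cases hq'E : q' ∈ E
          · rw [Set.indicator_of_mem hq'E]
            simp only [norm_one, one_mul]
            exact mul_le_of_le_one_left (norm_nonneg _) hnorm
          · rw [hzero hq'E]
            simp only [zero_mul, norm_zero]
            positivity
        have hFtend : ∀ᵐ q' ∂μ, Filter.Tendsto (fun k => u (ns k) q' * h (q, q'))
            Filter.atTop (nhds (g0 q' * h (q, q'))) := by
          filter_upwards [hae'] with q' hq'
          exact hq'.mul tendsto_const_nhds
        have hlim := tendsto_integral_of_dominated_convergence bound hFmeas hboundint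
          hFbound hFtend
        have hmem0 : (0:ℂ) ≤ ∫ q', g0 q' * h (q, q') ∂μ := by
          apply isClosed_nonneg_complex.mem_of_tendsto hlim
          filter_upwards with k
          exact hq (u (ns k)) (hu_mem (ns k)) hqE
        have : ∫ q', g0 q' * h (q, q') ∂μ
            = ∫ q' in s, E.indicator (fun _ => (1:ℂ)) q' * h (q, q') ∂μ := by
          rw [← integral_indicator hs]
          apply integral_congr_ae
          filter_upwards [hg0coe] with q' hq'
          rw [hq']
          by_cases hq's : q' ∈ s <;> by_cases hq'E : q' ∈ E <;>
            simp [Set.indicator_apply, hq's, hq'E]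
        rwa [this] at hmem0
      have := ae_nonneg_of_forall_setIntegral_nonneg_complex hsliceq htest
      filter_upwards [this] with q' hq'
      intro hq'E
      rwa [Set.indicator_of_mem hq'E, one_mul] at hq'
    -- convert to a product-measure statement
    rw [Measure.measure_prod_null (((hE.prod hE)).inter hbadmeas)]
    filter_upwards [main] with q hq
    by_cases hqE : q ∈ E
    · have hae2 := hq hqE
      have hsub : Prod.mk q ⁻¹' ((E ×ˢ E) ∩ {p : M × M | ¬ (0:ℂ) ≤ h p})
          ⊆ {q' | ¬ (q' ∈ E → 0 ≤ h (q, q'))} := by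
        intro q' hq'
        obtain ⟨⟨-, hq'E⟩, hbad⟩ := hq'
        intro himp
        exact hbad (himp hq'E)
      have : μ {q' | ¬ (q' ∈ E → 0 ≤ h (q, q'))} = 0 := by
        rw [← ae_iff] at *
        exact hae2
      exact measure_mono_null hsub this
    · have : Prod.mk q ⁻¹' ((E ×ˢ E) ∩ {p : M × M | ¬ (0:ℂ) ≤ h p}) = ∅ := by
        ext q'
        simp [Set.mem_preimage, Set.mem_prod, hqE]
      simp [this]
  -- assemble over the spanning sets
  rw [ae_iff]
  have hsub : {p : M × M | ¬ (0:ℂ) ≤ h p}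
      ⊆ ⋃ n, (spanningSets μ n ×ˢ spanningSets μ n) ∩ {p : M × M | ¬ (0:ℂ) ≤ h p} := by
    intro p hp
    have h1 : p.1 ∈ ⋃ n, spanningSets μ n := by rw [iUnion_spanningSets]; trivial
    have h2 : p.2 ∈ ⋃ n, spanningSets μ n := by rw [iUnion_spanningSets]; trivial
    obtain ⟨n1, hn1⟩ := Set.mem_iUnion.mp h1
    obtain ⟨n2, hn2⟩ := Set.mem_iUnion.mp h2
    refine Set.mem_iUnion.mpr ⟨max n1 n2, ⟨?_, ?_⟩, hp⟩
    · exact monotone_spanningSets μ (le_max_left n1 n2) hn1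
    · exact monotone_spanningSets μ (le_max_right n1 n2) hn2
  exact measure_mono_null hsub (measure_iUnion_null_iff.mpr claim)

theorem kernel_posPreserving_ae
    {M : Type*} [MeasurableSpace M] (μ : Measure M) [SigmaFinite μ]
    [TopologicalSpace.SeparableSpace (Lp ℂ 2 μ)]
    {X : Type*} [NormedAddCommGroup X] [InnerProductSpace ℂ X] [CompleteSpace X]
    [TopologicalSpace.SeparableSpace X]
    (C : Set X) (hC : IsHilbertCone C)
    (A : Lp X 2 μ →L[ℂ] Lp X 2 μ) (K : M → M → (X →L[ℂ] X))
    (hmeas : ∀ φ ψ : X, Measurable (fun p : M × M => (inner ℂ φ (K p.1 p.2 ψ) : ℂ)))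
    (hker : ∀ F : Lp X 2 μ, ∀ᵐ q ∂μ,
      Integrable (fun q' => K q q' (F q')) μ ∧ A F q = ∫ q', K q q' (F q') ∂μ)
    (hint : ∀ f g : Lp ℂ 2 μ, (∀ᵐ x ∂μ, (0 : ℂ) ≤ f x) → (∀ᵐ x ∂μ, (0 : ℂ) ≤ g x) →
      ∀ φ ψ : X, Integrable
        (fun p : M × M => f p.1 * g p.2 * (inner ℂ φ (K p.1 p.2 ψ) : ℂ)) (μ.prod μ))
    (hA : ∀ F ∈ closure (conicalCombinations
        {G : Lp X 2 μ | ∃ φ ∈ C, ∃ f : Lp ℂ 2 μ,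
          (∀ᵐ x ∂μ, (0 : ℂ) ≤ f x) ∧ (∀ᵐ x ∂μ, G x = f x • φ)}),
      A F ∈ closure (conicalCombinations
        {G : Lp X 2 μ | ∃ φ ∈ C, ∃ f : Lp ℂ 2 μ,
          (∀ᵐ x ∂μ, (0 : ℂ) ≤ f x) ∧ (∀ᵐ x ∂μ, G x = f x • φ)})) :
    ∀ᵐ p ∂(μ.prod μ), ∀ u ∈ C, K p.1 p.2 u ∈ C := by
  classical
  -- Step A: positivity of the bilinear form
  have key : ∀ φ ∈ C, ∀ ψ ∈ C, ∀ f g : Lp ℂ 2 μ, (∀ᵐ x ∂μ, (0:ℂ) ≤ f x) →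
      (∀ᵐ x ∂μ, (0:ℂ) ≤ g x) →
      0 ≤ ∫ p, f p.1 * g p.2 * (inner ℂ φ (K p.1 p.2 ψ) : ℂ) ∂(μ.prod μ) :=
    aux_key μ C hC.2.2.2.1 A K hker hint hA
  -- Step B: pointwise a.e. positivity of the kernel matrix elements
  have pointwise : ∀ φ ∈ C, ∀ ψ ∈ C,
      ∀ᵐ p ∂(μ.prod μ), (0:ℂ) ≤ (inner ℂ φ (K p.1 p.2 ψ) : ℂ) := by
    intro φ hφ ψ hψ
    exact aux_pointwise μ (fun p : M × M => (inner ℂ φ (K p.1 p.2 ψ) : ℂ)) (hmeas φ ψ)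
      (fun f g hf hg => hint f g hf hg φ ψ)
      (fun f g hf hg => key φ hφ ψ hψ f g hf hg)
  -- Step C: conclusion via a countable dense subset of `C`
  have hCsep : TopologicalSpace.IsSeparable C :=
    (TopologicalSpace.IsSeparable.of_separableSpace (Set.univ : Set X)).mono
      (Set.subset_univ C)
  obtain ⟨Dc, hDcC, hDccount, hDcdense⟩ := hCsep.exists_countable_dense_subset
  have hae : ∀ᵐ p ∂(μ.prod μ), ∀ φ ∈ Dc, ∀ ψ ∈ Dc, (0:ℂ) ≤ (inner ℂ φ (K p.1 p.2 ψ) : ℂ) := by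
    rw [ae_ball_iff hDccount]
    intro φ hφ
    rw [ae_ball_iff hDccount]
    intro ψ hψ
    exact pointwise φ (hDcC hφ) ψ (hDcC hψ)
  filter_upwards [hae] with p hp u hu
  have step1 : ∀ ψ ∈ Dc, ∀ v ∈ C, (0:ℂ) ≤ (inner ℂ v (K p.1 p.2 ψ) : ℂ) := by
    intro ψ hψ v hv
    have hcont : Continuous fun v : X => (inner ℂ v (K p.1 p.2 ψ) : ℂ) :=
      continuous_id.inner continuous_const
    have hclosed : IsClosed {v : X | (0:ℂ) ≤ (inner ℂ v (K p.1 p.2 ψ) : ℂ)} :=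
      isClosed_nonneg_complex.preimage hcont
    have hsub : Dc ⊆ {v : X | (0:ℂ) ≤ (inner ℂ v (K p.1 p.2 ψ) : ℂ)} :=
      fun v hv' => hp v hv' ψ hψ
    exact (hclosed.closure_subset_iff.mpr hsub) (hDcdense hv)
  have step2 : ∀ v ∈ C, (0:ℂ) ≤ (inner ℂ v (K p.1 p.2 u) : ℂ) := by
    intro v hv
    have hcont : Continuous fun w : X => (inner ℂ v (K p.1 p.2 w) : ℂ) :=
      continuous_const.inner (K p.1 p.2).continuous
    have hclosed : IsClosed {w : X | (0:ℂ) ≤ (inner ℂ v (K p.1 p.2 w) : ℂ)} :=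
      isClosed_nonneg_complex.preimage hcont
    have hsub : Dc ⊆ {w : X | (0:ℂ) ≤ (inner ℂ v (K p.1 p.2 w) : ℂ)} :=
      fun w hw => step1 w hw v hv
    exact (hclosed.closure_subset_iff.mpr hsub) (hDcdense hu)
  exact hC.mem_of_forall_inner_nonneg step2
end
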